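/- arXiv:1808.00538 — 7 statements merged into one kernel-verified Lean document; each statement's English description precedes it below -/
import Mathlib

section
/- There exists a constant $y_0\in(0,1)$, not depending on $n$ nor on the probability vector $(p_k)_{k\ge 1}$, such that for every sequence $(p_k)_{k\ge1}$ of strictly positive reals with $\sum_{k\ge1}p_k=1$ and every integer $n\ge 2$, $\mathbb{E}\,\sup_{s\in[0,1]}\big|\bar K_n(s)-\bar\rho(n^s)\big| \le 4\big(\bar\rho(n)-\bar\rho(y_0\, n(\log n)^{-2})\big)+2\,\bar\rho(n)(\log n)^{-1}+\int_1^\infty x^{-2}\big(\bar\rho(nx)-\bar\rho(n)\big)\,\mathrm{d}x+2\sup_{s\in[0,1]}\big(\bar\rho(e\,n^s)-\bar\rho(e^{-1}n^s)\big)$. -/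
open MeasureTheory ProbabilityTheory Set

noncomputable section

/-- `rhoBar p t = #{k : p k ≥ 1/t}`, the number of boxes with probability at least `1/t`. -/
def rhoBar (p : ℕ → ℝ) (t : ℝ) : ℕ := Nat.card {k : ℕ | p k ≥ 1 / t}

/-- `Zbar X n k ω`: the number of the first `n` balls falling into box `k`. -/
def Zbar {Ω : Type*} (X : ℕ → Ω → ℕ) (n : ℕ) (k : ℕ) (ω : Ω) : ℕ :=
  ((Finset.range n).filter (fun i => X i ω = k)).card

/-- `Kbar X n s ω`: the number of boxes containing at least `n^(1-s)` of the first `n` balls. -/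
def Kbar {Ω : Type*} (X : ℕ → Ω → ℕ) (n : ℕ) (s : ℝ) (ω : Ω) : ℕ :=
  Nat.card {k : ℕ | ((Zbar X n k ω : ℝ)) ≥ (n : ℝ) ^ ((1 : ℝ) - s)}

open scoped ENNReal NNReal

lemma aux_finite {p : ℕ → ℝ} (hs : Summable p) {c : ℝ} (hc : 0 < c) :
    {k | c ≤ p k}.Finite := by
  have h := hs.tendsto_atTop_zero
  rw [Metric.tendsto_atTop] at h
  obtain ⟨N, hN⟩ := h c hc
  apply Set.Finite.subset (Set.finite_Iio N)
  intro k hk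
  by_contra hlt
  simp only [Set.mem_Iio, not_lt] at hlt
  have := hN k hlt
  rw [Real.dist_eq, sub_zero] at this
  exact absurd hk (by simp only [Set.mem_setOf_eq, not_le]; exact lt_of_le_of_lt (le_abs_self _) this)

lemma aux_tsum_indicator {B : Set ℕ} (hB : B.Finite) :
    ∑' k, B.indicator (fun _ => (1 : ℝ≥0∞)) k = B.ncard := by
  rw [tsum_eq_sum (s := hB.toFinset) (fun k hk => by
    rw [Set.indicator_of_notMem (by simpa using hk)])]
  rw [Finset.sum_congr rfl (fun k hk => Set.indicator_of_mem (by simpa using hk) _)]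
  rw [Finset.sum_const, ← Set.ncard_coe_finset hB.toFinset, hB.coe_toFinset]
  simp

lemma aux_ncard_le_tsum (B : Set ℕ) :
    (B.ncard : ℝ≥0∞) ≤ ∑' k, B.indicator (fun _ => (1 : ℝ≥0∞)) k := by
  by_cases hB : B.Finite
  · rw [aux_tsum_indicator hB]
  · rw [Set.Infinite.ncard hB]; simp

lemma aux_lintegral_rpow {a : ℝ} (ha : 0 < a) :
    ∫⁻ x in Ioi a, ENNReal.ofReal (x ^ (-2 : ℝ)) = ENNReal.ofReal a⁻¹ := by
  have hint : IntegrableOn (fun x : ℝ => x ^ (-2 : ℝ)) (Ioi a) :=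
    integrableOn_Ioi_rpow_of_lt (by norm_num) ha
  rw [← MeasureTheory.ofReal_integral_eq_lintegral_ofReal hint]
  · rw [integral_Ioi_rpow_of_lt (by norm_num) ha]
    norm_num
    rw [Real.rpow_neg_one]
  · filter_upwards [ae_restrict_mem measurableSet_Ioi] with x hx
    exact Real.rpow_nonneg (le_of_lt (lt_trans ha hx)) _


lemma rhoBar_eq (p : ℕ → ℝ) (t : ℝ) : rhoBar p t = {k | 1 / t ≤ p k}.ncard := by
  rw [rhoBar, Nat.card_coe_set_eq]

lemma Zbar_cast_eq_sum {Ω : Type*} (X : ℕ → Ω → ℕ) (n k : ℕ) (ω : Ω) :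
    ((Zbar X n k ω : ℝ)) = ∑ i ∈ Finset.range n, (if X i ω = k then (1 : ℝ) else 0) := by
  rw [Zbar, Finset.card_filter]
  push_cast
  rfl

lemma Zbar_le {Ω : Type*} (X : ℕ → Ω → ℕ) (n k : ℕ) (ω : Ω) : Zbar X n k ω ≤ n := by
  rw [Zbar]
  exact le_trans (Finset.card_filter_le _ _) (by simp)

lemma Zbar_meas {Ω : Type*} [MeasurableSpace Ω] {X : ℕ → Ω → ℕ} (hX : ∀ i, Measurable (X i))
    (n k : ℕ) : Measurable (fun ω => (Zbar X n k ω : ℝ)) := by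
  have : (fun ω => (Zbar X n k ω : ℝ))
      = fun ω => ∑ i ∈ Finset.range n, (if X i ω = k then (1 : ℝ) else 0) := by
    funext ω; exact Zbar_cast_eq_sum X n k ω
  rw [this]
  refine Finset.measurable_sum _ (fun i _ => Measurable.ite ?_ measurable_const measurable_const)
  exact hX i (measurableSet_singleton k)

section Chernoff

variable {Ω : Type} [MeasurableSpace Ω] {P : Measure Ω} [IsProbabilityMeasure P]
  {X : ℕ → Ω → ℕ} (hX : ∀ i, Measurable (X i))
  (hind : iIndepFun X P)
  {p : ℝ} (hp0 : 0 ≤ p) (hp1 : p ≤ 1) {k : ℕ}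
  (hlaw : ∀ i, P {ω | X i ω = k} = ENNReal.ofReal p)

include hX hind hp0 hp1 hlaw

lemma mgf_Zbar (n : ℕ) (t : ℝ) :
    mgf (fun ω => (Zbar X n k ω : ℝ)) P t ≤ Real.exp (n * p * (Real.exp t - 1)) := by
  classical
  set Y : ℕ → Ω → ℝ := fun i ω => if X i ω = k then (1 : ℝ) else 0 with hY
  have hYm : ∀ i, Measurable (Y i) := fun i =>
    Measurable.ite (hX i (measurableSet_singleton k)) measurable_const measurable_const
  have hYind : iIndepFun Y P := by
    have := hind.comp (fun _ j => if j = k then (1 : ℝ) else 0)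
      (fun _ => measurable_from_top)
    exact this
  have hZY : (fun ω => (Zbar X n k ω : ℝ)) = ∑ i ∈ Finset.range n, Y i := by
    funext ω
    rw [Zbar_cast_eq_sum]
    simp [hY]
  rw [hZY, hYind.mgf_sum hYm]
  have hmgf : ∀ i, mgf (Y i) P t = 1 + p * (Real.exp t - 1) := by
    intro i
    have hA : MeasurableSet {ω | X i ω = k} := hX i (measurableSet_singleton k)
    have hrw : (fun ω => Real.exp (t * Y i ω))
        = fun ω => Set.indicator {ω | X i ω = k} (fun _ => Real.exp t - 1) ω + 1 := by
      funext ω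
      by_cases h : X i ω = k <;>
        simp [hY, h, Set.indicator_of_mem, Set.indicator_of_notMem, Real.exp_zero]
    rw [mgf, hrw, integral_add ((integrable_const _).indicator hA) (integrable_const 1)]
    rw [integral_indicator_const _ hA, measureReal_def, hlaw i, integral_const]
    simp [ENNReal.toReal_ofReal hp0, measure_univ]
    ring
  calc ∏ i ∈ Finset.range n, mgf (Y i) P t
      = (1 + p * (Real.exp t - 1)) ^ n := by
        rw [Finset.prod_congr rfl (fun i _ => hmgf i), Finset.prod_const, Finset.card_range]
    _ ≤ Real.exp (p * (Real.exp t - 1)) ^ n := by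
        apply pow_le_pow_left₀ _ _ n
        · nlinarith [Real.exp_pos t]
        · have := Real.add_one_le_exp (p * (Real.exp t - 1))
          linarith
    _ = Real.exp (n * p * (Real.exp t - 1)) := by
        rw [← Real.exp_nat_mul]; ring_nf

omit hind hp0 hp1 hlaw in
lemma integrable_exp_Zbar (n : ℕ) (t : ℝ) :
    Integrable (fun ω => Real.exp (t * (Zbar X n k ω : ℝ))) P := by
  refine Integrable.mono' (integrable_const (Real.exp (|t| * n)))
    (((Zbar_meas hX n k).const_mul t).exp.aestronglyMeasurable) (ae_of_all _ fun ω => ?_)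
  rw [Real.norm_eq_abs, abs_of_pos (Real.exp_pos _), Real.exp_le_exp]
  have h1 : (Zbar X n k ω : ℝ) ≤ n := by exact_mod_cast Zbar_le X n k ω
  have h2 : (0:ℝ) ≤ (Zbar X n k ω : ℝ) := by positivity
  calc t * (Zbar X n k ω : ℝ) ≤ |t| * (Zbar X n k ω : ℝ) := by
        apply mul_le_mul_of_nonneg_right (le_abs_self t) h2
    _ ≤ |t| * n := by apply mul_le_mul_of_nonneg_left h1 (abs_nonneg t)

lemma chernoff_upper (n : ℕ) :
    P {ω | Real.exp 1 * (n * p) ≤ (Zbar X n k ω : ℝ)}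
      ≤ ENNReal.ofReal (Real.exp (-(n * p))) := by
  have h := measure_ge_le_exp_mul_mgf (μ := P) (X := fun ω => (Zbar X n k ω : ℝ))
    (Real.exp 1 * (n * p)) zero_le_one (by simpa using integrable_exp_Zbar hX n 1)
  rw [← ENNReal.ofReal_toReal (measure_ne_top P _)]
  apply ENNReal.ofReal_le_ofReal
  refine h.trans ?_
  calc Real.exp (-1 * (Real.exp 1 * (n * p))) * mgf (fun ω => (Zbar X n k ω : ℝ)) P 1
      ≤ Real.exp (-1 * (Real.exp 1 * (n * p))) * Real.exp (n * p * (Real.exp 1 - 1)) := by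
        apply mul_le_mul_of_nonneg_left (mgf_Zbar hX hind hp0 hp1 hlaw n 1) (Real.exp_pos _).le
    _ = Real.exp (-(n * p)) := by rw [← Real.exp_add]; ring_nf

lemma chernoff_lower (n : ℕ) :
    P {ω | (Zbar X n k ω : ℝ) ≤ n * p / Real.exp 1}
      ≤ ENNReal.ofReal (Real.exp ((2 / Real.exp 1 - 1) * (n * p))) := by
  have h := measure_le_le_exp_mul_mgf (μ := P) (X := fun ω => (Zbar X n k ω : ℝ))
    (n * p / Real.exp 1) (neg_nonpos.mpr zero_le_one)
    (integrable_exp_Zbar hX n (-1))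
  rw [← ENNReal.ofReal_toReal (measure_ne_top P _)]
  apply ENNReal.ofReal_le_ofReal
  refine h.trans ?_
  have he : Real.exp (-1) = (Real.exp 1)⁻¹ := by rw [← Real.exp_neg]
  calc Real.exp (-(-1) * (n * p / Real.exp 1)) * mgf (fun ω => (Zbar X n k ω : ℝ)) P (-1)
      ≤ Real.exp (n * p / Real.exp 1) * Real.exp (n * p * (Real.exp (-1) - 1)) := by
        rw [neg_neg, one_mul]
        apply mul_le_mul_of_nonneg_left (mgf_Zbar hX hind hp0 hp1 hlaw n (-1)) (Real.exp_pos _).le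
    _ = Real.exp ((2 / Real.exp 1 - 1) * (n * p)) := by
        rw [← Real.exp_add]
        congr 1
        rw [he]
        field_simp
        ring

end Chernoff

lemma tail_sum_le {L m : ℝ} (hL : 0 < L) (hm : 4 * L ^ 2 ≤ m) :
    Real.exp (-m) + Real.exp ((2 / Real.exp 1 - 1) * m) ≤ 2 / L := by
  have he : (8:ℝ)/3 < Real.exp 1 := by
    have := Real.exp_one_gt_d9
    linarith
  have hepos : (0:ℝ) < Real.exp 1 := Real.exp_pos 1
  have hc : 2 / Real.exp 1 - 1 ≤ -(1/4) := by
    rw [sub_le_iff_le_add, div_le_iff₀ hepos]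
    nlinarith
  have hm0 : 0 ≤ m := le_trans (by positivity) hm
  have h1 : Real.exp (-m) ≤ Real.exp (-(m/4)) := by
    rw [Real.exp_le_exp]; linarith
  have h2 : Real.exp ((2 / Real.exp 1 - 1) * m) ≤ Real.exp (-(m/4)) := by
    rw [Real.exp_le_exp]
    nlinarith
  have h3 : L ≤ Real.exp (m/4) := by
    have := Real.add_one_le_exp (L^2)
    have h4 : Real.exp (L^2) ≤ Real.exp (m/4) := by
      rw [Real.exp_le_exp]; linarith
    nlinarith
  have h5 : Real.exp (-(m/4)) ≤ 1 / L := by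
    rw [Real.exp_neg]
    rw [inv_le_comm₀ (Real.exp_pos _) (by positivity)]
    rw [one_div, inv_inv]
    exact h3
  calc Real.exp (-m) + Real.exp ((2 / Real.exp 1 - 1) * m)
      ≤ 1/L + 1/L := add_le_add (h1.trans h5) (h2.trans h5)
    _ = 2 / L := by ring

def BadSet (p : ℕ → ℝ) {Ω : Type*} (X : ℕ → Ω → ℕ) (n : ℕ) (ω : Ω) : Set ℕ :=
  {k | (1 ≤ (Zbar X n k ω : ℝ) ∧ Real.exp 1 * ((n : ℝ) * p k) ≤ (Zbar X n k ω : ℝ))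
    ∨ (1 ≤ (n : ℝ) * p k ∧ (Zbar X n k ω : ℝ) ≤ (n : ℝ) * p k / Real.exp 1)}

lemma ones_finite {Ω : Type*} (X : ℕ → Ω → ℕ) (n : ℕ) (ω : Ω) :
    {k : ℕ | 1 ≤ (Zbar X n k ω : ℝ)}.Finite := by
  apply Set.Finite.subset (((Finset.range n).image (fun i => X i ω)).finite_toSet)
  intro k hk
  simp only [Set.mem_setOf_eq] at hk
  have hne : Zbar X n k ω ≠ 0 := by
    intro h; rw [h] at hk; norm_num at hk
  rw [Zbar] at hne
  obtain ⟨i, hi⟩ := Finset.card_ne_zero.mp hne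
  rw [Finset.mem_filter] at hi
  simp only [Finset.coe_image, Set.mem_image, Finset.mem_coe]
  exact ⟨i, hi.1, hi.2⟩

lemma badset_finite {p : ℕ → ℝ} (hsum : Summable p) {Ω : Type*} (X : ℕ → Ω → ℕ) (n : ℕ)
    (hn : 1 ≤ n) (ω : Ω) : (BadSet p X n ω).Finite := by
  apply Set.Finite.subset ((ones_finite X n ω).union
    (aux_finite hsum (c := 1 / (n : ℝ)) (by positivity)))
  rintro k (⟨h1, _⟩ | ⟨h1, _⟩)
  · exact Or.inl h1
  · refine Or.inr ?_
    have hn0 : (0:ℝ) < n := by exact_mod_cast hn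
    show (1:ℝ) / n ≤ p k
    rw [div_le_iff₀ hn0]
    linarith [h1, mul_comm (n:ℝ) (p k)]

lemma counting {p : ℕ → ℝ} (hsum : Summable p) {Ω : Type*} (X : ℕ → Ω → ℕ) (ω : Ω)
    {n : ℕ} (hn : 2 ≤ n) {s : ℝ} (hs : s ∈ Set.Icc (0:ℝ) 1) :
    |((Kbar X n s ω : ℝ)) - (rhoBar p ((n : ℝ) ^ s) : ℝ)|
      ≤ ((rhoBar p (Real.exp 1 * (n : ℝ) ^ s) : ℝ) - (rhoBar p ((n : ℝ) ^ s / Real.exp 1) : ℝ))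
        + ((BadSet p X n ω).ncard : ℝ) := by
  obtain ⟨hs0, hs1⟩ := hs
  set e := Real.exp 1 with hedef
  have he1 : (2:ℝ) ≤ e := by have := Real.add_one_le_exp 1; linarith
  have he0 : (0:ℝ) < e := by linarith
  have hnR0 : (0:ℝ) < n := by positivity
  have hnR1 : (1:ℝ) ≤ n := by exact_mod_cast le_trans (by norm_num) hn
  set ns := (n:ℝ) ^ s with hnsdef
  set t := (n:ℝ) ^ ((1:ℝ) - s) with htdef
  have hns0 : 0 < ns := Real.rpow_pos_of_pos hnR0 s
  have ht0 : 0 < t := Real.rpow_pos_of_pos hnR0 _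
  have ht1 : 1 ≤ t := by
    have := Real.rpow_le_rpow_of_exponent_le hnR1 (by linarith : (0:ℝ) ≤ 1 - s)
    rwa [Real.rpow_zero] at this
  have hkey : ns * t = (n:ℝ) := by
    rw [hnsdef, htdef, ← Real.rpow_add hnR0]
    norm_num
  set A := {k : ℕ | ((Zbar X n k ω : ℝ)) ≥ t} with hAdef
  set B := {k : ℕ | 1 / ns ≤ p k} with hBdef
  set Sb := {k : ℕ | 1 / (e * ns) ≤ p k} with hSbdef
  set Ss := {k : ℕ | 1 / (ns / e) ≤ p k} with hSsdef
  set Bad := BadSet p X n ω with hBaddef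
  have hKA : (Kbar X n s ω : ℕ) = A.ncard := by
    rw [Kbar, Nat.card_coe_set_eq]
  have hrB : rhoBar p ns = B.ncard := rhoBar_eq p ns
  have hrSb : rhoBar p (e * ns) = Sb.ncard := rhoBar_eq p (e * ns)
  have hrSs : rhoBar p (ns / e) = Ss.ncard := rhoBar_eq p (ns / e)
  -- finiteness
  have hSb_fin : Sb.Finite := aux_finite hsum (by positivity)
  have hB_fin : B.Finite := aux_finite hsum (by positivity)
  have hBad_fin : Bad.Finite := badset_finite hsum X n (le_trans (by norm_num) hn) ω
  have hA_fin : A.Finite := by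
    apply (ones_finite X n ω).subset
    intro k hk
    exact le_trans ht1 hk
  -- subset relations
  have hSsSb : Ss ⊆ Sb := by
    intro k hk
    simp only [hSbdef, hSsdef, Set.mem_setOf_eq] at *
    refine le_trans ?_ hk
    apply one_div_le_one_div_of_le (by positivity)
    calc e * ns ≥ 1 * ns := by apply mul_le_mul_of_nonneg_right _ hns0.le; linarith
      _ = ns := one_mul ns
      _ ≥ ns / e := div_le_self hns0.le (by linarith)
  have hAB : A \ B ⊆ (Sb \ Ss) ∪ Bad := by
    rintro k ⟨hkA, hkB⟩
    simp only [hAdef, hBdef, Set.mem_setOf_eq, not_le] at hkA hkB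
    have hq : p k * ns < 1 := (lt_div_iff₀ hns0).mp hkB
    have hmq : (n:ℝ) * p k = (p k * ns) * t := by rw [← hkey]; ring
    by_cases hcase : e * ((n:ℝ) * p k) ≤ (Zbar X n k ω : ℝ)
    · exact Or.inr (Or.inl ⟨le_trans ht1 hkA, hcase⟩)
    · push_neg at hcase
      refine Or.inl ⟨?_, ?_⟩
      · show 1 / (e * ns) ≤ p k
        rw [div_le_iff₀ (by positivity)]
        have h1 : t < e * ((n:ℝ) * p k) := lt_of_le_of_lt hkA hcase
        rw [hmq] at h1
        have h2 : (1:ℝ) * t < (e * (p k * ns)) * t := by nlinarith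
        have h3 : (1:ℝ) < e * (p k * ns) := lt_of_mul_lt_mul_right h2 ht0.le
        nlinarith
      · show ¬ (1 / (ns / e) ≤ p k)
        push_neg
        refine lt_of_lt_of_le hkB (one_div_le_one_div_of_le (by positivity) ?_)
        exact div_le_self hns0.le (by linarith)
  have hBA : B \ A ⊆ (Sb \ Ss) ∪ Bad := by
    rintro k ⟨hkB, hkA⟩
    simp only [hAdef, hBdef, Set.mem_setOf_eq, not_le] at hkB hkA
    have hq : 1 ≤ p k * ns := by rwa [div_le_iff₀ hns0] at hkB
    have hmq : (n:ℝ) * p k = (p k * ns) * t := by rw [← hkey]; ring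
    have hm : t ≤ (n:ℝ) * p k := by nlinarith
    by_cases hcase : (Zbar X n k ω : ℝ) ≤ (n:ℝ) * p k / e
    · exact Or.inr (Or.inr ⟨le_trans ht1 hm, hcase⟩)
    · push_neg at hcase
      refine Or.inl ⟨?_, ?_⟩
      · show 1 / (e * ns) ≤ p k
        refine le_trans (one_div_le_one_div_of_le hns0 ?_) hkB
        calc ns = 1 * ns := (one_mul ns).symm
          _ ≤ e * ns := by apply mul_le_mul_of_nonneg_right _ hns0.le; linarith
      · show ¬ (1 / (ns / e) ≤ p k)
        push_neg
        rw [one_div_div, lt_div_iff₀ hns0]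
        have h1 : (n:ℝ) * p k / e < t := lt_trans hcase hkA
        rw [div_lt_iff₀ he0, hmq] at h1
        have h2 : (p k * ns) * t < e * t := by nlinarith
        have h3 : p k * ns < e := lt_of_mul_lt_mul_right h2 ht0.le
        linarith
  -- counting
  have hUfin : ((Sb \ Ss) ∪ Bad).Finite := (hSb_fin.subset Set.diff_subset).union hBad_fin
  have hcard1 : A.ncard ≤ B.ncard + ((Sb \ Ss) ∪ Bad).ncard := by
    have hsub : A ⊆ B ∪ ((Sb \ Ss) ∪ Bad) := by
      intro k hk
      by_cases hkB : k ∈ B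
      · exact Or.inl hkB
      · exact Or.inr (hAB ⟨hk, hkB⟩)
    exact le_trans (Set.ncard_le_ncard hsub (hB_fin.union hUfin)) (Set.ncard_union_le _ _)
  have hcard2 : B.ncard ≤ A.ncard + ((Sb \ Ss) ∪ Bad).ncard := by
    have hsub : B ⊆ A ∪ ((Sb \ Ss) ∪ Bad) := by
      intro k hk
      by_cases hkA : k ∈ A
      · exact Or.inl hkA
      · exact Or.inr (hBA ⟨hk, hkA⟩)
    exact le_trans (Set.ncard_le_ncard hsub (hA_fin.union hUfin)) (Set.ncard_union_le _ _)
  have hcardU : (((Sb \ Ss) ∪ Bad).ncard : ℝ)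
      ≤ ((rhoBar p (e * ns) : ℝ) - (rhoBar p (ns / e) : ℝ)) + (Bad.ncard : ℝ) := by
    have h1 : ((Sb \ Ss) ∪ Bad).ncard ≤ (Sb \ Ss).ncard + Bad.ncard := Set.ncard_union_le _ _
    have h2 : (Sb \ Ss).ncard = Sb.ncard - Ss.ncard :=
      Set.ncard_diff hSsSb (hSb_fin.subset hSsSb)
    have h3 : Ss.ncard ≤ Sb.ncard := Set.ncard_le_ncard hSsSb hSb_fin
    rw [hrSb, hrSs]
    calc (((Sb \ Ss) ∪ Bad).ncard : ℝ) ≤ ((Sb \ Ss).ncard : ℝ) + (Bad.ncard : ℝ) := by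
          exact_mod_cast h1
      _ = ((Sb.ncard : ℝ) - (Ss.ncard : ℝ)) + (Bad.ncard : ℝ) := by
          rw [h2, Nat.cast_sub h3]
  have hc1 : ((A.ncard : ℝ)) ≤ (B.ncard : ℝ) + (((Sb \ Ss) ∪ Bad).ncard : ℝ) := by
    exact_mod_cast hcard1
  have hc2 : ((B.ncard : ℝ)) ≤ (A.ncard : ℝ) + (((Sb \ Ss) ∪ Bad).ncard : ℝ) := by
    exact_mod_cast hcard2
  rw [abs_sub_le_iff, hKA, hrB]
  constructor
  · linarith
  · linarith

lemma rhoBar_mono {p : ℕ → ℝ} (hsum : Summable p) {t₁ t₂ : ℝ} (h1 : 0 < t₁) (h : t₁ ≤ t₂) :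
    rhoBar p t₁ ≤ rhoBar p t₂ := by
  rw [rhoBar_eq, rhoBar_eq]
  have hsub : {k | 1 / t₁ ≤ p k} ⊆ {k | 1 / t₂ ≤ p k} := by
    intro k hk
    exact le_trans (one_div_le_one_div_of_le h1 h) hk
  have ht2 : 0 < t₂ := lt_of_lt_of_le h1 h
  exact Set.ncard_le_ncard hsub (aux_finite hsum (by positivity))

lemma rhoBar_diff_eq {p : ℕ → ℝ} (hsum : Summable p) {t₁ t₂ : ℝ} (h1 : 0 < t₁) (h : t₁ ≤ t₂) :
    ((rhoBar p t₂ : ℝ)) - (rhoBar p t₁ : ℝ)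
      = (({k | 1 / t₂ ≤ p k ∧ p k < 1 / t₁} : Set ℕ).ncard : ℝ) := by
  have hsub : {k | 1 / t₁ ≤ p k} ⊆ {k | 1 / t₂ ≤ p k} := by
    intro k hk
    exact le_trans (one_div_le_one_div_of_le h1 h) hk
  have ht2 : 0 < t₂ := lt_of_lt_of_le h1 h
  have hfin2 : {k | 1 / t₂ ≤ p k}.Finite := aux_finite hsum (by positivity)
  have hdiff : {k | 1 / t₂ ≤ p k} \ {k | 1 / t₁ ≤ p k}
      = {k | 1 / t₂ ≤ p k ∧ p k < 1 / t₁} := by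
    ext k
    simp only [Set.mem_diff, Set.mem_setOf_eq, not_le]
  rw [rhoBar_eq, rhoBar_eq, ← hdiff, Set.ncard_diff hsub (hfin2.subset hsub),
    Nat.cast_sub (Set.ncard_le_ncard hsub hfin2)]

lemma measurable_zpow_neg_two : Measurable (fun x : ℝ => x ^ (-2 : ℤ)) := by
  have : (fun x : ℝ => x ^ (-2 : ℤ)) = fun x : ℝ => (x ^ 2)⁻¹ := by
    funext x
    rw [zpow_neg]
    norm_cast
  rw [this]
  exact (measurable_id.pow_const 2).inv

lemma integral_T3 {p : ℕ → ℝ} (hppos : ∀ k, 0 < p k) (hsum : Summable p)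
    (hsum1 : ∑' k, p k = 1) {n : ℕ} (hn : 2 ≤ n) :
    (∑' k, (if p k < 1/(n:ℝ) then ENNReal.ofReal ((n:ℝ) * p k) else 0))
      ≤ ENNReal.ofReal (∫ x in Set.Ioi (1:ℝ),
          x ^ (-2 : ℤ) * ((rhoBar p ((n:ℝ) * x) : ℕ) - (rhoBar p (n:ℝ) : ℕ) : ℝ)) := by
  have hnR0 : (0:ℝ) < n := by positivity
  have hnR1 : (1:ℝ) ≤ n := by exact_mod_cast le_trans (by norm_num) hn
  set f : ℝ → ℝ := fun x => x ^ (-2 : ℤ) * ((rhoBar p ((n:ℝ) * x) : ℕ) - (rhoBar p (n:ℝ) : ℕ) : ℝ)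
    with hfdef
  -- measurable version
  set g : ℝ → ℝ := fun x =>
      x ^ (-2 : ℤ) * ((rhoBar p ((n:ℝ) * max x 1) : ℕ) - (rhoBar p (n:ℝ) : ℕ) : ℝ) with hgdef
  have hg_meas : Measurable g := by
    apply Measurable.mul measurable_zpow_neg_two
    apply Measurable.sub _ measurable_const
    have hmono : Monotone (fun x : ℝ => ((rhoBar p ((n:ℝ) * max x 1) : ℕ) : ℝ)) := by
      intro x y hxy
      have hpos : (0:ℝ) < (n:ℝ) * max x 1 := by positivity
      have hle : (n:ℝ) * max x 1 ≤ (n:ℝ) * max y 1 :=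
        mul_le_mul_of_nonneg_left (max_le_max hxy (le_refl 1)) hnR0.le
      simp only
      exact_mod_cast rhoBar_mono hsum hpos hle
    exact hmono.measurable
  have hfg : ∀ x ∈ Set.Ioi (1:ℝ), f x = g x := by
    intro x hx
    have : max x 1 = x := max_eq_left (le_of_lt hx)
    simp only [hfdef, hgdef, this]
  have hg_nonneg : ∀ x ∈ Set.Ioi (1:ℝ), 0 ≤ g x := by
    intro x hx
    have hx1 : (1:ℝ) < x := hx
    have h1 : rhoBar p (n:ℝ) ≤ rhoBar p ((n:ℝ) * max x 1) := by
      apply rhoBar_mono hsum hnR0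
      calc (n:ℝ) = (n:ℝ) * 1 := (mul_one _).symm
        _ ≤ (n:ℝ) * max x 1 := by
            apply mul_le_mul_of_nonneg_left (le_max_right x 1) hnR0.le
    have h2 : (0:ℝ) ≤ ((rhoBar p ((n:ℝ) * max x 1) : ℕ) : ℝ) - (rhoBar p (n:ℝ) : ℕ) := by
      rw [sub_nonneg]; exact_mod_cast h1
    apply mul_nonneg _ h2
    rw [zpow_neg]
    positivity
  -- the ENNReal integrand identity on Ioi 1
  have hcount : ∀ x ∈ Set.Ioi (1:ℝ), ENNReal.ofReal (g x)
      = ∑' k, (ENNReal.ofReal (x ^ (-2:ℤ)) *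
          (if 1/((n:ℝ)*x) ≤ p k ∧ p k < 1/(n:ℝ) then 1 else 0)) := by
    intro x hx
    have hx1 : (1:ℝ) < x := hx
    have hx0 : (0:ℝ) < x := by linarith
    have hd : ((rhoBar p ((n:ℝ)*x) : ℕ) : ℝ) - (rhoBar p (n:ℝ) : ℕ)
        = (({k | 1/((n:ℝ)*x) ≤ p k ∧ p k < 1/(n:ℝ)} : Set ℕ).ncard : ℝ) :=
      rhoBar_diff_eq hsum hnR0 (by nlinarith)
    have hfin : ({k | 1/((n:ℝ)*x) ≤ p k ∧ p k < 1/(n:ℝ)} : Set ℕ).Finite :=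
      (aux_finite hsum (c := 1/((n:ℝ)*x)) (by positivity)).subset (fun k hk => hk.1)
    rw [← hfg x hx] at *
    rw [hfdef]
    simp only
    rw [hd, ENNReal.ofReal_mul (by rw [zpow_neg]; positivity), ENNReal.ofReal_natCast,
      ← aux_tsum_indicator hfin, ← ENNReal.tsum_mul_left]
    congr 1
    funext k
    congr 1
    rw [Set.indicator_apply]
    simp only [Set.mem_setOf_eq]
  -- measurability of each term
  have hterm_meas : ∀ k, Measurable (fun x : ℝ => ENNReal.ofReal (x ^ (-2:ℤ)) *
      (if 1/((n:ℝ)*x) ≤ p k ∧ p k < 1/(n:ℝ) then (1:ℝ≥0∞) else 0)) := by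
    intro k
    apply Measurable.mul measurable_zpow_neg_two.ennreal_ofReal
    by_cases hk : p k < 1/(n:ℝ)
    · have heq : (fun x : ℝ => (if 1/((n:ℝ)*x) ≤ p k ∧ p k < 1/(n:ℝ) then (1:ℝ≥0∞) else 0))
          = fun x : ℝ => (if 1/((n:ℝ)*x) ≤ p k then (1:ℝ≥0∞) else 0) := by
        funext x; rw [if_congr (and_iff_left hk) rfl rfl]
      rw [heq]
      have hS : MeasurableSet {x : ℝ | 1/((n:ℝ)*x) ≤ p k} := by
        have hm : Measurable (fun x : ℝ => 1/((n:ℝ)*x)) := by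
          simp only [one_div]
          exact (measurable_const.mul measurable_id).inv
        exact measurableSet_le hm measurable_const
      exact Measurable.ite hS measurable_const measurable_const
    · have heq : (fun x : ℝ => (if 1/((n:ℝ)*x) ≤ p k ∧ p k < 1/(n:ℝ) then (1:ℝ≥0∞) else 0))
          = fun _ : ℝ => (0:ℝ≥0∞) := by
        funext x; rw [if_neg (fun hc => hk hc.2)]
      rw [heq]
      exact measurable_const
  -- the lintegral computation
  have hL : (∫⁻ x in Set.Ioi (1:ℝ), ENNReal.ofReal (g x))
      = ∑' k, (if p k < 1/(n:ℝ) then ENNReal.ofReal ((n:ℝ) * p k) else 0) := by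
    rw [setLIntegral_congr_fun measurableSet_Ioi hcount]
    rw [lintegral_tsum (fun k => (hterm_meas k).aemeasurable)]
    congr 1
    funext k
    by_cases hk : p k < 1/(n:ℝ)
    · have hpk0 : 0 < p k := hppos k
      have hnpk : 0 < (n:ℝ) * p k := by positivity
      have hnpk1 : (n:ℝ) * p k < 1 := by
        have := (lt_div_iff₀ hnR0).mp hk
        linarith [mul_comm (p k) (n:ℝ)]
      set a : ℝ := 1/((n:ℝ) * p k) with hadef
      have ha1 : 1 < a := by
        rw [hadef]
        exact one_lt_one_div hnpk hnpk1
      have ha0 : 0 < a := by linarith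
      have hcond : ∀ x : ℝ, x ∈ Set.Ioi (1:ℝ) →
          ((1/((n:ℝ)*x) ≤ p k ∧ p k < 1/(n:ℝ)) ↔ a ≤ x) := by
        intro x hx
        have hx0 : (0:ℝ) < x := lt_trans one_pos hx
        constructor
        · rintro ⟨h1, -⟩
          rw [div_le_iff₀ (by positivity)] at h1
          rw [hadef, div_le_iff₀ hnpk]
          nlinarith
        · intro h1
          refine ⟨?_, hk⟩
          rw [div_le_iff₀ (by positivity)]
          rw [hadef, div_le_iff₀ hnpk] at h1
          nlinarith
      have hstep : (∫⁻ x in Set.Ioi (1:ℝ), ENNReal.ofReal (x ^ (-2:ℤ)) *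
            (if 1/((n:ℝ)*x) ≤ p k ∧ p k < 1/(n:ℝ) then (1:ℝ≥0∞) else 0))
          = ∫⁻ x in Set.Ioi (1:ℝ),
              (Set.Ici a).indicator (fun x => ENNReal.ofReal (x ^ (-2:ℤ))) x := by
        apply setLIntegral_congr_fun measurableSet_Ioi
        intro x hx
        beta_reduce
        by_cases hax : a ≤ x
        · rw [if_pos ((hcond x hx).mpr hax), Set.indicator_of_mem (Set.mem_Ici.mpr hax) _, mul_one]
        · rw [if_neg (fun hc => hax ((hcond x hx).mp hc)), Set.indicator_of_notMem (fun h => hax (Set.mem_Ici.mp h)) _, mul_zero]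
      rw [hstep, if_pos hk]
      rw [lintegral_indicator measurableSet_Ici, Measure.restrict_restrict measurableSet_Ici]
      have hIci : Set.Ici a ∩ Set.Ioi (1:ℝ) = Set.Ici a := by
        apply Set.inter_eq_left.mpr
        intro x hx
        exact lt_of_lt_of_le ha1 hx
      rw [hIci, ← Measure.restrict_congr_set (Ioi_ae_eq_Ici (a := a))]
      have hrpow : ∀ x ∈ Set.Ioi a, ENNReal.ofReal (x ^ (-2:ℤ)) = ENNReal.ofReal (x ^ (-2:ℝ)) := by
        intro x hx
        congr 1
        rw [show ((-2:ℝ)) = ((-2:ℤ):ℝ) by norm_num, Real.rpow_intCast]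
      rw [setLIntegral_congr_fun measurableSet_Ioi hrpow, aux_lintegral_rpow ha0]
      congr 1
      rw [hadef, one_div, inv_inv]
    · rw [if_neg hk]
      have heq : (fun x : ℝ => ENNReal.ofReal (x ^ (-2:ℤ)) *
          (if 1/((n:ℝ)*x) ≤ p k ∧ p k < 1/(n:ℝ) then (1:ℝ≥0∞) else 0)) = fun _ => (0:ℝ≥0∞) := by
        funext x; rw [if_neg (fun hc => hk hc.2), mul_zero]
      rw [heq, lintegral_zero]
  -- finiteness
  have hfin : (∫⁻ x in Set.Ioi (1:ℝ), ENNReal.ofReal (g x)) ≠ ⊤ := by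
    rw [hL]
    apply ne_top_of_le_ne_top (b := ∑' k, ENNReal.ofReal ((n:ℝ) * p k))
    · rw [show (fun k => ENNReal.ofReal ((n:ℝ) * p k))
          = fun k => ENNReal.ofReal (n:ℝ) * ENNReal.ofReal (p k) by
        funext k; rw [ENNReal.ofReal_mul hnR0.le]]
      rw [ENNReal.tsum_mul_left, ← ENNReal.ofReal_tsum_of_nonneg (fun k => (hppos k).le) hsum,
        hsum1]
      simp
    · apply ENNReal.tsum_le_tsum
      intro k
      split
      · exact le_refl _
      · exact zero_le
  -- integrability of f on Ioi 1
  have h_ae_eq : f =ᵐ[volume.restrict (Set.Ioi (1:ℝ))] g := by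
    filter_upwards [ae_restrict_mem measurableSet_Ioi] with x hx
    exact hfg x hx
  have h_ae_meas : AEStronglyMeasurable f (volume.restrict (Set.Ioi (1:ℝ))) :=
    hg_meas.aestronglyMeasurable.congr h_ae_eq.symm
  have h_ae_nonneg : 0 ≤ᵐ[volume.restrict (Set.Ioi (1:ℝ))] f := by
    filter_upwards [ae_restrict_mem measurableSet_Ioi] with x hx
    rw [hfg x hx]
    exact hg_nonneg x hx
  have hlint_eq : (∫⁻ x in Set.Ioi (1:ℝ), ENNReal.ofReal (f x))
      = ∫⁻ x in Set.Ioi (1:ℝ), ENNReal.ofReal (g x) := by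
    apply lintegral_congr_ae
    filter_upwards [h_ae_eq] with x hx
    rw [hx]
  have hint : Integrable f (volume.restrict (Set.Ioi (1:ℝ))) := by
    refine ⟨h_ae_meas, ?_⟩
    rw [hasFiniteIntegral_iff_ofReal h_ae_nonneg, hlint_eq]
    exact lt_of_le_of_ne le_top hfin
  rw [MeasureTheory.ofReal_integral_eq_lintegral_ofReal hint h_ae_nonneg, hlint_eq, hL]

section ProbBounds

variable {Ω : Type} [MeasurableSpace Ω] {P : Measure Ω} [IsProbabilityMeasure P]
  {X : ℕ → Ω → ℕ} (hX : ∀ i, Measurable (X i))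
  (hind : iIndepFun X P)
  {p : ℕ → ℝ} (hppos : ∀ k, 0 < p k) (hp1 : ∀ k, p k ≤ 1)
  (hlaw : ∀ i k, P {ω | X i ω = k} = ENNReal.ofReal (p k))

include hX in
lemma badEvent_measurable (n k : ℕ) : MeasurableSet {ω | k ∈ BadSet p X n ω} := by
  have hZ : Measurable (fun ω => (Zbar X n k ω : ℝ)) := Zbar_meas hX n k
  have h1 : MeasurableSet {ω | 1 ≤ (Zbar X n k ω : ℝ)
      ∧ Real.exp 1 * ((n : ℝ) * p k) ≤ (Zbar X n k ω : ℝ)} :=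
    (measurableSet_le measurable_const hZ).inter (measurableSet_le measurable_const hZ)
  have h2 : MeasurableSet {ω | 1 ≤ (n : ℝ) * p k
      ∧ (Zbar X n k ω : ℝ) ≤ (n : ℝ) * p k / Real.exp 1} :=
    (MeasurableSet.const _).inter (measurableSet_le hZ measurable_const)
  exact h1.union h2

include hX hlaw in
lemma prob_bad_small {n k : ℕ} (hk : p k < 1 / (n:ℝ)) (hn : 1 ≤ n) :
    P {ω | k ∈ BadSet p X n ω} ≤ ENNReal.ofReal ((n:ℝ) * p k) := by
  have hnR0 : (0:ℝ) < n := by exact_mod_cast hn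
  have hnp1 : (n:ℝ) * p k < 1 := by
    have := (lt_div_iff₀ hnR0).mp hk
    linarith [mul_comm (p k) (n:ℝ)]
  have hsub : {ω | k ∈ BadSet p X n ω} ⊆ ⋃ i ∈ Finset.range n, {ω | X i ω = k} := by
    rintro ω (⟨h1, -⟩ | ⟨h1, -⟩)
    · -- 1 ≤ Zbar
      have hne : Zbar X n k ω ≠ 0 := by
        intro h; rw [h] at h1; norm_num at h1
      rw [Zbar] at hne
      obtain ⟨i, hi⟩ := Finset.card_ne_zero.mp hne
      rw [Finset.mem_filter] at hi
      exact Set.mem_biUnion hi.1 hi.2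
    · linarith
  calc P {ω | k ∈ BadSet p X n ω} ≤ P (⋃ i ∈ Finset.range n, {ω | X i ω = k}) :=
        measure_mono hsub
    _ ≤ ∑ i ∈ Finset.range n, P {ω | X i ω = k} := measure_biUnion_finset_le _ _
    _ = ∑ i ∈ Finset.range n, ENNReal.ofReal (p k) := by
        exact Finset.sum_congr rfl (fun i _ => hlaw i k)
    _ = (n : ℝ≥0∞) * ENNReal.ofReal (p k) := by
        rw [Finset.sum_const, Finset.card_range, nsmul_eq_mul]
    _ = ENNReal.ofReal ((n:ℝ) * p k) := by
        rw [ENNReal.ofReal_mul hnR0.le, ENNReal.ofReal_natCast]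

include hX hind hppos hp1 hlaw in
lemma prob_bad_tails (n : ℕ) (k : ℕ) :
    P {ω | k ∈ BadSet p X n ω}
      ≤ ENNReal.ofReal (Real.exp (-((n:ℝ) * p k)))
        + ENNReal.ofReal (Real.exp ((2 / Real.exp 1 - 1) * ((n:ℝ) * p k))) := by
  have hsub : {ω | k ∈ BadSet p X n ω}
      ⊆ {ω | Real.exp 1 * ((n:ℝ) * p k) ≤ (Zbar X n k ω : ℝ)}
        ∪ {ω | (Zbar X n k ω : ℝ) ≤ (n:ℝ) * p k / Real.exp 1} := by
    rintro ω (⟨-, h⟩ | ⟨-, h⟩)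
    · exact Or.inl h
    · exact Or.inr h
  calc P {ω | k ∈ BadSet p X n ω}
      ≤ P ({ω | Real.exp 1 * ((n:ℝ) * p k) ≤ (Zbar X n k ω : ℝ)}
          ∪ {ω | (Zbar X n k ω : ℝ) ≤ (n:ℝ) * p k / Real.exp 1}) := measure_mono hsub
    _ ≤ P {ω | Real.exp 1 * ((n:ℝ) * p k) ≤ (Zbar X n k ω : ℝ)}
          + P {ω | (Zbar X n k ω : ℝ) ≤ (n:ℝ) * p k / Real.exp 1} := measure_union_le _ _
    _ ≤ _ := by
        apply add_le_add
        · exact chernoff_upper hX hind (hppos k).le (hp1 k) (fun i => hlaw i k) n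
        · exact chernoff_lower hX hind (hppos k).le (hp1 k) (fun i => hlaw i k) n

end ProbBounds

lemma aux_tsum_if_const {B : Set ℕ} (hB : B.Finite) (c : ℝ≥0∞) :
    ∑' k, B.indicator (fun _ => c) k = (B.ncard : ℝ≥0∞) * c := by
  rw [tsum_eq_sum (s := hB.toFinset) (fun k hk => by
    rw [Set.indicator_of_notMem (by simpa using hk)])]
  rw [Finset.sum_congr rfl (fun k hk => Set.indicator_of_mem (by simpa using hk) _)]
  rw [Finset.sum_const, ← Set.ncard_coe_finset hB.toFinset, hB.coe_toFinset, nsmul_eq_mul]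

lemma real_le_biSup_Icc {g : ℝ → ℝ} {C : ℝ} (hbound : ∀ s ∈ Set.Icc (0:ℝ) 1, g s ≤ C)
    {s : ℝ} (hs : s ∈ Set.Icc (0:ℝ) 1) :
    g s ≤ ⨆ t ∈ Set.Icc (0:ℝ) 1, g t := by
  have hF : ∀ t, (⨆ (_ : t ∈ Set.Icc (0:ℝ) 1), g t) ≤ max C 0 := by
    intro t
    by_cases ht : t ∈ Set.Icc (0:ℝ) 1
    · rw [ciSup_pos ht]
      exact le_max_of_le_left (hbound t ht)
    · have : IsEmpty (t ∈ Set.Icc (0:ℝ) 1 : Prop) := isEmpty_Prop.mpr ht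
      rw [Real.iSup_of_isEmpty]
      exact le_max_right _ _
  have hBdd : BddAbove (Set.range fun t => ⨆ (_ : t ∈ Set.Icc (0:ℝ) 1), g t) := by
    refine ⟨max C 0, ?_⟩
    rintro _ ⟨t, rfl⟩
    exact hF t
  calc g s = ⨆ (_ : s ∈ Set.Icc (0:ℝ) 1), g s := (ciSup_pos (f := fun _ => g s) hs).symm
    _ ≤ ⨆ t, ⨆ (_ : t ∈ Set.Icc (0:ℝ) 1), g t := le_ciSup hBdd s

lemma real_biSup_Icc_nonneg {g : ℝ → ℝ} {C : ℝ} (hbound : ∀ s ∈ Set.Icc (0:ℝ) 1, g s ≤ C) :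
    0 ≤ ⨆ t ∈ Set.Icc (0:ℝ) 1, g t := by
  have hF : ∀ t, (⨆ (_ : t ∈ Set.Icc (0:ℝ) 1), g t) ≤ max C 0 := by
    intro t
    by_cases ht : t ∈ Set.Icc (0:ℝ) 1
    · rw [ciSup_pos ht]
      exact le_max_of_le_left (hbound t ht)
    · have : IsEmpty (t ∈ Set.Icc (0:ℝ) 1 : Prop) := isEmpty_Prop.mpr ht
      rw [Real.iSup_of_isEmpty]
      exact le_max_right _ _
  have hBdd : BddAbove (Set.range fun t => ⨆ (_ : t ∈ Set.Icc (0:ℝ) 1), g t) := by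
    refine ⟨max C 0, ?_⟩
    rintro _ ⟨t, rfl⟩
    exact hF t
  have h2 := le_ciSup hBdd (2:ℝ)
  have : IsEmpty ((2:ℝ) ∈ Set.Icc (0:ℝ) 1 : Prop) := isEmpty_Prop.mpr (by norm_num)
  rwa [Real.iSup_of_isEmpty] at h2

theorem universal_estimate_for_occupancy_counts :
    ∃ y₀ : ℝ, y₀ ∈ Set.Ioo (0 : ℝ) 1 ∧
      ∀ (p : ℕ → ℝ), (∀ k, 0 < p k) → (∑' k, p k) = 1 →
      ∀ (Ω : Type) (_ : MeasurableSpace Ω) (P : Measure Ω), IsProbabilityMeasure P →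
      ∀ (X : ℕ → Ω → ℕ), (∀ i, Measurable (X i)) →
        iIndepFun X P →
        (∀ i k, P {ω | X i ω = k} = ENNReal.ofReal (p k)) →
      ∀ n : ℕ, 2 ≤ n →
        (∫⁻ ω, ENNReal.ofReal (⨆ s ∈ Set.Icc (0 : ℝ) 1,
            |((Kbar X n s ω : ℝ)) - (rhoBar p ((n : ℝ) ^ s) : ℝ)|) ∂P)
          ≤ ENNReal.ofReal
            (4 * ((rhoBar p n : ℝ) - (rhoBar p (y₀ * n / (Real.log n) ^ 2) : ℝ))
              + 2 * (rhoBar p n : ℝ) / Real.log n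
              + (∫ x in Set.Ioi (1 : ℝ),
                  x ^ (-2 : ℤ) * ((rhoBar p (n * x) : ℝ) - (rhoBar p n : ℝ)))
              + 2 * ⨆ s ∈ Set.Icc (0 : ℝ) 1,
                  ((rhoBar p (Real.exp 1 * (n : ℝ) ^ s) : ℝ)
                    - (rhoBar p ((n : ℝ) ^ s / Real.exp 1) : ℝ))) := by
  refine ⟨1/4, by norm_num, ?_⟩
  intro p hppos hsum1 Ω mΩ P hP X hXmeas hind hlaw n hn
  -- basic facts
  have hsum : Summable p := by
    by_contra h
    rw [tsum_eq_zero_of_not_summable h] at hsum1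
    norm_num at hsum1
  have hp1 : ∀ k, p k ≤ 1 := by
    intro k
    rw [← hsum1]
    exact Summable.le_tsum hsum k (fun j _ => (hppos j).le)
  have hnR1 : (1:ℝ) < n := by exact_mod_cast lt_of_lt_of_le (by norm_num) hn
  have hnR0 : (0:ℝ) < n := by linarith
  have hL0 : 0 < Real.log n := Real.log_pos hnR1
  have hL2 : 1/2 < Real.log n := by
    have h2 : Real.log 2 ≤ Real.log n := Real.log_le_log (by norm_num) (by exact_mod_cast hn)
    have := Real.log_two_gt_d9
    linarith
  set L := Real.log (n:ℝ) with hLdef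
  set e := Real.exp 1 with hedef
  have he1 : (2:ℝ) ≤ e := by have := Real.add_one_le_exp 1; linarith
  set t1 := (1/4 : ℝ) * n / L ^ 2 with ht1def
  have ht1pos : 0 < t1 := by positivity
  have ht1len : t1 ≤ (n:ℝ) := by
    rw [ht1def, div_le_iff₀ (by positivity)]
    have h14 : (0:ℝ) ≤ (L - 1/2) * (L + 1/2) :=
      mul_nonneg (by linarith) (by linarith)
    nlinarith [mul_nonneg hnR0.le h14]
  -- bound for the window function
  have hwb : ∀ s ∈ Set.Icc (0:ℝ) 1,
      ((rhoBar p (e * (n:ℝ) ^ s) : ℝ) - (rhoBar p ((n:ℝ) ^ s / e) : ℝ))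
        ≤ ((rhoBar p (e * (n:ℝ)) : ℝ)) := by
    intro s hs
    have hns0 : (0:ℝ) < (n:ℝ) ^ s := Real.rpow_pos_of_pos hnR0 s
    have h1 : rhoBar p (e * (n:ℝ) ^ s) ≤ rhoBar p (e * n) := by
      apply rhoBar_mono hsum (by positivity)
      have h2 : (n:ℝ) ^ s ≤ (n:ℝ) := by
        have := Real.rpow_le_rpow_of_exponent_le hnR1.le hs.2
        rwa [Real.rpow_one] at this
      nlinarith
    have h3 : ((rhoBar p (e * (n:ℝ) ^ s) : ℝ)) ≤ ((rhoBar p (e * (n:ℝ)) : ℝ)) := by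
      exact_mod_cast h1
    have h4 : (0:ℝ) ≤ ((rhoBar p ((n:ℝ) ^ s / e) : ℝ)) := Nat.cast_nonneg _
    linarith
  have hD0 : 0 ≤ ⨆ t ∈ Set.Icc (0:ℝ) 1,
      ((rhoBar p (e * (n:ℝ) ^ t) : ℝ) - (rhoBar p ((n:ℝ) ^ t / e) : ℝ)) :=
    real_biSup_Icc_nonneg hwb
  have hDge : ∀ s ∈ Set.Icc (0:ℝ) 1,
      ((rhoBar p (e * (n:ℝ) ^ s) : ℝ) - (rhoBar p ((n:ℝ) ^ s / e) : ℝ))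
        ≤ ⨆ t ∈ Set.Icc (0:ℝ) 1,
            ((rhoBar p (e * (n:ℝ) ^ t) : ℝ) - (rhoBar p ((n:ℝ) ^ t / e) : ℝ)) :=
    fun s hs => real_le_biSup_Icc hwb hs
  set D := ⨆ t ∈ Set.Icc (0:ℝ) 1,
      ((rhoBar p (e * (n:ℝ) ^ t) : ℝ) - (rhoBar p ((n:ℝ) ^ t / e) : ℝ)) with hDdef
  -- pointwise bound
  have hpoint : ∀ ω, ENNReal.ofReal (⨆ s ∈ Set.Icc (0 : ℝ) 1,
      |((Kbar X n s ω : ℝ)) - (rhoBar p ((n : ℝ) ^ s) : ℝ)|)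
      ≤ ENNReal.ofReal D + (((BadSet p X n ω).ncard : ℕ) : ℝ≥0∞) := by
    intro ω
    have hcard0 : (0:ℝ) ≤ ((BadSet p X n ω).ncard : ℝ) := Nat.cast_nonneg _
    have hsup_le : (⨆ s ∈ Set.Icc (0 : ℝ) 1,
        |((Kbar X n s ω : ℝ)) - (rhoBar p ((n : ℝ) ^ s) : ℝ)|)
        ≤ D + ((BadSet p X n ω).ncard : ℝ) := by
      apply Real.iSup_le _ (by linarith)
      intro s
      apply Real.iSup_le _ (by linarith)
      intro hs
      have h1 := counting hsum X ω hn hs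
      have h2 := hDge s hs
      rw [← hedef] at h1
      linarith
    calc ENNReal.ofReal (⨆ s ∈ Set.Icc (0 : ℝ) 1,
        |((Kbar X n s ω : ℝ)) - (rhoBar p ((n : ℝ) ^ s) : ℝ)|)
        ≤ ENNReal.ofReal (D + ((BadSet p X n ω).ncard : ℝ)) := ENNReal.ofReal_le_ofReal hsup_le
      _ = ENNReal.ofReal D + ENNReal.ofReal (((BadSet p X n ω).ncard : ℝ)) :=
          ENNReal.ofReal_add hD0 hcard0
      _ = ENNReal.ofReal D + (((BadSet p X n ω).ncard : ℕ) : ℝ≥0∞) := by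
          rw [ENNReal.ofReal_natCast]
  -- expectation step
  have hEmeas : ∀ k, MeasurableSet {ω | k ∈ BadSet p X n ω} :=
    fun k => badEvent_measurable hXmeas n k
  have hmain1 : (∫⁻ ω, ENNReal.ofReal (⨆ s ∈ Set.Icc (0 : ℝ) 1,
      |((Kbar X n s ω : ℝ)) - (rhoBar p ((n : ℝ) ^ s) : ℝ)|) ∂P)
      ≤ ENNReal.ofReal D + ∑' k, P {ω | k ∈ BadSet p X n ω} := by
    calc (∫⁻ ω, ENNReal.ofReal (⨆ s ∈ Set.Icc (0 : ℝ) 1,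
        |((Kbar X n s ω : ℝ)) - (rhoBar p ((n : ℝ) ^ s) : ℝ)|) ∂P)
        ≤ ∫⁻ ω, (ENNReal.ofReal D + (((BadSet p X n ω).ncard : ℕ) : ℝ≥0∞)) ∂P :=
          lintegral_mono hpoint
      _ ≤ ∫⁻ ω, (ENNReal.ofReal D
            + ∑' k, ({ω' | k ∈ BadSet p X n ω'}).indicator (fun _ => (1:ℝ≥0∞)) ω) ∂P := by
          apply lintegral_mono
          intro ω
          apply add_le_add_right
          calc (((BadSet p X n ω).ncard : ℕ) : ℝ≥0∞)
              ≤ ∑' k, (BadSet p X n ω).indicator (fun _ => (1:ℝ≥0∞)) k :=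
                aux_ncard_le_tsum _
            _ = ∑' k, ({ω' | k ∈ BadSet p X n ω'}).indicator (fun _ => (1:ℝ≥0∞)) ω := by
                apply tsum_congr
                intro k
                by_cases hk : k ∈ BadSet p X n ω
                · rw [Set.indicator_of_mem hk, Set.indicator_of_mem (by exact hk)]
                · rw [Set.indicator_of_notMem hk, Set.indicator_of_notMem (by exact hk)]
      _ = ENNReal.ofReal D + ∑' k, P {ω | k ∈ BadSet p X n ω} := by
          rw [lintegral_add_left measurable_const]
          congr 1
          · rw [lintegral_const, measure_univ, mul_one]
          · rw [lintegral_tsum (fun k => ((measurable_const.indicator (hEmeas k)).aemeasurable))]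
            apply tsum_congr
            intro k
            rw [lintegral_indicator_const (hEmeas k), one_mul]
  -- per-box bounds
  have hcn_eq : 1 / t1 = 4 * L^2 / n := by
    rw [ht1def]
    field_simp
  have hG : ∀ k, P {ω | k ∈ BadSet p X n ω} ≤
      (if p k < 1/(n:ℝ) then ENNReal.ofReal ((n:ℝ) * p k) else 0)
      + ({j | 1/(n:ℝ) ≤ p j ∧ p j < 1/t1}).indicator (fun _ => (1:ℝ≥0∞)) k
      + ({j | 1/t1 ≤ p j}).indicator (fun _ => ENNReal.ofReal (2 / L)) k := by
    intro k
    rcases lt_or_ge (p k) (1/(n:ℝ)) with hk | hk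
    · refine le_trans (prob_bad_small hXmeas hlaw hk (le_trans (by norm_num) hn)) ?_
      rw [if_pos hk]
      exact le_add_right le_self_add
    rcases lt_or_ge (p k) (1/t1) with hk2 | hk2
    · refine le_trans prob_le_one ?_
      have hmem : k ∈ {j | 1/(n:ℝ) ≤ p j ∧ p j < 1/t1} := ⟨hk, hk2⟩
      rw [Set.indicator_of_mem hmem]
      exact le_add_right le_add_self
    · have hm : 4 * L^2 ≤ (n:ℝ) * p k := by
        have h1 : 4 * L^2 / n ≤ p k := by rw [← hcn_eq]; exact hk2
        rw [div_le_iff₀ hnR0] at h1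
        linarith [mul_comm (p k) (n:ℝ)]
      have htails := prob_bad_tails hXmeas hind hppos hp1 hlaw n k
      have hnum := tail_sum_le hL0 hm
      have hmem : k ∈ {j | 1/t1 ≤ p j} := hk2
      calc P {ω | k ∈ BadSet p X n ω}
          ≤ ENNReal.ofReal (Real.exp (-((n:ℝ) * p k)))
            + ENNReal.ofReal (Real.exp ((2 / Real.exp 1 - 1) * ((n:ℝ) * p k))) := htails
        _ = ENNReal.ofReal (Real.exp (-((n:ℝ) * p k))
            + Real.exp ((2 / Real.exp 1 - 1) * ((n:ℝ) * p k))) :=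
            (ENNReal.ofReal_add (Real.exp_nonneg _) (Real.exp_nonneg _)).symm
        _ ≤ ENNReal.ofReal (2 / L) := ENNReal.ofReal_le_ofReal (by rw [← hedef] at *; exact hnum)
        _ ≤ _ := by
            rw [Set.indicator_of_mem hmem]
            exact le_add_self
  have hsplit : ∑' k, P {ω | k ∈ BadSet p X n ω} ≤
      (∑' k, (if p k < 1/(n:ℝ) then ENNReal.ofReal ((n:ℝ) * p k) else 0))
      + (∑' k, ({j | 1/(n:ℝ) ≤ p j ∧ p j < 1/t1}).indicator (fun _ => (1:ℝ≥0∞)) k)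
      + (∑' k, ({j | 1/t1 ≤ p j}).indicator (fun _ => ENNReal.ofReal (2 / L)) k) := by
    calc ∑' k, P {ω | k ∈ BadSet p X n ω}
        ≤ ∑' k, ((if p k < 1/(n:ℝ) then ENNReal.ofReal ((n:ℝ) * p k) else 0)
          + ({j | 1/(n:ℝ) ≤ p j ∧ p j < 1/t1}).indicator (fun _ => (1:ℝ≥0∞)) k
          + ({j | 1/t1 ≤ p j}).indicator (fun _ => ENNReal.ofReal (2 / L)) k) :=
          ENNReal.tsum_le_tsum hG
      _ = _ := by rw [ENNReal.tsum_add, ENNReal.tsum_add]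
  -- the three sums
  have hS1 := integral_T3 hppos hsum hsum1 hn
  have hrdiff : ((rhoBar p (n:ℝ) : ℝ) - (rhoBar p t1 : ℝ))
      = ((({j | 1/(n:ℝ) ≤ p j ∧ p j < 1/t1} : Set ℕ).ncard : ℕ) : ℝ) :=
    rhoBar_diff_eq hsum ht1pos ht1len
  have hfinM : {j | 1/(n:ℝ) ≤ p j ∧ p j < 1/t1}.Finite :=
    (aux_finite hsum (by positivity)).subset (fun k hk => hk.1)
  have hS2 : (∑' k, ({j | 1/(n:ℝ) ≤ p j ∧ p j < 1/t1}).indicator (fun _ => (1:ℝ≥0∞)) k)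
      = ENNReal.ofReal ((rhoBar p (n:ℝ) : ℝ) - (rhoBar p t1 : ℝ)) := by
    have := aux_tsum_if_const hfinM 1
    rw [this, mul_one, hrdiff, ENNReal.ofReal_natCast]
  have hfinS : {j | 1/t1 ≤ p j}.Finite := aux_finite hsum (by positivity)
  have hS3 : (∑' k, ({j | 1/t1 ≤ p j}).indicator (fun _ => ENNReal.ofReal (2 / L)) k)
      ≤ ENNReal.ofReal (2 * (rhoBar p (n:ℝ) : ℝ) / L) := by
    rw [aux_tsum_if_const hfinS _]
    have hsub : {j | 1/t1 ≤ p j} ⊆ {j | 1/(n:ℝ) ≤ p j} :=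
      fun j hj => le_trans (one_div_le_one_div_of_le ht1pos ht1len) hj
    have hcard : (({j | 1/t1 ≤ p j} : Set ℕ).ncard : ℝ≥0∞) ≤ ((rhoBar p (n:ℝ) : ℕ) : ℝ≥0∞) := by
      rw [rhoBar_eq]
      exact_mod_cast Set.ncard_le_ncard hsub (aux_finite hsum (by positivity))
    calc (({j | 1/t1 ≤ p j} : Set ℕ).ncard : ℝ≥0∞) * ENNReal.ofReal (2 / L)
        ≤ ((rhoBar p (n:ℝ) : ℕ) : ℝ≥0∞) * ENNReal.ofReal (2 / L) := mul_le_mul_left hcard _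
      _ = ENNReal.ofReal ((rhoBar p (n:ℝ) : ℝ)) * ENNReal.ofReal (2 / L) := by
          rw [ENNReal.ofReal_natCast]
      _ = ENNReal.ofReal ((rhoBar p (n:ℝ) : ℝ) * (2 / L)) :=
          (ENNReal.ofReal_mul (Nat.cast_nonneg _)).symm
      _ = ENNReal.ofReal (2 * (rhoBar p (n:ℝ) : ℝ) / L) := by
          congr 1
          ring
  -- RHS nonneg facts
  have hmono := rhoBar_mono hsum ht1pos ht1len
  have hmono' : (rhoBar p t1 : ℝ) ≤ (rhoBar p (n:ℝ) : ℝ) := by exact_mod_cast hmono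
  have hT1nn : 0 ≤ 4 * ((rhoBar p (n:ℝ) : ℝ) - (rhoBar p t1 : ℝ)) := by linarith
  have hT2nn : 0 ≤ 2 * (rhoBar p (n:ℝ) : ℝ) / L := by positivity
  have hT3nn : 0 ≤ ∫ x in Set.Ioi (1:ℝ),
      x ^ (-2 : ℤ) * ((rhoBar p ((n:ℝ) * x) : ℝ) - (rhoBar p (n:ℝ) : ℝ)) := by
    apply setIntegral_nonneg measurableSet_Ioi
    intro x hx
    have hx1 : (1:ℝ) < x := hx
    have h1 : rhoBar p (n:ℝ) ≤ rhoBar p ((n:ℝ) * x) := rhoBar_mono hsum hnR0 (by nlinarith)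
    have h2 : (0:ℝ) ≤ (rhoBar p ((n:ℝ) * x) : ℝ) - (rhoBar p (n:ℝ) : ℝ) := by
      have h3 : (rhoBar p (n:ℝ) : ℝ) ≤ (rhoBar p ((n:ℝ) * x) : ℝ) := by exact_mod_cast h1
      linarith
    apply mul_nonneg _ h2
    rw [zpow_neg]
    positivity
  -- final assembly
  calc (∫⁻ ω, ENNReal.ofReal (⨆ s ∈ Set.Icc (0 : ℝ) 1,
        |((Kbar X n s ω : ℝ)) - (rhoBar p ((n : ℝ) ^ s) : ℝ)|) ∂P)
      ≤ ENNReal.ofReal D + ∑' k, P {ω | k ∈ BadSet p X n ω} := hmain1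
    _ ≤ ENNReal.ofReal D +
        ((∑' k, (if p k < 1/(n:ℝ) then ENNReal.ofReal ((n:ℝ) * p k) else 0))
        + (∑' k, ({j | 1/(n:ℝ) ≤ p j ∧ p j < 1/t1}).indicator (fun _ => (1:ℝ≥0∞)) k)
        + (∑' k, ({j | 1/t1 ≤ p j}).indicator (fun _ => ENNReal.ofReal (2 / L)) k)) :=
        add_le_add_right hsplit _
    _ ≤ ENNReal.ofReal D +
        (ENNReal.ofReal (∫ x in Set.Ioi (1:ℝ),
            x ^ (-2 : ℤ) * ((rhoBar p ((n:ℝ) * x) : ℝ) - (rhoBar p (n:ℝ) : ℝ)))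
        + ENNReal.ofReal ((rhoBar p (n:ℝ) : ℝ) - (rhoBar p t1 : ℝ))
        + ENNReal.ofReal (2 * (rhoBar p (n:ℝ) : ℝ) / L)) :=
        add_le_add_right (add_le_add (add_le_add hS1 (le_of_eq hS2)) hS3) _
    _ ≤ ENNReal.ofReal (2 * D) +
        (ENNReal.ofReal (∫ x in Set.Ioi (1:ℝ),
            x ^ (-2 : ℤ) * ((rhoBar p ((n:ℝ) * x) : ℝ) - (rhoBar p (n:ℝ) : ℝ)))
        + ENNReal.ofReal (4 * ((rhoBar p (n:ℝ) : ℝ) - (rhoBar p t1 : ℝ)))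
        + ENNReal.ofReal (2 * (rhoBar p (n:ℝ) : ℝ) / L)) := by
        apply add_le_add (ENNReal.ofReal_le_ofReal (by linarith))
        exact add_le_add (add_le_add le_rfl (ENNReal.ofReal_le_ofReal (by linarith))) le_rfl
    _ = ENNReal.ofReal
        (4 * ((rhoBar p (n:ℝ) : ℝ) - (rhoBar p t1 : ℝ))
          + 2 * (rhoBar p (n:ℝ) : ℝ) / L
          + (∫ x in Set.Ioi (1:ℝ),
              x ^ (-2 : ℤ) * ((rhoBar p ((n:ℝ) * x) : ℝ) - (rhoBar p (n:ℝ) : ℝ)))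
          + 2 * D) := by
        rw [← ENNReal.ofReal_add hT3nn hT1nn, ← ENNReal.ofReal_add (by linarith) hT2nn,
          ← ENNReal.ofReal_add (by linarith : (0:ℝ) ≤ 2 * D) (by linarith)]
        congr 1
        ring
end
end

section
/- For every sequence $(p_k)_{k\ge1}$ of strictly positive reals with $\sum_{k\ge1}p_k=1$ and every real $t>0$, $\sum_{k\ge1} t\,p_k\,\mathbf{1}\{t p_k<1\} = \int_1^\infty x^{-2}\big(\bar\rho(tx)-\bar\rho(t)\big)\,\mathrm{d}x$. -/
open MeasureTheory Set

noncomputable section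

lemma finite_ge_aux (p : ℕ → ℝ) (hs : Summable p) {ε : ℝ} (hε : 0 < ε) :
    {k : ℕ | p k ≥ ε}.Finite := by
  have h := hs.tendsto_cofinite_zero
  have h2 : {k : ℕ | ¬ p k < ε}.Finite := by
    simpa [Filter.eventually_cofinite] using h.eventually_lt_const hε
  exact h2.subset (fun k hk => not_lt.2 hk)

theorem tsum_small_probabilities_eq_integral
    (p : ℕ → ℝ) (hp : ∀ k, 0 < p k) (hsum : (∑' k, p k) = 1) (t : ℝ) (ht : 0 < t) :
    (∑' k, if t * p k < 1 then t * p k else 0)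
      = ∫ x in Set.Ioi (1 : ℝ), x ^ (-2 : ℤ) * ((rhoBar p (t * x) : ℝ) - (rhoBar p t : ℝ)) := by
  have hs : Summable p := by
    by_contra h
    rw [tsum_eq_zero_of_not_summable h] at hsum
    norm_num at hsum
  set g : ℕ → ℝ → ℝ := fun k x => if t * p k < 1 ∧ 1 / (t * p k) ≤ x then x ^ (-2 : ℤ) else 0
    with hg
  have hnonneg : ∀ k x, 0 ≤ g k x := by
    intro k x
    simp only [hg]
    split
    · rw [zpow_neg]
      positivity
    · exact le_refl 0
  have hgind : ∀ k, t * p k < 1 → ∀ x : ℝ,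
      g k x = Set.indicator (Set.Ici (1 / (t * p k))) (fun y => y ^ (-2 : ℤ)) x := by
    intro k hc x
    simp [hg, Set.indicator_apply, Set.mem_Ici, hc]
  have hgzero : ∀ k, ¬ t * p k < 1 → g k = fun _ => 0 := by
    intro k hc
    funext x
    simp [hg, hc]
  have hzpow_rpow : ∀ x : ℝ, 0 < x → x ^ (-2 : ℤ) = x ^ (-2 : ℝ) := by
    intro x hx
    rw [show ((-2 : ℝ)) = ((-2 : ℤ) : ℝ) by norm_num, Real.rpow_intCast]
  -- integral of each g k over Ioi 1
  have hint : ∀ k, ∫ x in Set.Ioi (1 : ℝ), g k x = if t * p k < 1 then t * p k else 0 := by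
    intro k
    have htp : 0 < t * p k := mul_pos ht (hp k)
    by_cases hc : t * p k < 1
    · rw [if_pos hc]
      set a : ℝ := 1 / (t * p k) with ha
      have ha0 : 0 < a := by positivity
      have ha1 : (1 : ℝ) < a := by rw [ha, lt_div_iff₀ htp]; linarith
      have hset : Set.Ioi (1 : ℝ) ∩ Set.Ici a = Set.Ici a :=
        Set.inter_eq_self_of_subset_right (fun x hx => lt_of_lt_of_le ha1 hx)
      calc ∫ x in Set.Ioi (1 : ℝ), g k x
          = ∫ x in Set.Ioi (1 : ℝ), Set.indicator (Set.Ici a) (fun y => y ^ (-2 : ℤ)) x := by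
            simp_rw [hgind k hc]
            rfl
        _ = ∫ x in Set.Ioi (1 : ℝ) ∩ Set.Ici a, (x : ℝ) ^ (-2 : ℤ) :=
            setIntegral_indicator measurableSet_Ici
        _ = ∫ x in Set.Ici a, (x : ℝ) ^ (-2 : ℤ) := by rw [hset]
        _ = ∫ x in Set.Ioi a, (x : ℝ) ^ (-2 : ℤ) := integral_Ici_eq_integral_Ioi
        _ = ∫ x in Set.Ioi a, (x : ℝ) ^ (-2 : ℝ) := by
            apply setIntegral_congr_fun measurableSet_Ioi
            intro x hx
            exact hzpow_rpow x (lt_trans ha0 hx)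
        _ = t * p k := by
            rw [integral_Ioi_rpow_of_lt (by norm_num) ha0,
              show (-2 : ℝ) + 1 = -1 by norm_num, Real.rpow_neg_one, ha]
            field_simp
    · rw [if_neg hc, hgzero k hc]
      simp
  have hintg : ∀ k, IntegrableOn (g k) (Set.Ioi (1 : ℝ)) := by
    intro k
    have htp : 0 < t * p k := mul_pos ht (hp k)
    by_cases hc : t * p k < 1
    · set a : ℝ := 1 / (t * p k) with ha
      have ha0 : 0 < a := by positivity
      have hI : IntegrableOn (fun x : ℝ => x ^ (-2 : ℤ)) (Set.Ici a) := by
        rw [integrableOn_Ici_iff_integrableOn_Ioi]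
        apply (integrableOn_Ioi_rpow_of_lt (show (-2 : ℝ) < -1 by norm_num) ha0).congr_fun
          _ measurableSet_Ioi
        intro x hx
        exact (hzpow_rpow x (lt_trans ha0 hx)).symm
      have hind : Integrable (Set.indicator (Set.Ici a) (fun y : ℝ => y ^ (-2 : ℤ))) :=
        hI.integrable_indicator measurableSet_Ici
      have hfun : g k = Set.indicator (Set.Ici a) (fun y : ℝ => y ^ (-2 : ℤ)) :=
        funext (hgind k hc)
      rw [hfun]
      exact hind.integrableOn
    · rw [hgzero k hc]
      exact integrableOn_zero
  have hsm : Summable fun k => ∫ x in Set.Ioi (1 : ℝ), ‖g k x‖ := by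
    have heq : ∀ k, (∫ x in Set.Ioi (1 : ℝ), ‖g k x‖)
        = if t * p k < 1 then t * p k else 0 := by
      intro k
      rw [← hint k]
      congr 1
      funext x
      rw [Real.norm_eq_abs, abs_of_nonneg (hnonneg k x)]
    simp_rw [heq]
    apply Summable.of_nonneg_of_le (fun k => ?_) (fun k => ?_) (hs.mul_left t)
    · split
      · exact le_of_lt (mul_pos ht (hp k))
      · exact le_refl 0
    · split
      · exact le_refl _
      · exact le_of_lt (mul_pos ht (hp k))
  -- pointwise equality on Ioi 1
  have hpw : ∀ x ∈ Set.Ioi (1 : ℝ),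
      x ^ (-2 : ℤ) * ((rhoBar p (t * x) : ℝ) - (rhoBar p t : ℝ)) = ∑' k, g k x := by
    intro x hx
    have hx1 : (1 : ℝ) < x := hx
    have hx0 : (0 : ℝ) < x := lt_trans one_pos hx1
    set A : Set ℕ := {k : ℕ | p k ≥ 1 / (t * x)} with hA'
    set B : Set ℕ := {k : ℕ | p k ≥ 1 / t} with hB'
    have hAfin : A.Finite := finite_ge_aux p hs (by positivity)
    have hBfin : B.Finite := finite_ge_aux p hs (by positivity)
    have hBA : B ⊆ A := by
      intro k hk
      have h1 : 1 / (t * x) ≤ 1 / t := by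
        apply one_div_le_one_div_of_le ht
        nlinarith
      exact le_trans h1 hk
    set S : Set ℕ := {k : ℕ | t * p k < 1 ∧ 1 / (t * p k) ≤ x} with hS'
    have hSeq : S = A \ B := by
      ext k
      have htp : 0 < t * p k := mul_pos ht (hp k)
      have htx : 0 < t * x := mul_pos ht hx0
      simp only [hS', hA', hB', Set.mem_setOf_eq, Set.mem_diff, ge_iff_le, not_le]
      constructor
      · rintro ⟨h1, h2⟩
        rw [div_le_iff₀ htp] at h2
        refine ⟨?_, ?_⟩
        · rw [div_le_iff₀ htx]; nlinarith
        · rw [lt_div_iff₀ ht]; nlinarith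
      · rintro ⟨h1, h2⟩
        rw [div_le_iff₀ htx] at h1
        rw [lt_div_iff₀ ht] at h2
        refine ⟨?_, ?_⟩
        · nlinarith
        · rw [div_le_iff₀ htp]; nlinarith
    have hSfin : S.Finite := hSeq ▸ (hAfin.diff : (A \ B).Finite)
    have hrho : (rhoBar p (t * x) : ℝ) - (rhoBar p t : ℝ) = (S.ncard : ℝ) := by
      have h1 : rhoBar p (t * x) = A.ncard := Nat.card_coe_set_eq A
      have h2 : rhoBar p t = B.ncard := Nat.card_coe_set_eq B
      have h3 : (A \ B).ncard = A.ncard - B.ncard := Set.ncard_diff hBA hBfin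
      have h4 : B.ncard ≤ A.ncard := Set.ncard_le_ncard hBA hAfin
      rw [h1, h2, hSeq, h3, Nat.cast_sub h4]
    have hts : (∑' k, g k x) = (S.ncard : ℝ) * x ^ (-2 : ℤ) := by
      have hmem : ∀ k, g k x = if k ∈ S then x ^ (-2 : ℤ) else 0 := by
        intro k; simp [hg, hS', Set.mem_setOf_eq]
      have h1 : (∑' k, g k x) = ∑ k ∈ hSfin.toFinset, g k x := by
        apply tsum_eq_sum
        intro k hk
        rw [hmem k, if_neg]
        simpa using hk
      rw [h1]
      have h2 : ∀ k ∈ hSfin.toFinset, g k x = x ^ (-2 : ℤ) := by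
        intro k hk
        rw [hmem k, if_pos]
        simpa using hk
      rw [Finset.sum_congr rfl h2, Finset.sum_const, nsmul_eq_mul,
        Set.ncard_eq_toFinset_card S hSfin]
    rw [hrho, hts]; ring
  calc (∑' k, if t * p k < 1 then t * p k else 0)
      = ∑' k, ∫ x in Set.Ioi (1 : ℝ), g k x := by simp_rw [hint]
    _ = ∫ x in Set.Ioi (1 : ℝ), ∑' k, g k x :=
        integral_tsum_of_summable_integral_norm hintg hsm
    _ = ∫ x in Set.Ioi (1 : ℝ), x ^ (-2 : ℤ) * ((rhoBar p (t * x) : ℝ) - (rhoBar p t : ℝ)) := by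
        apply setIntegral_congr_fun measurableSet_Ioi
        intro x hx
        exact (hpw x hx).symm
end
end

section
/- In Karlin's occupancy scheme with probabilities $(p_k)_{k\ge1}$, for every $n\in\mathbb{N}$: $\mathbb{E}\,\#\{k\in\mathbb{N}: \bar Z_{n,k}\ge 1 \text{ and } n p_k<1\} = \sum_{k\ge1}\big(1-(1-p_k)^n\big)\mathbf{1}\{n p_k<1\} \le \int_1^\infty x^{-2}\big(\bar\rho(nx)-\bar\rho(n)\big)\,\mathrm{d}x$. -/
open MeasureTheory ProbabilityTheory Set
open scoped ENNReal

noncomputable section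

lemma tsum_indicator_const_finite {S : Set ℕ} (hS : S.Finite) (c : ℝ≥0∞) :
    ∑' k, S.indicator (fun _ => c) k = (Nat.card S : ℝ≥0∞) * c := by
  rw [tsum_eq_sum (s := hS.toFinset)
    (fun k hk => Set.indicator_of_notMem (by simpa using hk) _)]
  rw [Finset.sum_congr rfl fun k hk => Set.indicator_of_mem (hS.mem_toFinset.mp hk) _]
  rw [Finset.sum_const, Nat.card_coe_set_eq, Set.ncard_eq_toFinset_card _ hS, nsmul_eq_mul]

theorem expected_count_of_underfilled_boxes
    (p : ℕ → ℝ) (hp : ∀ k, 0 < p k) (hsum : (∑' k, p k) = 1)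
    (Ω : Type) (_ : MeasurableSpace Ω) (P : Measure Ω) (hP : IsProbabilityMeasure P)
    (X : ℕ → Ω → ℕ) (hXmeas : ∀ i, Measurable (X i))
    (hindep : iIndepFun X P)
    (hlaw : ∀ i k, P {ω | X i ω = k} = ENNReal.ofReal (p k))
    (n : ℕ) :
    (∫⁻ ω, (Nat.card {k : ℕ | 1 ≤ Zbar X n k ω ∧ (n : ℝ) * p k < 1} : ℝ≥0∞) ∂P)
        = ENNReal.ofReal (∑' k, if (n : ℝ) * p k < 1 then 1 - (1 - p k) ^ n else 0)
      ∧ ENNReal.ofReal (∑' k, if (n : ℝ) * p k < 1 then 1 - (1 - p k) ^ n else 0)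
          ≤ ENNReal.ofReal (∫ x in Set.Ioi (1 : ℝ),
              x ^ (-2 : ℤ) * ((rhoBar p (n * x) : ℝ) - (rhoBar p n : ℝ))) := by
  classical
  have hsummable : Summable p := by
    by_contra h
    rw [tsum_eq_zero_of_not_summable h] at hsum
    norm_num at hsum
  have hple : ∀ k, p k ≤ 1 := by
    intro k
    have := hsummable.le_tsum k (fun j _ => (hp j).le)
    linarith
  have hfin : ∀ c : ℝ, 0 < c → {k : ℕ | c ≤ p k}.Finite := by
    intro c hc
    have h := hsummable.tendsto_cofinite_zero.eventually_lt_const hc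
    rw [Filter.eventually_cofinite] at h
    exact h.subset (fun k hk => by simpa using not_lt.mpr hk)
  set s : ℕ → ℝ := fun k => if (n : ℝ) * p k < 1 then 1 - (1 - p k) ^ n else 0 with hs_def
  have hpow_le_one : ∀ k, (1 - p k) ^ n ≤ 1 :=
    fun k => pow_le_one₀ (by linarith [hple k]) (by linarith [hp k])
  have hs_nonneg : ∀ k, 0 ≤ s k := by
    intro k
    simp only [hs_def]
    split
    · linarith [hpow_le_one k]
    · exact le_rfl
  have hbern : ∀ k, 1 - (1 - p k) ^ n ≤ (n : ℝ) * p k := by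
    intro k
    have h := one_add_mul_le_pow (a := -p k) (by linarith [hple k]) n
    have : 1 + (n : ℝ) * (-p k) ≤ (1 - p k) ^ n := by
      simpa [sub_eq_add_neg] using h
    linarith
  have hs_le : ∀ k, s k ≤ (n : ℝ) * p k := by
    intro k
    simp only [hs_def]
    split
    · exact hbern k
    · exact mul_nonneg (Nat.cast_nonneg n) (hp k).le
  have hs_summable : Summable s :=
    Summable.of_nonneg_of_le hs_nonneg hs_le (hsummable.mul_left _)
  -- measurability of Zbar
  have hZmeas : ∀ k, Measurable fun ω => Zbar X n k ω := by
    intro k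
    have heq : (fun ω => Zbar X n k ω)
        = fun ω => ∑ i ∈ Finset.range n, if X i ω = k then 1 else 0 := by
      funext ω; unfold Zbar; rw [Finset.card_filter]
    rw [heq]
    exact Finset.measurable_sum _ fun i _ =>
      Measurable.ite ((hXmeas i) (measurableSet_singleton k)) measurable_const measurable_const
  have hEmeas : ∀ k, MeasurableSet {ω | 1 ≤ Zbar X n k ω} := by
    intro k
    exact (hZmeas k) (by trivial : MeasurableSet {m : ℕ | 1 ≤ m})
  have hE0meas : ∀ k, MeasurableSet {ω | Zbar X n k ω = 0} := by
    intro k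
    exact (hZmeas k) (by trivial : MeasurableSet {m : ℕ | m = 0})
  -- probability that box k is empty
  have hzero : ∀ k, P {ω | Zbar X n k ω = 0} = ENNReal.ofReal ((1 - p k) ^ n) := by
    intro k
    have hset : {ω | Zbar X n k ω = 0} = ⋂ i ∈ Finset.range n, X i ⁻¹' ({k}ᶜ) := by
      ext ω
      simp [Zbar, Finset.card_eq_zero, Finset.filter_eq_empty_iff]
    rw [hset, hindep.measure_inter_preimage_eq_mul (Finset.range n)
      (fun i _ => (measurableSet_singleton k).compl)]
    have hXc : ∀ i, P (X i ⁻¹' ({k}ᶜ)) = ENNReal.ofReal (1 - p k) := by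
      intro i
      have h1 : X i ⁻¹' ({k}ᶜ) = (X i ⁻¹' {k})ᶜ := rfl
      have h2 : P (X i ⁻¹' {k}) = ENNReal.ofReal (p k) := hlaw i k
      rw [h1, measure_compl ((hXmeas i) (measurableSet_singleton k)) (measure_ne_top P _),
        h2, measure_univ, ENNReal.ofReal_sub _ (hp k).le, ENNReal.ofReal_one]
    rw [Finset.prod_congr rfl (fun i _ => hXc i), Finset.prod_const, Finset.card_range,
      ← ENNReal.ofReal_pow (by linarith [hple k])]
  have hone : ∀ k, P {ω | 1 ≤ Zbar X n k ω} = ENNReal.ofReal (1 - (1 - p k) ^ n) := by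
    intro k
    have hc : {ω | 1 ≤ Zbar X n k ω} = {ω | Zbar X n k ω = 0}ᶜ := by
      ext ω; simp [Nat.one_le_iff_ne_zero]
    rw [hc, measure_compl (hE0meas k) (measure_ne_top P _), measure_univ, hzero k,
      ENNReal.ofReal_sub _ (pow_nonneg (by linarith [hple k]) n), ENNReal.ofReal_one]
  -- the event sets
  set e : ℕ → Set Ω := fun k => {ω | 1 ≤ Zbar X n k ω ∧ (n : ℝ) * p k < 1} with he_def
  have he_meas : ∀ k, MeasurableSet (e k) := by
    intro k
    by_cases h : (n : ℝ) * p k < 1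
    · have : e k = {ω | 1 ≤ Zbar X n k ω} := by ext ω; simp [he_def, h]
      rw [this]; exact hEmeas k
    · have : e k = ∅ := by ext ω; simp [he_def, h]
      rw [this]; exact MeasurableSet.empty
  have hPe : ∀ k, P (e k) = ENNReal.ofReal (s k) := by
    intro k
    by_cases h : (n : ℝ) * p k < 1
    · have h1 : e k = {ω | 1 ≤ Zbar X n k ω} := by ext ω; simp [he_def, h]
      rw [h1, hone k]
      simp [hs_def, h]
    · have h1 : e k = ∅ := by ext ω; simp [he_def, h]
      rw [h1]
      simp [hs_def, h]
  -- pointwise counting identity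
  have hcount : ∀ ω : Ω,
      ((Nat.card {k : ℕ | 1 ≤ Zbar X n k ω ∧ (n : ℝ) * p k < 1}) : ℝ≥0∞)
        = ∑' k, (e k).indicator (fun _ => (1 : ℝ≥0∞)) ω := by
    intro ω
    have hSfin : {k : ℕ | 1 ≤ Zbar X n k ω ∧ (n : ℝ) * p k < 1}.Finite := by
      refine ((Finset.range n).image fun i => X i ω).finite_toSet.subset ?_
      intro k hk
      obtain ⟨i, hi⟩ := Finset.card_pos.mp (lt_of_lt_of_le zero_lt_one hk.1)
      obtain ⟨hi1, hi2⟩ := Finset.mem_filter.mp hi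
      exact Finset.mem_image.mpr ⟨i, hi1, hi2⟩
    have heq : ∀ k, (e k).indicator (fun _ => (1 : ℝ≥0∞)) ω
        = ({k : ℕ | 1 ≤ Zbar X n k ω ∧ (n : ℝ) * p k < 1}).indicator
            (fun _ => (1 : ℝ≥0∞)) k := by
      intro k
      simp only [Set.indicator_apply, he_def, Set.mem_setOf_eq]
    rw [tsum_congr heq, tsum_indicator_const_finite hSfin, mul_one]
  -- Part 1
  have part1 : (∫⁻ ω, (Nat.card {k : ℕ | 1 ≤ Zbar X n k ω ∧ (n : ℝ) * p k < 1} : ℝ≥0∞) ∂P)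
      = ENNReal.ofReal (∑' k, s k) := by
    calc (∫⁻ ω, (Nat.card {k : ℕ | 1 ≤ Zbar X n k ω ∧ (n : ℝ) * p k < 1} : ℝ≥0∞) ∂P)
        = ∫⁻ ω, ∑' k, (e k).indicator (fun _ => (1 : ℝ≥0∞)) ω ∂P := lintegral_congr hcount
      _ = ∑' k, ∫⁻ ω, (e k).indicator (fun _ => (1 : ℝ≥0∞)) ω ∂P :=
          lintegral_tsum fun k =>
            ((measurable_const.indicator (he_meas k)).aemeasurable)
      _ = ∑' k, P (e k) := by
          refine tsum_congr fun k => ?_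
          exact lintegral_indicator_one (he_meas k)
      _ = ∑' k, ENNReal.ofReal (s k) := tsum_congr hPe
      _ = ENNReal.ofReal (∑' k, s k) :=
          (ENNReal.ofReal_tsum_of_nonneg hs_nonneg hs_summable).symm
  refine ⟨part1, ?_⟩
  -- Part 2
  rcases Nat.eq_zero_or_pos n with hn | hn
  · subst hn
    simp only [hs_def, Nat.cast_zero, zero_mul, zero_lt_one, if_true, pow_zero, sub_self,
      tsum_zero, ENNReal.ofReal_zero]
    exact zero_le
  have hn' : (0 : ℝ) < n := by exact_mod_cast hn
  have hq_pos : ∀ k, 0 < (n : ℝ) * p k := fun k => mul_pos hn' (hp k)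
  -- the per-box functions
  set G : ℕ → ℝ → ℝ≥0∞ := fun k x =>
    if (n : ℝ) * p k < 1 ∧ 1 / ((n : ℝ) * p k) ≤ x then ENNReal.ofReal (x ^ (-2 : ℤ)) else 0
    with hG_def
  have hzpow_meas : Measurable fun x : ℝ => ENNReal.ofReal (x ^ (-2 : ℤ)) := by
    have : (fun x : ℝ => x ^ (-2 : ℤ)) = fun x : ℝ => (x ^ 2)⁻¹ := by
      funext x
      rw [zpow_neg, ← zpow_natCast x 2]
      norm_num
    exact ENNReal.measurable_ofReal.comp (by rw [this]; exact (measurable_id.pow_const 2).inv)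
  have hG_meas : ∀ k, Measurable (G k) := by
    intro k
    by_cases h : (n : ℝ) * p k < 1
    · have heq : G k = (Set.Ici (1 / ((n : ℝ) * p k))).indicator
          fun x => ENNReal.ofReal (x ^ (-2 : ℤ)) := by
        funext x
        simp only [hG_def, Set.indicator_apply, Set.mem_Ici, h, true_and]
      rw [heq]
      exact hzpow_meas.indicator measurableSet_Ici
    · have : G k = fun _ => 0 := by funext x; simp [hG_def, h]
      rw [this]; exact measurable_const
  -- pointwise identity on Ioi 1
  have key : ∀ x ∈ Set.Ioi (1 : ℝ),
      ENNReal.ofReal (x ^ (-2 : ℤ) * ((rhoBar p (n * x) : ℝ) - (rhoBar p n : ℝ)))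
        = ∑' k, G k x := by
    intro x hx
    rw [Set.mem_Ioi] at hx
    have hx0 : (0 : ℝ) < x := by linarith
    have hnx : (0 : ℝ) < (n : ℝ) * x := mul_pos hn' hx0
    set A := {k : ℕ | 1 / ((n : ℝ) * x) ≤ p k} with hA_def
    set B := {k : ℕ | 1 / (n : ℝ) ≤ p k} with hB_def
    have hA_fin : A.Finite := hfin _ (by positivity)
    have hB_fin : B.Finite := hfin _ (by positivity)
    have hBA : B ⊆ A := by
      intro k hk
      have h1 : 1 / ((n : ℝ) * x) ≤ 1 / (n : ℝ) := by
        apply one_div_le_one_div_of_le hn'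
        nlinarith
      exact le_trans h1 hk
    have hrA : rhoBar p ((n : ℝ) * x) = Nat.card A := rfl
    have hrB : rhoBar p (n : ℝ) = Nat.card B := rfl
    have hcardAB : (rhoBar p ((n : ℝ) * x) : ℝ) - (rhoBar p (n : ℝ) : ℝ)
        = ((A \ B).ncard : ℝ) := by
      rw [hrA, hrB, Nat.card_coe_set_eq, Nat.card_coe_set_eq,
        ← Set.ncard_diff_add_ncard_of_subset hBA hA_fin]
      push_cast
      ring
    have hmem : ∀ k, k ∈ A \ B ↔ ((n : ℝ) * p k < 1 ∧ 1 / ((n : ℝ) * p k) ≤ x) := by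
      intro k
      simp only [Set.mem_diff, hA_def, hB_def, Set.mem_setOf_eq, not_le]
      constructor
      · rintro ⟨h1, h2⟩
        rw [lt_div_iff₀ hn'] at h2
        rw [div_le_iff₀ hnx] at h1
        refine ⟨by nlinarith, ?_⟩
        rw [div_le_iff₀ (hq_pos k)]
        nlinarith
      · rintro ⟨h1, h2⟩
        rw [div_le_iff₀ (hq_pos k)] at h2
        refine ⟨?_, ?_⟩
        · rw [div_le_iff₀ hnx]
          nlinarith
        · rw [lt_div_iff₀ hn']
          nlinarith
    have hGk : ∀ k, G k x = (A \ B).indicator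
        (fun _ => ENNReal.ofReal (x ^ (-2 : ℤ))) k := by
      intro k
      by_cases h : k ∈ A \ B
      · rw [Set.indicator_of_mem h]
        simp only [hG_def]
        rw [if_pos ((hmem k).mp h)]
      · rw [Set.indicator_of_notMem h]
        simp only [hG_def]
        rw [if_neg (fun hc => h ((hmem k).mpr hc))]
    rw [tsum_congr hGk, tsum_indicator_const_finite (hA_fin.subset Set.diff_subset) _, hcardAB]
    rw [Nat.card_coe_set_eq]
    have hxz : (0 : ℝ) ≤ x ^ (-2 : ℤ) := zpow_nonneg hx0.le _
    rw [mul_comm (x ^ (-2 : ℤ)), ENNReal.ofReal_mul (by positivity), ENNReal.ofReal_natCast]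
  -- value of each integral
  have hGint : ∀ k, (∫⁻ x in Set.Ioi (1 : ℝ), G k x)
      = if (n : ℝ) * p k < 1 then ENNReal.ofReal ((n : ℝ) * p k) else 0 := by
    intro k
    by_cases h : (n : ℝ) * p k < 1
    · set a : ℝ := 1 / ((n : ℝ) * p k) with ha_def
      have ha1 : 1 < a := by
        rw [ha_def, lt_div_iff₀ (hq_pos k)]
        linarith
      have ha0 : (0 : ℝ) < a := by linarith
      have hGk : G k = (Set.Ici a).indicator fun x => ENNReal.ofReal (x ^ (-2 : ℤ)) := by
        funext x
        simp only [hG_def, ha_def, Set.indicator_apply, Set.mem_Ici, h, true_and]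
      rw [if_pos h, hGk]
      rw [lintegral_indicator measurableSet_Ici]
      rw [Measure.restrict_restrict measurableSet_Ici]
      have hinter : Set.Ici a ∩ Set.Ioi (1 : ℝ) = Set.Ici a :=
        Set.inter_eq_left.mpr (fun y hy => lt_of_lt_of_le ha1 hy)
      rw [hinter, ← Measure.restrict_congr_set Ioi_ae_eq_Ici]
      have hint : IntegrableOn (fun x : ℝ => x ^ (-2 : ℤ)) (Set.Ioi a) := by
        refine (integrableOn_Ioi_rpow_of_lt (by norm_num : (-2 : ℝ) < -1) ha0).congr_fun
          ?_ measurableSet_Ioi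
        intro y hy
        show y ^ (-2 : ℝ) = y ^ (-2 : ℤ)
        rw [show ((-2 : ℝ)) = ((-2 : ℤ) : ℝ) by norm_num, Real.rpow_intCast]
      rw [← ofReal_integral_eq_lintegral_ofReal hint]
      · congr 1
        have : ∫ x in Set.Ioi a, (x : ℝ) ^ (-2 : ℤ) = ∫ x in Set.Ioi a, x ^ (-2 : ℝ) := by
          refine setIntegral_congr_fun measurableSet_Ioi fun y hy => ?_
          show y ^ (-2 : ℤ) = y ^ (-2 : ℝ)
          rw [show ((-2 : ℝ)) = ((-2 : ℤ) : ℝ) by norm_num, Real.rpow_intCast]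
        rw [this, integral_Ioi_rpow_of_lt (by norm_num) ha0]
        rw [ha_def]
        norm_num
        rw [Real.rpow_neg_one]
        simp
      · filter_upwards [ae_restrict_mem measurableSet_Ioi] with y hy
        rw [Set.mem_Ioi] at hy
        positivity
    · rw [if_neg h]
      have : G k = fun _ => 0 := by funext x; simp [hG_def, h]
      rw [this, lintegral_zero]
  set L : ℝ≥0∞ := ∑' k, if (n : ℝ) * p k < 1 then ENNReal.ofReal ((n : ℝ) * p k) else 0
    with hL_def
  have hL_lt : L ≠ ⊤ := by
    have hle : L ≤ ∑' k, ENNReal.ofReal ((n : ℝ) * p k) := by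
      refine ENNReal.tsum_le_tsum fun k => ?_
      split
      · exact le_refl _
      · exact zero_le
    rw [← ENNReal.ofReal_tsum_of_nonneg (fun k => (hq_pos k).le)
      (hsummable.mul_left _)] at hle
    exact ne_top_of_le_ne_top ENNReal.ofReal_ne_top hle
  -- the lintegral of the RHS integrand equals L
  have hlint : (∫⁻ x in Set.Ioi (1 : ℝ),
      ENNReal.ofReal (x ^ (-2 : ℤ) * ((rhoBar p (n * x) : ℝ) - (rhoBar p n : ℝ)))) = L := by
    rw [setLIntegral_congr_fun measurableSet_Ioi key,
      lintegral_tsum fun k => (hG_meas k).aemeasurable, hL_def]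
    exact tsum_congr hGint
  -- monotonicity of rhoBar-type counts
  have hrho_mono : ∀ t u : ℝ, 0 < t → t ≤ u → rhoBar p t ≤ rhoBar p u := by
    intro t u ht htu
    have hu : 0 < u := lt_of_lt_of_le ht htu
    apply Nat.card_mono
    · exact (hfin _ (by positivity)).subset (fun k hk => hk)
    · intro k hk
      exact le_trans (one_div_le_one_div_of_le ht htu) hk
  -- nonnegativity of RHS integrand on Ioi 1
  have hg_nn : 0 ≤ᵐ[volume.restrict (Set.Ioi (1 : ℝ))]
      fun x => x ^ (-2 : ℤ) * ((rhoBar p (n * x) : ℝ) - (rhoBar p n : ℝ)) := by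
    filter_upwards [ae_restrict_mem measurableSet_Ioi] with x hx
    rw [Set.mem_Ioi] at hx
    have hx0 : (0 : ℝ) < x := by linarith
    have hmono : rhoBar p (n : ℝ) ≤ rhoBar p ((n : ℝ) * x) := by
      apply hrho_mono _ _ hn'
      nlinarith
    have : (rhoBar p (n : ℝ) : ℝ) ≤ (rhoBar p ((n : ℝ) * x) : ℝ) := by exact_mod_cast hmono
    have hz : (0 : ℝ) ≤ x ^ (-2 : ℤ) := zpow_nonneg hx0.le _
    simp only [Pi.zero_apply]
    exact mul_nonneg hz (by linarith)
  -- measurability of RHS integrand on Ioi 1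
  have hg_meas : AEMeasurable
      (fun x => x ^ (-2 : ℤ) * ((rhoBar p (n * x) : ℝ) - (rhoBar p n : ℝ)))
      (volume.restrict (Set.Ioi (1 : ℝ))) := by
    have hr_mono : Monotone fun x : ℝ => ((rhoBar p ((n : ℝ) * max x 1) : ℕ) : ℝ) := by
      intro x y hxy
      have h1 : (0 : ℝ) < (n : ℝ) * max x 1 := by
        have : (1 : ℝ) ≤ max x 1 := le_max_right x 1
        positivity
      have := hrho_mono ((n : ℝ) * max x 1) ((n : ℝ) * max y 1) h1
        (by
          have : max x 1 ≤ max y 1 := max_le_max hxy le_rfl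
          nlinarith [le_max_right x (1:ℝ)])
      exact Nat.cast_le.mpr this
    have hzm : Measurable fun x : ℝ => x ^ (-2 : ℤ) := by
      have : (fun x : ℝ => x ^ (-2 : ℤ)) = fun x : ℝ => (x ^ 2)⁻¹ := by
        funext x
        rw [zpow_neg, ← zpow_natCast x 2]
        norm_num
      rw [this]; exact (measurable_id.pow_const 2).inv
    have hm : Measurable fun x : ℝ =>
        x ^ (-2 : ℤ) * (((rhoBar p ((n : ℝ) * max x 1) : ℕ) : ℝ) - (rhoBar p n : ℝ)) :=
      hzm.mul (hr_mono.measurable.sub measurable_const)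
    refine hm.aemeasurable.congr ?_
    filter_upwards [ae_restrict_mem measurableSet_Ioi] with x hx
    rw [Set.mem_Ioi] at hx
    rw [max_eq_left hx.le]
  -- conclude
  have hint_eq : ENNReal.ofReal (∫ x in Set.Ioi (1 : ℝ),
      x ^ (-2 : ℤ) * ((rhoBar p (n * x) : ℝ) - (rhoBar p n : ℝ))) = L := by
    rw [integral_eq_lintegral_of_nonneg_ae hg_nn hg_meas.aestronglyMeasurable, hlint,
      ENNReal.ofReal_toReal hL_lt]
  rw [hint_eq, ENNReal.ofReal_tsum_of_nonneg hs_nonneg hs_summable, hL_def]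
  refine ENNReal.tsum_le_tsum fun k => ?_
  simp only [hs_def]
  by_cases h : (n : ℝ) * p k < 1
  · rw [if_pos h, if_pos h]
    exact ENNReal.ofReal_le_ofReal (hbern k)
  · rw [if_neg h, if_neg h]
    simp
end
end

section
/- Let $V:\mathbb{R}\to[0,\infty)$ be nondecreasing and right-continuous with $V(t)=0$ for $t<0$, and suppose $b_0+b_1 t^{\omega-\varepsilon_1}\le V(t)-c\,t^{\omega}\le a_0+a_1 t^{\omega-\varepsilon_2}$ for all $t\ge 0$, where $c,\omega,a_0,a_1>0$, $0<\varepsilon_1,\varepsilon_2\le\omega$, and $b_0,b_1\in\mathbb{R}$. Define $V_1:=V$ and recursively $V_j(t):=\int_{[0,t]}V_{j-1}(t-y)\,\mathrm{d}V(y)$ for $t\ge0$ and $j\ge 2$ (Lebesgue–Stieltjes integral with respect to $V$). Set $c_j:=(c\,\Gamma(\omega+1))^j/\Gamma(\omega j+1)$. Then for every $j\ge 1$ there exist constants $a_{0,j},a_{1,j}>0$ and $b_{0,j},b_{1,j}\in\mathbb{R}$ such that $b_{0,j}+b_{1,j}t^{\omega j-\varepsilon_1}\le V_j(t)-c_j t^{\omega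 j}\le a_{0,j}+a_{1,j}t^{\omega j-\varepsilon_2}$ for all $t\ge 0$. -/
open MeasureTheory Set

noncomputable section


open MeasureTheory Set intervalIntegral

noncomputable section

namespace PBCP

lemma complex_eq_real_beta {p q : ℝ} {x : ℝ} (hx : 0 ≤ x) (hx1 : x ≤ 1) :
    (x : ℂ) ^ ((p : ℂ) - 1) * (1 - (x : ℂ)) ^ ((q : ℂ) - 1)
      = ((x ^ (p - 1) * (1 - x) ^ (q - 1) : ℝ) : ℂ) := by
  rw [Complex.ofReal_mul, Complex.ofReal_cpow hx, Complex.ofReal_cpow (by linarith)]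
  push_cast
  ring_nf

lemma rbeta_integrable01 {p q : ℝ} (hp : 0 < p) (hq : 0 < q) :
    IntervalIntegrable (fun x : ℝ => x ^ (p - 1) * (1 - x) ^ (q - 1)) volume 0 1 := by
  have hc := Complex.betaIntegral_convergent (u := (p : ℂ)) (v := (q : ℂ))
    (by simpa using hp) (by simpa using hq)
  constructor
  · have h1 : IntegrableOn (fun x : ℝ => Complex.re ((x : ℂ) ^ ((p:ℂ) - 1) * (1 - (x:ℂ)) ^ ((q:ℂ) - 1))) (Ioc 0 1) volume := hc.1.re
    apply IntegrableOn.congr_fun h1 ?_ measurableSet_Ioc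
    intro x hx
    simp only
    rw [complex_eq_real_beta hx.1.le hx.2, Complex.ofReal_re]
  · rw [Ioc_eq_empty (by norm_num : ¬ (1:ℝ) < 0)]
    exact integrableOn_empty

lemma rbeta01 {p q : ℝ} (hp : 0 < p) (hq : 0 < q) :
    ∫ x in (0:ℝ)..1, x ^ (p - 1) * (1 - x) ^ (q - 1)
      = Real.Gamma p * Real.Gamma q / Real.Gamma (p + q) := by
  have key := Complex.Gamma_mul_Gamma_eq_betaIntegral (s := (p : ℂ)) (t := (q : ℂ))
    (by simpa using hp) (by simpa using hq)
  have hbeta : Complex.betaIntegral p q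
      = ((∫ x in (0:ℝ)..1, x ^ (p - 1) * (1 - x) ^ (q - 1) : ℝ) : ℂ) := by
    rw [Complex.betaIntegral, ← intervalIntegral.integral_ofReal]
    apply intervalIntegral.integral_congr
    intro x hx
    rw [uIcc_of_le (by norm_num : (0:ℝ) ≤ 1)] at hx
    exact complex_eq_real_beta hx.1 hx.2
  rw [hbeta] at key
  have hG : Real.Gamma (p + q) ≠ 0 := (Real.Gamma_pos_of_pos (by linarith)).ne'
  have : ((Real.Gamma p * Real.Gamma q : ℝ) : ℂ)
      = ((Real.Gamma (p + q) * ∫ x in (0:ℝ)..1, x ^ (p - 1) * (1 - x) ^ (q - 1) : ℝ) : ℂ) := by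
    push_cast
    rw [← Complex.Gamma_ofReal, ← Complex.Gamma_ofReal, ← Complex.Gamma_ofReal]
    push_cast at key ⊢
    rw [key]
  have h2 := Complex.ofReal_inj.mp this
  field_simp
  linarith [h2]

lemma rbeta_integrable {p q t : ℝ} (hp : 0 < p) (hq : 0 < q) (ht : 0 < t) :
    IntervalIntegrable (fun x : ℝ => x ^ (p - 1) * (t - x) ^ (q - 1)) volume 0 t := by
  have h0 := rbeta_integrable01 hp hq
  have h1 : IntervalIntegrable
      (fun y : ℝ => t ^ (p - 1) * t ^ (q - 1) * (y ^ (p - 1) * (1 - y) ^ (q - 1)))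
      volume 0 1 := h0.const_mul _
  have h2 : IntervalIntegrable (fun y : ℝ => (t * y) ^ (p - 1) * (t - t * y) ^ (q - 1))
      volume 0 1 := by
    rw [intervalIntegrable_iff] at h1 ⊢
    apply h1.congr_fun ?_ measurableSet_uIoc
    intro y hy
    rw [uIoc_of_le (by norm_num : (0:ℝ) ≤ 1)] at hy
    simp only
    rw [Real.mul_rpow ht.le hy.1.le]
    have h4 : t - t * y = t * (1 - y) := by ring
    rw [h4, Real.mul_rpow ht.le (by linarith [hy.2])]
    ring
  have h3 := h2.comp_mul_left (c := t⁻¹)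
  rw [zero_div, one_div, inv_inv] at h3
  rw [intervalIntegrable_iff] at h3 ⊢
  apply h3.congr_fun ?_ measurableSet_uIoc
  intro x _
  field_simp

lemma rbeta {p q t : ℝ} (hp : 0 < p) (hq : 0 < q) (ht : 0 < t) :
    ∫ x in (0:ℝ)..t, x ^ (p - 1) * (t - x) ^ (q - 1)
      = Real.Gamma p * Real.Gamma q / Real.Gamma (p + q) * t ^ (p + q - 1) := by
  have hsub := intervalIntegral.integral_comp_mul_left (a := (0:ℝ)) (b := (1:ℝ))
    (f := fun x : ℝ => x ^ (p - 1) * (t - x) ^ (q - 1)) (c := t) ht.ne'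
  simp only [mul_zero, mul_one] at hsub
  have heq : ∫ y in (0:ℝ)..1, (t * y) ^ (p - 1) * (t - t * y) ^ (q - 1)
      = t ^ (p - 1) * t ^ (q - 1) * ∫ y in (0:ℝ)..1, y ^ (p - 1) * (1 - y) ^ (q - 1) := by
    rw [← intervalIntegral.integral_const_mul]
    apply intervalIntegral.integral_congr
    intro y hy
    rw [uIcc_of_le (by norm_num : (0:ℝ) ≤ 1)] at hy
    simp only
    rw [Real.mul_rpow ht.le hy.1]
    have : t - t * y = t * (1 - y) := by ring
    rw [this, Real.mul_rpow ht.le (by linarith [hy.2])]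
    ring
  rw [heq, rbeta01 hp hq] at hsub
  rw [smul_eq_mul] at hsub
  have : (∫ x in (0:ℝ)..t, x ^ (p - 1) * (t - x) ^ (q - 1))
      = t * (t ^ (p - 1) * t ^ (q - 1) * (Real.Gamma p * Real.Gamma q / Real.Gamma (p + q))) := by
    rw [hsub, ← mul_assoc, mul_inv_cancel₀ ht.ne', one_mul]
  rw [this]
  have ht1 : t * (t ^ (p-1) * t ^ (q-1)) = t ^ (p + q - 1) := by
    nth_rewrite 1 [← Real.rpow_one t]
    rw [← Real.rpow_add ht, ← Real.rpow_add ht]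
    ring_nf
  calc t * (t ^ (p-1) * t ^ (q-1) * (Real.Gamma p * Real.Gamma q / Real.Gamma (p + q)))
      = t * (t ^ (p-1) * t ^ (q-1)) * (Real.Gamma p * Real.Gamma q / Real.Gamma (p + q)) := by ring
    _ = Real.Gamma p * Real.Gamma q / Real.Gamma (p + q) * t ^ (p + q - 1) := by rw [ht1]; ring

end PBCP

section S2
open MeasureTheory Set Filter Function

namespace PBCP2

variable {V : StieltjesFunction ℝ}

lemma VleftLim_nonpos (hV0 : ∀ t < 0, V t = 0) {v : ℝ} (hv : v ≤ 0) :
    Function.leftLim (⇑V) v = 0 := by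
  apply leftLim_eq_of_tendsto
  apply Tendsto.congr' ?_ (tendsto_const_nhds (x := (0:ℝ)))
  filter_upwards [self_mem_nhdsWithin] with s hs
  exact (hV0 s (lt_of_lt_of_le hs hv)).symm

lemma VleftLim_nonneg (hV0 : ∀ t < 0, V t = 0) (v : ℝ) :
    0 ≤ Function.leftLim (⇑V) v := by
  rcases le_or_gt v 0 with h | h
  · rw [VleftLim_nonpos hV0 h]
  · have h2 := V.mono.le_leftLim (show (-1:ℝ) < v by linarith)
    rwa [hV0 (-1) (by norm_num)] at h2

lemma measure_Icc0 (hV0 : ∀ t < 0, V t = 0) (t : ℝ) :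
    V.measure (Icc 0 t) = ENNReal.ofReal (V t) := by
  rw [StieltjesFunction.measure_Icc, VleftLim_nonpos hV0 le_rfl, sub_zero]

lemma measure_Ico0 (hV0 : ∀ t < 0, V t = 0) (v : ℝ) :
    V.measure (Ico 0 v) = ENNReal.ofReal (Function.leftLim (⇑V) v) := by
  rw [StieltjesFunction.measure_Ico, VleftLim_nonpos hV0 le_rfl, sub_zero]

lemma countable_bad : {x : ℝ | Function.leftLim (⇑V) x ≠ V x}.Countable :=
  (V.mono.monotoneOn univ).countable_not_continuousWithinAt_Iio.mono (fun x hx => by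
    show x ∈ univ ∧ ¬ _
    exact ⟨mem_univ x, fun hcont =>
      hx ((Monotone.continuousWithinAt_Iio_iff_leftLim_eq V.mono).mp (by rwa [univ_inter] at hcont))⟩)

lemma J_eq (hV0 : ∀ t < 0, V t = 0) {β t : ℝ} (hβ : 0 < β) (ht : 0 < t) :
    ∫ y in Icc (0:ℝ) t, (t - y) ^ β ∂V.measure
      = ∫ u in (0:ℝ)..t, β * (t - u) ^ (β - 1) * V u := by
  set μ := V.measure with hμ
  set Vm := Function.leftLim (⇑V) with hVm
  have hfin : μ (Icc 0 t) ≠ ⊤ := by rw [measure_Icc0 hV0]; exact ENNReal.ofReal_ne_top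
  haveI : IsFiniteMeasure (μ.restrict (Icc 0 t)) :=
    ⟨by rw [Measure.restrict_apply_univ]; exact hfin.lt_top⟩
  have hcont : Continuous (fun y : ℝ => (t - y) ^ β) :=
    (continuous_const.sub continuous_id).rpow_const (fun x => Or.inr hβ.le)
  have hnn : 0 ≤ᵐ[μ.restrict (Icc 0 t)] fun y => (t - y) ^ β := by
    filter_upwards [ae_restrict_mem measurableSet_Icc] with y hy
    exact Real.rpow_nonneg (by linarith [hy.2]) β
  have hint : Integrable (fun y => (t - y) ^ β) (μ.restrict (Icc 0 t)) := by
    refine Integrable.mono' (integrable_const (t ^ β)) hcont.aestronglyMeasurable ?_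
    filter_upwards [ae_restrict_mem measurableSet_Icc] with y hy
    rw [Real.norm_eq_abs, abs_of_nonneg (Real.rpow_nonneg (by linarith [hy.2]) β)]
    exact Real.rpow_le_rpow (by linarith [hy.2]) (by linarith [hy.1]) hβ.le
  have key := hint.integral_eq_integral_meas_lt hnn
  have hmeasc : ∀ s ∈ Ioi (0:ℝ),
      ((μ.restrict (Icc 0 t)) {y | s < (t - y) ^ β}).toReal = Vm (t - s ^ β⁻¹) := by
    intro s hs
    rw [mem_Ioi] at hs
    have hset : {y : ℝ | s < (t - y) ^ β} ∩ Icc 0 t = Ico 0 (t - s ^ β⁻¹) := by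
      ext y
      simp only [mem_inter_iff, mem_setOf_eq, mem_Icc, mem_Ico]
      constructor
      · rintro ⟨h1, h2, h3⟩
        refine ⟨h2, ?_⟩
        have hy : (0:ℝ) ≤ t - y := by linarith
        have h4 := Real.rpow_lt_rpow hs.le h1 (by positivity : (0:ℝ) < β⁻¹)
        rw [← Real.rpow_mul hy, mul_inv_cancel₀ hβ.ne', Real.rpow_one] at h4
        linarith
      · rintro ⟨h0, h1⟩
        have hsp : 0 < s ^ β⁻¹ := Real.rpow_pos_of_pos hs _
        refine ⟨?_, h0, by linarith⟩
        have h4 := Real.rpow_lt_rpow (Real.rpow_nonneg hs.le _)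
          (show s ^ β⁻¹ < t - y by linarith) hβ
        rwa [← Real.rpow_mul hs.le, inv_mul_cancel₀ hβ.ne', Real.rpow_one] at h4
    rw [Measure.restrict_apply' measurableSet_Icc, hset, measure_Ico0 hV0,
      ENNReal.toReal_ofReal (VleftLim_nonneg hV0 _)]
  simp only [measureReal_def] at key
  rw [key, setIntegral_congr_fun measurableSet_Ioi hmeasc]
  have hsubst := MeasureTheory.integral_comp_rpow_Ioi (fun s => Vm (t - s ^ β⁻¹)) hβ.ne'
  rw [← hsubst]
  have step2 : ∫ x in Ioi (0:ℝ), (|β| * x ^ (β - 1)) • Vm (t - (x ^ β) ^ β⁻¹)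
      = ∫ x in Ioi (0:ℝ), β * x ^ (β - 1) * Vm (t - x) := by
    apply setIntegral_congr_fun measurableSet_Ioi
    intro x hx
    rw [mem_Ioi] at hx
    simp only [smul_eq_mul]
    rw [abs_of_pos hβ, ← Real.rpow_mul hx.le, mul_inv_cancel₀ hβ.ne', Real.rpow_one]
  rw [step2]
  have step3 : ∫ x in Ioi (0:ℝ), β * x ^ (β - 1) * Vm (t - x)
      = ∫ x in Ioc (0:ℝ) t, β * x ^ (β - 1) * Vm (t - x) := by
    rw [← MeasureTheory.integral_indicator measurableSet_Ioi, ← MeasureTheory.integral_indicator measurableSet_Ioc]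
    congr 1
    funext x
    by_cases h1 : x ∈ Ioc (0:ℝ) t
    · rw [indicator_of_mem h1, indicator_of_mem (mem_Ioi.mpr h1.1)]
    · rw [indicator_of_notMem h1]
      by_cases h2 : x ∈ Ioi (0:ℝ)
      · rw [indicator_of_mem h2]
        rw [mem_Ioi] at h2
        have htx : t < x := by
          by_contra hc
          exact h1 ⟨h2, not_lt.mp hc⟩
        rw [show Vm (t - x) = 0 from VleftLim_nonpos hV0 (by linarith), mul_zero]
      · rw [indicator_of_notMem h2]
  rw [step3]
  have step4 : ∫ x in Ioc (0:ℝ) t, β * x ^ (β - 1) * Vm (t - x)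
      = ∫ x in Ioc (0:ℝ) t, β * x ^ (β - 1) * V (t - x) := by
    apply MeasureTheory.integral_congr_ae
    apply ae_restrict_of_ae
    have hcnt : {x : ℝ | Vm (t - x) ≠ V (t - x)}.Countable := by
      have hs : {x : ℝ | Vm (t - x) ≠ V (t - x)} = (fun x => t - x) ⁻¹' {u | Vm u ≠ V u} := rfl
      rw [hs]
      exact Set.Countable.preimage countable_bad (fun a b hab => by simpa using hab)
    have hnull : volume {x : ℝ | Vm (t - x) ≠ V (t - x)} = 0 :=
      hcnt.measure_zero volume
    have := measure_eq_zero_iff_ae_notMem.mp hnull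
    filter_upwards [this] with x hx
    simp only [mem_setOf_eq, not_not] at hx
    rw [hx]
  rw [step4, ← intervalIntegral.integral_of_le ht.le]
  have hrefl := intervalIntegral.integral_comp_sub_left (a := (0:ℝ)) (b := t)
    (fun u => β * (t - u) ^ (β - 1) * V u) t
  simp only [sub_self, sub_zero] at hrefl
  rw [← hrefl]
  apply intervalIntegral.integral_congr
  intro x _
  simp only
  rw [show t - (t - x) = x by ring]




open PBCP Filter Function

variable {V : StieltjesFunction ℝ}

/-- coefficient in the beta evaluation -/
def Rco (x q : ℝ) : ℝ := Real.Gamma (x + 1) * Real.Gamma (q + 1) / Real.Gamma (x + q + 1)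

lemma Rco_pos {x q : ℝ} (hx : 0 ≤ x) (hq : 0 ≤ q) : 0 < Rco x q := by
  unfold Rco
  have h1 := Real.Gamma_pos_of_pos (show (0:ℝ) < x + 1 by linarith)
  have h2 := Real.Gamma_pos_of_pos (show (0:ℝ) < q + 1 by linarith)
  have h3 := Real.Gamma_pos_of_pos (show (0:ℝ) < x + q + 1 by linarith)
  positivity

lemma i1 {β t : ℝ} (hβ : 0 < β) (ht : 0 < t) (r : ℝ) (hr : 0 ≤ r) :
    IntervalIntegrable (fun u : ℝ => (t - u) ^ (β - 1) * u ^ r) volume 0 t := by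
  have h := rbeta_integrable (p := r + 1) (q := β) (by linarith) hβ ht
  have h2 : (fun x : ℝ => x ^ (r + 1 - 1) * (t - x) ^ (β - 1))
      = fun u : ℝ => (t - u) ^ (β - 1) * u ^ r := by
    funext u; rw [show r + 1 - 1 = r by ring]; ring
  rwa [h2] at h

lemma e1 {β t : ℝ} (hβ : 0 < β) (ht : 0 < t) (r : ℝ) (hr : 0 ≤ r) :
    (∫ u in (0:ℝ)..t, (t - u) ^ (β - 1) * u ^ r)
      = Real.Gamma (r + 1) * Real.Gamma β / Real.Gamma (r + 1 + β) * t ^ (r + β) := by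
  have h := rbeta (p := r + 1) (q := β) (by linarith) hβ ht
  simp only [show r + 1 - 1 = r by ring, show r + 1 + β - 1 = r + β by ring] at h
  rw [← h]
  apply intervalIntegral.integral_congr
  intro u _
  exact mul_comm _ _

lemma Jval {ω c : ℝ} (hω : 0 < ω) {β t : ℝ} (hβ : 0 < β) (ht : 0 < t)
    (d0 d1 e : ℝ) (he : 0 ≤ ω - e) :
    (∫ u in (0:ℝ)..t, β * (t - u) ^ (β - 1) * (c * u ^ ω + d0 + d1 * u ^ (ω - e)))
      = c * Rco ω β * t ^ (β + ω) + d0 * t ^ β + d1 * Rco (ω - e) β * t ^ (β + ω - e) := by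
  have hGβ : (0:ℝ) < Real.Gamma β := Real.Gamma_pos_of_pos hβ
  have hdecomp : (fun u : ℝ => β * (t - u) ^ (β - 1) * (c * u ^ ω + d0 + d1 * u ^ (ω - e)))
      = fun u : ℝ => (β * c) * ((t - u) ^ (β - 1) * u ^ ω)
        + ((β * d0) * ((t - u) ^ (β - 1) * u ^ (0:ℝ))
          + (β * d1) * ((t - u) ^ (β - 1) * u ^ (ω - e))) := by
    funext u; rw [Real.rpow_zero]; ring
  rw [hdecomp]
  rw [intervalIntegral.integral_add ((i1 hβ ht ω hω.le).const_mul _)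
      (((i1 hβ ht 0 le_rfl).const_mul _).add ((i1 hβ ht (ω - e) he).const_mul _)),
    intervalIntegral.integral_add ((i1 hβ ht 0 le_rfl).const_mul _)
      ((i1 hβ ht (ω - e) he).const_mul _),
    intervalIntegral.integral_const_mul, intervalIntegral.integral_const_mul,
    intervalIntegral.integral_const_mul, e1 hβ ht ω hω.le, e1 hβ ht 0 le_rfl,
    e1 hβ ht (ω - e) he]
  have hA : β * c * (Real.Gamma (ω + 1) * Real.Gamma β / Real.Gamma (ω + 1 + β) * t ^ (ω + β))
      = c * Rco ω β * t ^ (β + ω) := by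
    unfold Rco
    rw [Real.Gamma_add_one hβ.ne', show ω + β + 1 = ω + 1 + β by ring,
      show ω + β = β + ω by ring]
    ring
  have hB : β * d0 * (Real.Gamma (0 + 1) * Real.Gamma β / Real.Gamma (0 + 1 + β) * t ^ (0 + β))
      = d0 * t ^ β := by
    rw [zero_add, zero_add, Real.Gamma_one, show (1:ℝ) + β = β + 1 by ring,
      Real.Gamma_add_one hβ.ne']
    field_simp
  have hC : β * d1 * (Real.Gamma (ω - e + 1) * Real.Gamma β / Real.Gamma (ω - e + 1 + β)
        * t ^ (ω - e + β))
      = d1 * Rco (ω - e) β * t ^ (β + ω - e) := by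
    unfold Rco
    rw [Real.Gamma_add_one hβ.ne', show ω - e + β + 1 = ω - e + 1 + β by ring,
      show ω - e + β = β + ω - e by ring]
    ring
  rw [hA, hB, hC]
  ring

lemma Jint {β t : ℝ} (hV0 : ∀ s < 0, V s = 0) (hβ : 0 < β) (ht : 0 < t) :
    IntervalIntegrable (fun u : ℝ => β * (t - u) ^ (β - 1) * V u) volume 0 t := by
  have hVnn : ∀ x : ℝ, (0:ℝ) ≤ V x ∨ True := fun _ => Or.inr trivial
  set f : ℝ → ℝ := fun u => V (max (min u t) 0) with hf
  have hfm : Measurable f := by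
    apply V.mono.measurable.comp
    exact ((measurable_id.min measurable_const).max measurable_const)
  have hVnn' : ∀ x : ℝ, 0 ≤ V x := by
    intro x
    rcases lt_or_ge x 0 with h | h
    · rw [hV0 x h]
    · rw [← hV0 (-1) (by norm_num)]
      exact V.mono (by linarith)
  have hfb : ∀ x : ℝ, ‖f x‖ ≤ V t := by
    intro x
    rw [Real.norm_eq_abs, abs_of_nonneg (hVnn' _)]
    exact V.mono (max_le (min_le_right _ _) ht.le)
  have hg : IntervalIntegrable (fun u : ℝ => β * (t - u) ^ (β - 1)) volume 0 t := by
    have := (i1 hβ ht 0 le_rfl).const_mul β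
    have h2 : (fun u : ℝ => β * ((t - u) ^ (β - 1) * u ^ (0:ℝ)))
        = fun u : ℝ => β * (t - u) ^ (β - 1) := by
      funext u; rw [Real.rpow_zero]; ring
    rwa [h2] at this
  rw [intervalIntegrable_iff_integrableOn_Ioc_of_le ht.le] at hg ⊢
  have hfg : Integrable (fun u => f u * (β * (t - u) ^ (β - 1)))
      (volume.restrict (Ioc 0 t)) :=
    Integrable.bdd_mul hg (hfm.aestronglyMeasurable) (ae_of_all _ hfb)
  apply (hfg.congr ?_)
  filter_upwards [ae_restrict_mem measurableSet_Ioc] with u hu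
  have : f u = V u := by
    rw [hf]
    simp only
    rw [min_eq_left hu.2, max_eq_left hu.1.le]
  rw [this]
  ring

lemma Jbounds {c ω a0 a1 ε1 ε2 b0 b1 : ℝ}
    (hc : 0 < c) (hω : 0 < ω) (ha0 : 0 < a0) (ha1 : 0 < a1)
    (hε1 : 0 < ε1) (hε1' : ε1 ≤ ω) (hε2 : 0 < ε2) (hε2' : ε2 ≤ ω)
    (hV0 : ∀ s < 0, V s = 0)
    (hVlow : ∀ s ≥ 0, b0 + b1 * s ^ (ω - ε1) ≤ V s - c * s ^ ω)
    (hVup : ∀ s ≥ 0, V s - c * s ^ ω ≤ a0 + a1 * s ^ (ω - ε2))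
    {β t : ℝ} (hβ : 0 ≤ β) (ht : 0 ≤ t) :
    (c * Rco ω β * t ^ (β + ω) + b0 * t ^ β + b1 * Rco (ω - ε1) β * t ^ (β + ω - ε1)
        ≤ ∫ y in Icc (0:ℝ) t, (t - y) ^ β ∂V.measure)
      ∧ (∫ y in Icc (0:ℝ) t, (t - y) ^ β ∂V.measure
        ≤ c * Rco ω β * t ^ (β + ω) + a0 * t ^ β + a1 * Rco (ω - ε2) β * t ^ (β + ω - ε2)) := by
  have hVnn : ∀ x : ℝ, 0 ≤ V x := by
    intro x
    rcases lt_or_ge x 0 with h | h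
    · rw [hV0 x h]
    · rw [← hV0 (-1) (by norm_num)]
      exact V.mono (by linarith)
  rcases eq_or_lt_of_le hβ with hβ0 | hβpos
  · -- β = 0
    subst hβ0
    have hJ : ∫ y in Icc (0:ℝ) t, (t - y) ^ (0:ℝ) ∂V.measure = V t := by
      simp only [Real.rpow_zero]
      rw [setIntegral_const, measureReal_def, measure_Icc0 hV0, smul_eq_mul, mul_one,
        ENNReal.toReal_ofReal (hVnn t)]
    rw [hJ]
    have hR : ∀ x : ℝ, 0 ≤ x → Rco x 0 = 1 := by
      intro x hx
      unfold Rco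
      rw [zero_add, add_zero, Real.Gamma_one, mul_one,
        div_self (Real.Gamma_pos_of_pos (by linarith : (0:ℝ) < x + 1)).ne']
    rw [hR ω hω.le, hR (ω - ε1) (by linarith), hR (ω - ε2) (by linarith), Real.rpow_zero]
    simp only [zero_add, mul_one, one_mul]
    constructor
    · have := hVlow t ht; linarith
    · have := hVup t ht; linarith
  · rcases eq_or_lt_of_le ht with ht0 | htpos
    · -- t = 0
      subst ht0
      have hJ : ∫ y in Icc (0:ℝ) 0, ((0:ℝ) - y) ^ β ∂V.measure = 0 := by
        rw [setIntegral_congr_fun measurableSet_Icc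
          (g := fun _ : ℝ => (0:ℝ)) ?_]
        · simp
        · intro y hy
          simp only [mem_Icc] at hy
          have : y = 0 := le_antisymm hy.2 hy.1
          simp [this, Real.zero_rpow hβpos.ne']
      rw [hJ, Real.zero_rpow hβpos.ne',
        Real.zero_rpow (show β + ω ≠ 0 by positivity),
        Real.zero_rpow (show β + ω - ε1 ≠ 0 by nlinarith),
        Real.zero_rpow (show β + ω - ε2 ≠ 0 by nlinarith)]
      norm_num
    · -- β > 0, t > 0
      rw [J_eq hV0 hβpos htpos]
      have him := Jint hV0 hβpos htpos
      constructor
      · have hLint : IntervalIntegrable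
            (fun u : ℝ => β * (t - u) ^ (β - 1) * (c * u ^ ω + b0 + b1 * u ^ (ω - ε1)))
            volume 0 t := by
          have hdecomp : (fun u : ℝ => β * (t - u) ^ (β - 1) * (c * u ^ ω + b0 + b1 * u ^ (ω - ε1)))
              = fun u : ℝ => (β * c) * ((t - u) ^ (β - 1) * u ^ ω)
                + ((β * b0) * ((t - u) ^ (β - 1) * u ^ (0:ℝ))
                  + (β * b1) * ((t - u) ^ (β - 1) * u ^ (ω - ε1))) := by
            funext u; rw [Real.rpow_zero]; ring
          rw [hdecomp]
          exact ((i1 hβpos htpos ω hω.le).const_mul _).add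
            (((i1 hβpos htpos 0 le_rfl).const_mul _).add
              ((i1 hβpos htpos (ω - ε1) (by linarith)).const_mul _))
        have hmono := intervalIntegral.integral_mono_on htpos.le hLint him (fun u hu => by
          have hnn : (0:ℝ) ≤ β * (t - u) ^ (β - 1) :=
            mul_nonneg hβpos.le (Real.rpow_nonneg (by linarith [hu.2]) _)
          have hl := hVlow u hu.1
          have : c * u ^ ω + b0 + b1 * u ^ (ω - ε1) ≤ V u := by linarith
          exact mul_le_mul_of_nonneg_left this hnn)
        calc c * Rco ω β * t ^ (β + ω) + b0 * t ^ β + b1 * Rco (ω - ε1) β * t ^ (β + ω - ε1)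
            = ∫ u in (0:ℝ)..t, β * (t - u) ^ (β - 1) * (c * u ^ ω + b0 + b1 * u ^ (ω - ε1)) :=
              (Jval hω hβpos htpos b0 b1 ε1 (by linarith)).symm
          _ ≤ _ := hmono
      · have hUint : IntervalIntegrable
            (fun u : ℝ => β * (t - u) ^ (β - 1) * (c * u ^ ω + a0 + a1 * u ^ (ω - ε2)))
            volume 0 t := by
          have hdecomp : (fun u : ℝ => β * (t - u) ^ (β - 1) * (c * u ^ ω + a0 + a1 * u ^ (ω - ε2)))
              = fun u : ℝ => (β * c) * ((t - u) ^ (β - 1) * u ^ ω)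
                + ((β * a0) * ((t - u) ^ (β - 1) * u ^ (0:ℝ))
                  + (β * a1) * ((t - u) ^ (β - 1) * u ^ (ω - ε2))) := by
            funext u; rw [Real.rpow_zero]; ring
          rw [hdecomp]
          exact ((i1 hβpos htpos ω hω.le).const_mul _).add
            (((i1 hβpos htpos 0 le_rfl).const_mul _).add
              ((i1 hβpos htpos (ω - ε2) (by linarith)).const_mul _))
        have hmono := intervalIntegral.integral_mono_on htpos.le him hUint (fun u hu => by
          have hnn : (0:ℝ) ≤ β * (t - u) ^ (β - 1) :=
            mul_nonneg hβpos.le (Real.rpow_nonneg (by linarith [hu.2]) _)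
          have hl := hVup u hu.1
          have : V u ≤ c * u ^ ω + a0 + a1 * u ^ (ω - ε2) := by linarith
          exact mul_le_mul_of_nonneg_left this hnn)
        calc (∫ u in (0:ℝ)..t, β * (t - u) ^ (β - 1) * V u)
            ≤ ∫ u in (0:ℝ)..t, β * (t - u) ^ (β - 1) * (c * u ^ ω + a0 + a1 * u ^ (ω - ε2)) :=
              hmono
          _ = _ := Jval hω hβpos htpos a0 a1 ε2 (by linarith)



lemma pow_le_one_add {t p q : ℝ} (ht : 0 ≤ t) (hp : 0 ≤ p) (hpq : p ≤ q) :
    t ^ p ≤ 1 + t ^ q := by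
  rcases le_or_gt t 1 with h | h
  · have h1 : t ^ p ≤ 1 := Real.rpow_le_one ht h hp
    have h2 : 0 ≤ t ^ q := Real.rpow_nonneg ht q
    linarith
  · have h1 : t ^ p ≤ t ^ q := Real.rpow_le_rpow_of_exponent_le h.le hpq
    linarith

lemma term_abs {t p q : ℝ} (x : ℝ) (ht : 0 ≤ t) (hp : 0 ≤ p) (hpq : p ≤ q) :
    -|x| * (1 + t ^ q) ≤ x * t ^ p ∧ x * t ^ p ≤ |x| * (1 + t ^ q) := by
  have h1 := pow_le_one_add ht hp hpq
  have h2 : 0 ≤ t ^ p := Real.rpow_nonneg ht p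
  have h3 := abs_nonneg x
  have h4 := le_abs_self x
  have h5 := neg_abs_le x
  constructor <;> nlinarith [mul_le_mul_of_nonneg_left h1 h3]

lemma const_abs {t : ℝ} (q x : ℝ) (ht : 0 ≤ t) :
    -|x| * (1 + t ^ q) ≤ x ∧ x ≤ |x| * (1 + t ^ q) := by
  have h2 : 0 ≤ t ^ q := Real.rpow_nonneg ht q
  have h3 := abs_nonneg x
  have h4 := le_abs_self x
  have h5 := neg_abs_le x
  constructor <;> nlinarith

lemma step {V : StieltjesFunction ℝ} {c ω a0 a1 ε1 ε2 b0 b1 : ℝ}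
    (hc : 0 < c) (hω : 0 < ω) (ha0 : 0 < a0) (ha1 : 0 < a1)
    (hε1 : 0 < ε1) (hε1' : ε1 ≤ ω) (hε2 : 0 < ε2) (hε2' : ε2 ≤ ω)
    (hVpos : ∀ t, 0 ≤ V t) (hV0 : ∀ t < 0, V t = 0)
    (hVlow : ∀ s ≥ 0, b0 + b1 * s ^ (ω - ε1) ≤ V s - c * s ^ ω)
    (hVup : ∀ s ≥ 0, V s - c * s ^ ω ≤ a0 + a1 * s ^ (ω - ε2))
    {W : ℝ → ℝ} {α C M : ℝ}
    (hα : ω ≤ α) (hC : 0 < C) (hM : 0 < M)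
    (hWmono : MonotoneOn W (Ici 0)) (hWnn : ∀ s, 0 ≤ s → 0 ≤ W s)
    (hWlow : ∀ s, 0 ≤ s → C * s ^ α - M * (1 + s ^ (α - ε1)) ≤ W s)
    (hWup : ∀ s, 0 ≤ s → W s ≤ C * s ^ α + M * (1 + s ^ (α - ε2))) :
    (∀ s t : ℝ, 0 ≤ s → s ≤ t →
        (∫ y in Icc (0:ℝ) s, W (s - y) ∂V.measure)
          ≤ ∫ y in Icc (0:ℝ) t, W (t - y) ∂V.measure)
    ∧ (∀ t, 0 ≤ t → 0 ≤ ∫ y in Icc (0:ℝ) t, W (t - y) ∂V.measure)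
    ∧ ∃ M' : ℝ, 0 < M' ∧ ∀ t, 0 ≤ t →
        C * (c * Rco ω α) * t ^ (α + ω) - M' * (1 + t ^ (α + ω - ε1))
            ≤ (∫ y in Icc (0:ℝ) t, W (t - y) ∂V.measure)
        ∧ (∫ y in Icc (0:ℝ) t, W (t - y) ∂V.measure)
            ≤ C * (c * Rco ω α) * t ^ (α + ω) + M' * (1 + t ^ (α + ω - ε2)) := by
  have hα0 : 0 ≤ α := le_trans hω.le hα
  have hαε1 : 0 ≤ α - ε1 := by linarith
  have hαε2 : 0 ≤ α - ε2 := by linarith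
  have hloc : ∀ t : ℝ, V.measure (Icc 0 t) ≠ ⊤ := fun t => by
    rw [measure_Icc0 hV0]; exact ENNReal.ofReal_ne_top
  set g : ℝ → ℝ := fun s => W (max s 0) with hg
  have hgmono : Monotone g := fun s s' h =>
    hWmono (mem_Ici.mpr (le_max_right _ _)) (mem_Ici.mpr (le_max_right _ _))
      (max_le_max h le_rfl)
  have hgmeas : Measurable g := hgmono.measurable
  have hInt : ∀ t u : ℝ, 0 ≤ t → 0 ≤ u → u ≤ t →
      IntegrableOn (fun y => W (t - y)) (Icc 0 u) V.measure := by
    intro t u ht hu hut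
    haveI : IsFiniteMeasure (V.measure.restrict (Icc 0 u)) :=
      ⟨by rw [Measure.restrict_apply_univ]; exact (hloc u).lt_top⟩
    have hmeas : AEStronglyMeasurable (fun y => W (t - y))
        (V.measure.restrict (Icc 0 u)) := by
      have h1 : AEStronglyMeasurable (fun y => g (t - y))
          (V.measure.restrict (Icc 0 u)) :=
        (hgmeas.comp (measurable_const.sub measurable_id)).aestronglyMeasurable
      apply h1.congr
      filter_upwards [ae_restrict_mem measurableSet_Icc] with y hy
      rw [hg]
      simp only
      rw [max_eq_left (by linarith [(mem_Icc.mp hy).2] : (0:ℝ) ≤ t - y)]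
    apply Integrable.mono' (integrable_const (W t)) hmeas
    filter_upwards [ae_restrict_mem measurableSet_Icc] with y hy
    have hy' := mem_Icc.mp hy
    rw [Real.norm_eq_abs, abs_of_nonneg (hWnn _ (by linarith [hy'.2]))]
    exact hWmono (mem_Ici.mpr (by linarith [hy'.2])) (mem_Ici.mpr ht) (by linarith [hy'.1])
  have hmono : ∀ s t : ℝ, 0 ≤ s → s ≤ t →
      (∫ y in Icc (0:ℝ) s, W (s - y) ∂V.measure)
        ≤ ∫ y in Icc (0:ℝ) t, W (t - y) ∂V.measure := by
    intro s t hs hst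
    have ht : 0 ≤ t := le_trans hs hst
    calc (∫ y in Icc (0:ℝ) s, W (s - y) ∂V.measure)
        ≤ ∫ y in Icc (0:ℝ) s, W (t - y) ∂V.measure := by
          apply setIntegral_mono_on (hInt s s hs hs le_rfl) (hInt t s ht hs hst)
            measurableSet_Icc
          intro y hy
          have hy' := mem_Icc.mp hy
          exact hWmono (mem_Ici.mpr (by linarith [hy'.2]))
            (mem_Ici.mpr (by linarith [hy'.2])) (by linarith)
      _ ≤ ∫ y in Icc (0:ℝ) t, W (t - y) ∂V.measure := by
          apply setIntegral_mono_set (hInt t t ht ht le_rfl) ?_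
            (HasSubset.Subset.eventuallyLE (Icc_subset_Icc_right hst))
          filter_upwards [ae_restrict_mem measurableSet_Icc] with y hy
          exact hWnn _ (by linarith [(mem_Icc.mp hy).2])
  have hnn : ∀ t, 0 ≤ t → 0 ≤ ∫ y in Icc (0:ℝ) t, W (t - y) ∂V.measure := fun t ht =>
    setIntegral_nonneg measurableSet_Icc (fun y hy => hWnn _ (by linarith [(mem_Icc.mp hy).2]))
  refine ⟨hmono, hnn, ?_⟩
  -- the constant
  refine ⟨(|C * a0| + |C * (a1 * Rco (ω - ε2) α)| + |M * c| + |M * a0| + |M * a0| + |M * a1|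
      + |M * (c * Rco ω (α - ε2))| + |M * (a1 * Rco (ω - ε2) (α - ε2))|)
    + (|C * b0| + |C * (b1 * Rco (ω - ε1) α)| + |-(M * c)| + |-(M * a0)| + |-(M * a0)| + |-(M * a1)|
      + |-(M * (c * Rco ω (α - ε1)))| + |-(M * (a1 * Rco (ω - ε2) (α - ε1)))|) + 1,
    by positivity, ?_⟩
  intro t ht
  haveI : IsFiniteMeasure (V.measure.restrict (Icc 0 t)) :=
    ⟨by rw [Measure.restrict_apply_univ]; exact (hloc t).lt_top⟩
  have hconts : ∀ r : ℝ, 0 ≤ r → Continuous (fun y : ℝ => (t - y) ^ r) := fun r hr =>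
    (continuous_const.sub continuous_id).rpow_const (fun _ => Or.inr hr)
  have hJint : ∀ r : ℝ, 0 ≤ r → IntegrableOn (fun y : ℝ => (t - y) ^ r) (Icc 0 t) V.measure :=
    fun r hr => (hconts r hr).integrableOn_Icc
  have hconst : IntegrableOn (fun _ : ℝ => (1:ℝ)) (Icc 0 t) V.measure :=
    integrableOn_const (hloc t)
  have hWt := hInt t t ht ht le_rfl
  have hmeasV : (V.measure (Icc 0 t)).toReal = V t := by
    rw [measure_Icc0 hV0, ENNReal.toReal_ofReal (hVpos t)]
  have hone : (∫ _ in Icc (0:ℝ) t, (1:ℝ) ∂V.measure) = V t := by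
    rw [setIntegral_const, smul_eq_mul, mul_one, measureReal_def, hmeasV]
  -- J-bounds
  obtain ⟨hJl1, hJu1⟩ := Jbounds hc hω ha0 ha1 hε1 hε1' hε2 hε2' hV0 hVlow hVup hα0 ht
  obtain ⟨hJl2, hJu2⟩ := Jbounds hc hω ha0 ha1 hε1 hε1' hε2 hε2' hV0 hVlow hVup hαε1 ht
  obtain ⟨hJl3, hJu3⟩ := Jbounds hc hω ha0 ha1 hε1 hε1' hε2 hε2' hV0 hVlow hVup hαε2 ht
  simp only [show α - ε1 + ω = α + ω - ε1 by ring] at hJl2 hJu2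
  simp only [show α - ε2 + ω = α + ω - ε2 by ring] at hJl3 hJu3
  have hVu' := hVup t ht
  have hVl' := hVlow t ht
  constructor
  · -- lower bound
    have hle1 : (∫ y in Icc (0:ℝ) t, (C * (t - y) ^ α - (M * 1 + M * (t - y) ^ (α - ε1))) ∂V.measure)
        ≤ ∫ y in Icc (0:ℝ) t, W (t - y) ∂V.measure := by
      apply setIntegral_mono_on ?_ hWt measurableSet_Icc
      · intro y hy
        have hy' := mem_Icc.mp hy
        have := hWlow (t - y) (by linarith [hy'.2])
        linarith
      · have hI1 : IntegrableOn (fun y : ℝ => C * (t - y) ^ α) (Icc 0 t) V.measure :=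
          (hJint α hα0).const_mul C
        have hI2 : IntegrableOn (fun y : ℝ => M * 1 + M * (t - y) ^ (α - ε1)) (Icc 0 t)
            V.measure := by
          exact (hconst.const_mul M).add ((hJint _ hαε1).const_mul M)
        exact hI1.sub hI2
    have hI1 : IntegrableOn (fun y : ℝ => C * (t - y) ^ α) (Icc 0 t) V.measure :=
      (hJint α hα0).const_mul C
    have hI2 : IntegrableOn (fun y : ℝ => M * 1 + M * (t - y) ^ (α - ε1)) (Icc 0 t)
        V.measure := by
      exact (hconst.const_mul M).add ((hJint _ hαε1).const_mul M)
    have hI3 : IntegrableOn (fun _ : ℝ => M * 1) (Icc 0 t) V.measure := hconst.const_mul M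
    have hI4 : IntegrableOn (fun y : ℝ => M * (t - y) ^ (α - ε1)) (Icc 0 t) V.measure :=
      (hJint _ hαε1).const_mul M
    have hsplit : (∫ y in Icc (0:ℝ) t, (C * (t - y) ^ α - (M * 1 + M * (t - y) ^ (α - ε1))) ∂V.measure)
        = C * (∫ y in Icc (0:ℝ) t, (t - y) ^ α ∂V.measure)
          - (M * (V t) + M * (∫ y in Icc (0:ℝ) t, (t - y) ^ (α - ε1) ∂V.measure)) := by
      rw [integral_sub hI1 hI2, integral_add hI3 hI4,
        MeasureTheory.integral_const_mul, MeasureTheory.integral_const_mul, MeasureTheory.integral_const_mul, hone]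
    rw [hsplit] at hle1
    have hCl := mul_le_mul_of_nonneg_left hJl1 hC.le
    have hMV : M * V t ≤ M * (c * t ^ ω + a0 + a1 * t ^ (ω - ε2)) :=
      mul_le_mul_of_nonneg_left (by linarith) hM.le
    have hMJ : M * (∫ y in Icc (0:ℝ) t, (t - y) ^ (α - ε1) ∂V.measure)
        ≤ M * (c * Rco ω (α - ε1) * t ^ (α + ω - ε1) + a0 * t ^ (α - ε1)
          + a1 * Rco (ω - ε2) (α - ε1) * t ^ (α + ω - ε1 - ε2)) :=
      mul_le_mul_of_nonneg_left hJu2 hM.le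
    -- term estimates, target exponent q1 = α + ω - ε1
    have tL1 := (term_abs (C * b0) ht hα0 (by linarith : α ≤ α + ω - ε1)).1
    have tL2 := (term_abs (C * (b1 * Rco (ω - ε1) α)) ht (by linarith : (0:ℝ) ≤ α + ω - ε1)
      le_rfl).1
    have tL3 := (term_abs (-(M * c)) ht hω.le (by linarith : ω ≤ α + ω - ε1)).1
    have tL4 := (const_abs (α + ω - ε1) (-(M * a0)) ht).1
    have tL5 := (term_abs (-(M * a1)) ht (by linarith : (0:ℝ) ≤ ω - ε2)
      (by linarith : ω - ε2 ≤ α + ω - ε1)).1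
    have tL6 := (term_abs (-(M * (c * Rco ω (α - ε1)))) ht
      (by linarith : (0:ℝ) ≤ α + ω - ε1) le_rfl).1
    have tL7 := (term_abs (-(M * a0)) ht hαε1 (by linarith : α - ε1 ≤ α + ω - ε1)).1
    have tL8 := (term_abs (-(M * (a1 * Rco (ω - ε2) (α - ε1)))) ht
      (by linarith : (0:ℝ) ≤ α + ω - ε1 - ε2) (by linarith : α + ω - ε1 - ε2 ≤ α + ω - ε1)).1
    have hMle : (|C * b0| + |C * (b1 * Rco (ω - ε1) α)| + |-(M * c)| + |-(M * a0)| + |-(M * a0)| + |-(M * a1)|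
          + |-(M * (c * Rco ω (α - ε1)))| + |-(M * (a1 * Rco (ω - ε2) (α - ε1)))|)
          * (1 + t ^ (α + ω - ε1))
        ≤ ((|C * a0| + |C * (a1 * Rco (ω - ε2) α)| + |M * c| + |M * a0| + |M * a0| + |M * a1|
          + |M * (c * Rco ω (α - ε2))| + |M * (a1 * Rco (ω - ε2) (α - ε2))|)
          + (|C * b0| + |C * (b1 * Rco (ω - ε1) α)| + |-(M * c)| + |-(M * a0)| + |-(M * a0)| + |-(M * a1)|
          + |-(M * (c * Rco ω (α - ε1)))| + |-(M * (a1 * Rco (ω - ε2) (α - ε1)))|) + 1)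
          * (1 + t ^ (α + ω - ε1)) := by
      apply mul_le_mul_of_nonneg_right ?_ (by positivity)
      have := abs_nonneg (C * a0); have := abs_nonneg (C * (a1 * Rco (ω - ε2) α))
      have := abs_nonneg (M * c); have := abs_nonneg (M * a0); have := abs_nonneg (M * a1)
      have := abs_nonneg (M * (c * Rco ω (α - ε2)))
      have := abs_nonneg (M * (a1 * Rco (ω - ε2) (α - ε2)))
      linarith
    -- note tL7 ≠ tL4 ; both needed; combine
    linarith [hle1, hCl, hMV, hMJ, tL1, tL2, tL3, tL4, tL5, tL6, tL7, tL8, hMle]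
  · -- upper bound
    have hle1 : (∫ y in Icc (0:ℝ) t, W (t - y) ∂V.measure)
        ≤ ∫ y in Icc (0:ℝ) t, (C * (t - y) ^ α + (M * 1 + M * (t - y) ^ (α - ε2))) ∂V.measure := by
      apply setIntegral_mono_on hWt ?_ measurableSet_Icc
      · intro y hy
        have hy' := mem_Icc.mp hy
        have := hWup (t - y) (by linarith [hy'.2])
        linarith
      · have hI1 : IntegrableOn (fun y : ℝ => C * (t - y) ^ α) (Icc 0 t) V.measure :=
          (hJint α hα0).const_mul C
        have hI2 : IntegrableOn (fun y : ℝ => M * 1 + M * (t - y) ^ (α - ε2)) (Icc 0 t)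
            V.measure := by
          exact (hconst.const_mul M).add ((hJint _ hαε2).const_mul M)
        exact hI1.add hI2
    have hI1 : IntegrableOn (fun y : ℝ => C * (t - y) ^ α) (Icc 0 t) V.measure :=
      (hJint α hα0).const_mul C
    have hI2 : IntegrableOn (fun y : ℝ => M * 1 + M * (t - y) ^ (α - ε2)) (Icc 0 t)
        V.measure := by
      exact (hconst.const_mul M).add ((hJint _ hαε2).const_mul M)
    have hI3 : IntegrableOn (fun _ : ℝ => M * 1) (Icc 0 t) V.measure := hconst.const_mul M
    have hI4 : IntegrableOn (fun y : ℝ => M * (t - y) ^ (α - ε2)) (Icc 0 t) V.measure :=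
      (hJint _ hαε2).const_mul M
    have hsplit : (∫ y in Icc (0:ℝ) t, (C * (t - y) ^ α + (M * 1 + M * (t - y) ^ (α - ε2))) ∂V.measure)
        = C * (∫ y in Icc (0:ℝ) t, (t - y) ^ α ∂V.measure)
          + (M * (V t) + M * (∫ y in Icc (0:ℝ) t, (t - y) ^ (α - ε2) ∂V.measure)) := by
      rw [integral_add hI1 hI2, integral_add hI3 hI4,
        MeasureTheory.integral_const_mul, MeasureTheory.integral_const_mul, MeasureTheory.integral_const_mul, hone]
    rw [hsplit] at hle1
    have hCu := mul_le_mul_of_nonneg_left hJu1 hC.le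
    have hMV : M * V t ≤ M * (c * t ^ ω + a0 + a1 * t ^ (ω - ε2)) :=
      mul_le_mul_of_nonneg_left (by linarith) hM.le
    have hMJ : M * (∫ y in Icc (0:ℝ) t, (t - y) ^ (α - ε2) ∂V.measure)
        ≤ M * (c * Rco ω (α - ε2) * t ^ (α + ω - ε2) + a0 * t ^ (α - ε2)
          + a1 * Rco (ω - ε2) (α - ε2) * t ^ (α + ω - ε2 - ε2)) :=
      mul_le_mul_of_nonneg_left hJu3 hM.le
    have tU1 := (term_abs (C * a0) ht hα0 (by linarith : α ≤ α + ω - ε2)).2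
    have tU2 := (term_abs (C * (a1 * Rco (ω - ε2) α)) ht (by linarith : (0:ℝ) ≤ α + ω - ε2)
      le_rfl).2
    have tU3 := (term_abs (M * c) ht hω.le (by linarith : ω ≤ α + ω - ε2)).2
    have tU4 := (const_abs (α + ω - ε2) (M * a0) ht).2
    have tU5 := (term_abs (M * a1) ht (by linarith : (0:ℝ) ≤ ω - ε2)
      (by linarith : ω - ε2 ≤ α + ω - ε2)).2
    have tU6 := (term_abs (M * (c * Rco ω (α - ε2))) ht
      (by linarith : (0:ℝ) ≤ α + ω - ε2) le_rfl).2
    have tU7 := (term_abs (M * a0) ht hαε2 (by linarith : α - ε2 ≤ α + ω - ε2)).2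
    have tU8 := (term_abs (M * (a1 * Rco (ω - ε2) (α - ε2)))) ht
      (by linarith : (0:ℝ) ≤ α + ω - ε2 - ε2)
      (by linarith : α + ω - ε2 - ε2 ≤ α + ω - ε2)
    have tU8' := tU8.2
    have hMle : (|C * a0| + |C * (a1 * Rco (ω - ε2) α)| + |M * c| + |M * a0| + |M * a0| + |M * a1|
          + |M * (c * Rco ω (α - ε2))| + |M * (a1 * Rco (ω - ε2) (α - ε2))|)
          * (1 + t ^ (α + ω - ε2))
        ≤ ((|C * a0| + |C * (a1 * Rco (ω - ε2) α)| + |M * c| + |M * a0| + |M * a0| + |M * a1|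
          + |M * (c * Rco ω (α - ε2))| + |M * (a1 * Rco (ω - ε2) (α - ε2))|)
          + (|C * b0| + |C * (b1 * Rco (ω - ε1) α)| + |-(M * c)| + |-(M * a0)| + |-(M * a0)| + |-(M * a1)|
          + |-(M * (c * Rco ω (α - ε1)))| + |-(M * (a1 * Rco (ω - ε2) (α - ε1)))|) + 1)
          * (1 + t ^ (α + ω - ε2)) := by
      apply mul_le_mul_of_nonneg_right ?_ (by positivity)
      have := abs_nonneg (C * b0); have := abs_nonneg (C * (b1 * Rco (ω - ε1) α))
      have := abs_nonneg (-(M * c)); have := abs_nonneg (-(M * a0))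
      have := abs_nonneg (-(M * a1)); have := abs_nonneg (-(M * (c * Rco ω (α - ε1))))
      have := abs_nonneg (-(M * (a1 * Rco (ω - ε2) (α - ε1))))
      linarith
    linarith [hle1, hCu, hMV, hMJ, tU1, tU2, tU3, tU4, tU5, tU6, tU7, tU8', hMle]



end PBCP2
end S2

open MeasureTheory Set

noncomputable section

theorem power_bounds_for_convolution_powers
    (V : StieltjesFunction ℝ) (c ω a0 a1 ε1 ε2 b0 b1 : ℝ)
    (hc : 0 < c) (hω : 0 < ω) (ha0 : 0 < a0) (ha1 : 0 < a1)
    (hε1 : 0 < ε1) (hε1' : ε1 ≤ ω) (hε2 : 0 < ε2) (hε2' : ε2 ≤ ω)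
    (hVpos : ∀ t, 0 ≤ V t) (hV0 : ∀ t < 0, V t = 0)
    (hVlow : ∀ t ≥ 0, b0 + b1 * t ^ (ω - ε1) ≤ V t - c * t ^ ω)
    (hVup : ∀ t ≥ 0, V t - c * t ^ ω ≤ a0 + a1 * t ^ (ω - ε2))
    (Vseq : ℕ → ℝ → ℝ)
    (hV1 : ∀ t, Vseq 1 t = V t)
    (hrec : ∀ j : ℕ, 2 ≤ j → ∀ t, 0 ≤ t →
        Vseq j t = ∫ y in Set.Icc (0 : ℝ) t, Vseq (j - 1) (t - y) ∂V.measure) :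
    ∀ j : ℕ, 1 ≤ j → ∃ a0j a1j b0j b1j : ℝ, 0 < a0j ∧ 0 < a1j ∧
      ∀ t, 0 ≤ t →
        b0j + b1j * t ^ (ω * (j : ℝ) - ε1)
            ≤ Vseq j t - ((c * Real.Gamma (ω + 1)) ^ j / Real.Gamma (ω * (j : ℝ) + 1)) * t ^ (ω * (j : ℝ))
          ∧ Vseq j t - ((c * Real.Gamma (ω + 1)) ^ j / Real.Gamma (ω * (j : ℝ) + 1)) * t ^ (ω * (j : ℝ))
            ≤ a0j + a1j * t ^ (ω * (j : ℝ) - ε2) := by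
  have hGω : (0:ℝ) < Real.Gamma (ω + 1) := Real.Gamma_pos_of_pos (by linarith)
  have key : ∀ j : ℕ, 1 ≤ j →
      MonotoneOn (Vseq j) (Ici 0) ∧ (∀ t, 0 ≤ t → 0 ≤ Vseq j t) ∧
      ∃ M : ℝ, 0 < M ∧ ∀ t, 0 ≤ t →
        ((c * Real.Gamma (ω + 1)) ^ j / Real.Gamma (ω * (j:ℝ) + 1)) * t ^ (ω * (j:ℝ))
            - M * (1 + t ^ (ω * (j:ℝ) - ε1)) ≤ Vseq j t
        ∧ Vseq j t ≤ ((c * Real.Gamma (ω + 1)) ^ j / Real.Gamma (ω * (j:ℝ) + 1)) * t ^ (ω * (j:ℝ))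
            + M * (1 + t ^ (ω * (j:ℝ) - ε2)) := by
    intro j hj
    induction j, hj using Nat.le_induction with
    | base =>
      have hexp : ω * ((1:ℕ):ℝ) = ω := by norm_num
      have hcoef : (c * Real.Gamma (ω + 1)) ^ (1:ℕ) / Real.Gamma (ω * ((1:ℕ):ℝ) + 1) = c := by
        rw [pow_one, hexp, mul_div_assoc, div_self hGω.ne', mul_one]
      refine ⟨?_, ?_, ?_⟩
      · intro s _ t _ hst
        rw [hV1, hV1]
        exact V.mono hst
      · intro t _
        rw [hV1]
        exact hVpos t
      refine ⟨|b0| + |b1| + a0 + a1 + 1, by positivity, ?_⟩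
      intro t ht
      rw [hV1, hcoef, hexp]
      have h1 := hVlow t ht
      have h2 := hVup t ht
      have h3 : 0 ≤ t ^ (ω - ε1) := Real.rpow_nonneg ht _
      have h4 : 0 ≤ t ^ (ω - ε2) := Real.rpow_nonneg ht _
      have h6 := neg_abs_le b0
      have h7 := le_abs_self b1
      have h8 := abs_nonneg b0
      have h9 := abs_nonneg b1
      constructor
      · have f1 : -|b1| * t ^ (ω - ε1) ≤ b1 * t ^ (ω - ε1) :=
          mul_le_mul_of_nonneg_right (neg_abs_le b1) h3
        have f2 : 0 ≤ |b0| * t ^ (ω - ε1) := mul_nonneg (abs_nonneg b0) h3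
        have f3 : 0 ≤ a0 * t ^ (ω - ε1) := mul_nonneg ha0.le h3
        have f4 : 0 ≤ a1 * t ^ (ω - ε1) := mul_nonneg ha1.le h3
        linarith
      · have f1 : a1 * t ^ (ω - ε2) ≤ a1 * t ^ (ω - ε2) := le_rfl
        have f2 : 0 ≤ |b0| * t ^ (ω - ε2) := mul_nonneg (abs_nonneg b0) h4
        have f3 : 0 ≤ |b1| * t ^ (ω - ε2) := mul_nonneg (abs_nonneg b1) h4
        have f4 : 0 ≤ a0 * t ^ (ω - ε2) := mul_nonneg ha0.le h4
        linarith
    | succ n hn ih =>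
      obtain ⟨hmono, hnn, M, hM, hbd⟩ := ih
      have hn1 : (1:ℝ) ≤ (n:ℝ) := by exact_mod_cast hn
      have hα : ω ≤ ω * (n:ℝ) := by nlinarith
      have hGn : (0:ℝ) < Real.Gamma (ω * (n:ℝ) + 1) :=
        Real.Gamma_pos_of_pos (by nlinarith)
      have hGn' : (0:ℝ) < Real.Gamma (ω * (n:ℝ) + ω + 1) :=
        Real.Gamma_pos_of_pos (by nlinarith)
      have hC : 0 < (c * Real.Gamma (ω + 1)) ^ n / Real.Gamma (ω * (n:ℝ) + 1) := by
        have h1 : 0 < c * Real.Gamma (ω + 1) := mul_pos hc hGω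
        positivity
      have hst := PBCP2.step hc hω ha0 ha1 hε1 hε1' hε2 hε2' hVpos hV0 hVlow hVup
        hα hC hM hmono hnn (fun s hs => (hbd s hs).1) (fun s hs => (hbd s hs).2)
      obtain ⟨hmono', hnn', M', hM', hbd'⟩ := hst
      have hreceq : ∀ t : ℝ, 0 ≤ t →
          Vseq (n+1) t = ∫ y in Icc (0:ℝ) t, Vseq n (t - y) ∂V.measure := by
        intro t ht
        have h := hrec (n+1) (by omega) t ht
        simpa using h
      have hexp : ω * ((n+1:ℕ):ℝ) = ω * (n:ℝ) + ω := by push_cast; ring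
      have hcoef : (c * Real.Gamma (ω + 1)) ^ (n+1) / Real.Gamma (ω * ((n+1:ℕ):ℝ) + 1)
          = ((c * Real.Gamma (ω + 1)) ^ n / Real.Gamma (ω * (n:ℝ) + 1))
            * (c * PBCP2.Rco ω (ω * (n:ℝ))) := by
        rw [show ω * ((n+1:ℕ):ℝ) + 1 = ω * (n:ℝ) + ω + 1 by push_cast; ring]
        unfold PBCP2.Rco
        rw [show ω + ω * (n:ℝ) + 1 = ω * (n:ℝ) + ω + 1 by ring, pow_succ]
        field_simp
      refine ⟨?_, ?_, ?_⟩
      · intro s hs t ht hst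
        rw [hreceq s (mem_Ici.mp hs), hreceq t (mem_Ici.mp ht)]
        exact hmono' s t (mem_Ici.mp hs) hst
      · intro t ht
        rw [hreceq t ht]
        exact hnn' t ht
      refine ⟨M', hM', ?_⟩
      intro t ht
      rw [hreceq t ht, hcoef, hexp]
      exact hbd' t ht
  intro j hj
  obtain ⟨-, -, M, hM, hbd⟩ := key j hj
  refine ⟨M, M, -M, -M, hM, hM, ?_⟩
  intro t ht
  obtain ⟨hl, hu⟩ := hbd t ht
  constructor
  · linarith
  · linarith
end
end
end
end

section
/- Let $V:\mathbb{R}\to[0,\infty)$ be nondecreasing and right-continuous with $V(t)=0$ for $t<0$, and suppose $V(t)-c\,t^{\omega}\le a_0+a_1 t^{\omega-\varepsilon}$ for all $t\ge 0$, where $c,\omega,a_0,a_1>0$ and $0<\varepsilon\le\omega$. Then for every $b>0$ and every $t\ge0$: $\int_{[0,t]}(t-y)^b\,\mathrm{d}V(y)\le a_0 t^b + b\,a_1\,\mathrm{B}(b,1+\omega-\varepsilon)\,t^{\omega-\varepsilon+b} + b\,c\,\mathrm{B}(b,1+\omega)\,t^{\omega+b}$. -/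
open MeasureTheory Set

noncomputable section

/-- The real Beta function, `B(x, y) = Γ(x) Γ(y) / Γ(x + y)`. -/
def realBeta (x y : ℝ) : ℝ := Real.Gamma x * Real.Gamma y / Real.Gamma (x + y)


lemma realBeta_integral {u v : ℝ} (hu : 0 < u) (hv : 0 < v) :
    ∫ x in (0:ℝ)..1, x ^ (u - 1) * (1 - x) ^ (v - 1) = realBeta u v := by
  have key := Complex.Gamma_mul_Gamma_eq_betaIntegral (s := (u:ℂ)) (t := (v:ℂ))
    (by simpa using hu) (by simpa using hv)
  have hI : Complex.betaIntegral (u:ℂ) (v:ℂ)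
      = ((∫ x in (0:ℝ)..1, x ^ (u - 1) * (1 - x) ^ (v - 1) : ℝ) : ℂ) := by
    rw [Complex.betaIntegral, ← intervalIntegral.integral_ofReal]
    refine intervalIntegral.integral_congr fun x hx => ?_
    rw [uIcc_of_le zero_le_one] at hx
    have h1 : ((1:ℂ) - (x:ℂ)) = ((1 - x : ℝ) : ℂ) := by push_cast; ring
    rw [h1, show ((u:ℂ) - 1) = ((u - 1 : ℝ) : ℂ) by push_cast; ring,
      show ((v:ℂ) - 1) = ((v - 1 : ℝ) : ℂ) by push_cast; ring,
      ← Complex.ofReal_cpow hx.1, ← Complex.ofReal_cpow (by linarith [hx.2]),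
      ← Complex.ofReal_mul]
  rw [hI, ← Complex.ofReal_add, Complex.Gamma_ofReal, Complex.Gamma_ofReal,
    Complex.Gamma_ofReal, ← Complex.ofReal_mul, ← Complex.ofReal_mul] at key
  have key' := Complex.ofReal_injective key
  have hΓ : Real.Gamma (u + v) ≠ 0 := (Real.Gamma_pos_of_pos (by linarith)).ne'
  rw [realBeta]
  field_simp
  linarith [key']

lemma realBeta_scaled {b α t : ℝ} (hb : 0 < b) (hα : 0 ≤ α) (ht : 0 < t) :
    ∫ s in (0:ℝ)..t, s ^ (b - 1) * (t - s) ^ α = realBeta b (α + 1) * t ^ (b + α) := by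
  have h := intervalIntegral.integral_comp_mul_right
    (a := (0:ℝ)) (b := (1:ℝ)) (fun s => s ^ (b - 1) * (t - s) ^ α) ht.ne'
  simp only [zero_mul, one_mul, smul_eq_mul] at h
  have h2 : ∫ x in (0:ℝ)..1, (x * t) ^ (b - 1) * (t - x * t) ^ α
      = (t ^ (b - 1) * t ^ α) * ∫ x in (0:ℝ)..1, x ^ (b - 1) * (1 - x) ^ α := by
    rw [← intervalIntegral.integral_const_mul]
    refine intervalIntegral.integral_congr fun x hx => ?_
    rw [uIcc_of_le zero_le_one] at hx
    have hx0 : (0:ℝ) ≤ x := hx.1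
    have h1x : (0:ℝ) ≤ 1 - x := by linarith [hx.2]
    have e1 : (x * t) ^ (b - 1) = x ^ (b - 1) * t ^ (b - 1) :=
      Real.mul_rpow hx0 ht.le
    have e2 : (t - x * t) ^ α = t ^ α * (1 - x) ^ α := by
      rw [show t - x * t = t * (1 - x) by ring, Real.mul_rpow ht.le h1x]
    rw [e1, e2]; ring
  have hbeta : ∫ x in (0:ℝ)..1, x ^ (b - 1) * (1 - x) ^ α = realBeta b (α + 1) := by
    have := realBeta_integral hb (v := α + 1) (by linarith)
    simpa using this
  have hpow : t * (t ^ (b - 1) * t ^ α) = t ^ (b + α) := by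
    rw [← Real.rpow_add ht]
    nth_rewrite 1 [← Real.rpow_one t]
    rw [← Real.rpow_add ht]
    ring_nf
  have hmain : ∫ s in (0:ℝ)..t, s ^ (b - 1) * (t - s) ^ α
      = t * ∫ x in (0:ℝ)..1, (x * t) ^ (b - 1) * (t - x * t) ^ α := by
    rw [h]; field_simp
  rw [hmain, h2, hbeta, ← mul_assoc, hpow]
  ring

lemma rpow_prim {b : ℝ} (hb : 0 < b) {x : ℝ} (hx : 0 ≤ x) :
    ∫ s in (0:ℝ)..x, b * s ^ (b - 1) = x ^ b := by
  rw [intervalIntegral.integral_const_mul, integral_rpow (Or.inl (by linarith))]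
  rw [show b - 1 + 1 = b by ring, Real.zero_rpow hb.ne']
  field_simp
  rw [sub_zero]

theorem stieltjes_integral_of_power_bound
    (V : StieltjesFunction ℝ) (c ω a0 a1 ε : ℝ)
    (hc : 0 < c) (hω : 0 < ω) (ha0 : 0 < a0) (ha1 : 0 < a1)
    (hε : 0 < ε) (hε' : ε ≤ ω)
    (hVpos : ∀ t, 0 ≤ V t) (hV0 : ∀ t < 0, V t = 0)
    (hVup : ∀ t, 0 ≤ t → V t - c * t ^ ω ≤ a0 + a1 * t ^ (ω - ε))
    (b : ℝ) (hb : 0 < b) (t : ℝ) (ht : 0 ≤ t) :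
    (∫ y in Set.Icc (0 : ℝ) t, (t - y) ^ b ∂V.measure)
      ≤ a0 * t ^ b + b * a1 * realBeta b (1 + ω - ε) * t ^ (ω - ε + b)
        + b * c * realBeta b (1 + ω) * t ^ (ω + b) := by
  rcases ht.eq_or_lt with rfl | htpos
  · simp only [Set.Icc_self, MeasureTheory.integral_singleton, smul_eq_mul, sub_zero,
      Real.zero_rpow hb.ne',
      Real.zero_rpow (show (ω - ε + b) ≠ 0 by intro h; nlinarith),
      Real.zero_rpow (show (ω + b) ≠ 0 by intro h; nlinarith),
      mul_zero, add_zero, zero_add, le_refl]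
  set μ := V.measure.restrict (Icc 0 t) with hμ
  -- nonnegativity of f := fun y => t - y a.e.
  have f_nn : 0 ≤ᵐ[μ] fun y => t - y :=
    (ae_restrict_iff' measurableSet_Icc).2 (ae_of_all _ fun y hy => sub_nonneg.2 hy.2)
  have f_mble : AEMeasurable (fun y => t - y) μ :=
    (measurable_const.sub measurable_id).aemeasurable
  have g_intble : ∀ r > (0:ℝ), IntervalIntegrable (fun s => b * s ^ (b - 1)) volume 0 r :=
    fun r _ => (intervalIntegral.intervalIntegrable_rpow' (by linarith)).const_mul b
  have g_nn : ∀ᵐ s ∂(volume.restrict (Ioi (0:ℝ))), 0 ≤ b * s ^ (b - 1) := by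
    rw [ae_restrict_iff' measurableSet_Ioi]
    exact ae_of_all _ fun s hs => mul_nonneg hb.le (Real.rpow_nonneg (le_of_lt hs) _)
  have layer := lintegral_comp_eq_lintegral_meas_lt_mul μ f_nn f_mble g_intble g_nn
  -- rewrite LHS of layer cake
  have lhs_eq : ∫⁻ y, ENNReal.ofReal (∫ s in (0:ℝ)..(t - y), b * s ^ (b - 1)) ∂μ
      = ∫⁻ y, ENNReal.ofReal ((t - y) ^ b) ∂μ := by
    refine lintegral_congr_ae ((ae_restrict_iff' measurableSet_Icc).2
      (ae_of_all _ fun y hy => ?_))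
    exact congrArg ENNReal.ofReal (rpow_prim hb (sub_nonneg.2 hy.2))
  -- the tail set
  have set_eq : ∀ s : ℝ, {a : ℝ | s < t - a} = Iio (t - s) := by
    intro s; ext y; simp only [mem_setOf_eq, mem_Iio]; constructor <;> intro h <;> linarith
  -- split the tail integral
  have split : (∫⁻ s in Ioi (0:ℝ), μ {a | s < t - a} * ENNReal.ofReal (b * s ^ (b - 1)))
      = ∫⁻ s in Ioc (0:ℝ) t, μ {a | s < t - a} * ENNReal.ofReal (b * s ^ (b - 1)) := by
    rw [← Ioc_union_Ioi_eq_Ioi htpos.le,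
      lintegral_union measurableSet_Ioi (Ioc_disjoint_Ioi le_rfl)]
    have hzero : ∫⁻ s in Ioi t, μ {a | s < t - a} * ENNReal.ofReal (b * s ^ (b - 1)) = 0 := by
      rw [setLIntegral_congr_fun measurableSet_Ioi
        (fun s (hs : t < s) => ?_), lintegral_zero]
      have hset : Iio (t - s) ∩ Icc 0 t = ∅ := by
        rw [eq_empty_iff_forall_notMem]
        rintro x ⟨hx1, hx2, -⟩
        rw [mem_Iio] at hx1
        linarith
      rw [set_eq, hμ, Measure.restrict_apply measurableSet_Iio, hset, measure_empty, zero_mul]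
    rw [hzero, add_zero]
  set A : ℝ → ℝ := fun s => a0 + a1 * (t - s) ^ (ω - ε) + c * (t - s) ^ ω with hA
  set ψ : ℝ → ℝ := fun s => A s * (b * s ^ (b - 1)) with hψ
  have hA_nonneg : ∀ s ∈ Ioc (0:ℝ) t, 0 ≤ A s := fun s hs => by
    have h1 : (0:ℝ) ≤ t - s := by linarith [hs.2]
    have := Real.rpow_nonneg h1 (ω - ε)
    have := Real.rpow_nonneg h1 ω
    rw [hA]; dsimp only; nlinarith
  have hψ_nonneg : ∀ s ∈ Ioc (0:ℝ) t, 0 ≤ ψ s := fun s hs =>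
    mul_nonneg (hA_nonneg s hs) (mul_nonneg hb.le (Real.rpow_nonneg hs.1.le _))
  -- pointwise bound on the measure of the tail set
  have bound1 : ∀ s ∈ Ioc (0:ℝ) t, μ {a | s < t - a} ≤ ENNReal.ofReal (A s) := by
    intro s hs
    rw [set_eq, hμ, Measure.restrict_apply measurableSet_Iio]
    calc V.measure (Iio (t - s) ∩ Icc 0 t)
        ≤ V.measure (Ioc (-1) (t - s)) := by
          refine measure_mono fun x hx => ⟨by linarith [hx.2.1], hx.1.le⟩
      _ = ENNReal.ofReal (V (t - s) - V (-1)) := V.measure_Ioc _ _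
      _ = ENNReal.ofReal (V (t - s)) := by rw [hV0 (-1) (by norm_num), sub_zero]
      _ ≤ ENNReal.ofReal (A s) := by
          refine ENNReal.ofReal_le_ofReal ?_
          have := hVup (t - s) (by linarith [hs.2])
          rw [hA]; dsimp only; linarith
  have step2 : (∫⁻ s in Ioc (0:ℝ) t, μ {a | s < t - a} * ENNReal.ofReal (b * s ^ (b - 1)))
      ≤ ∫⁻ s in Ioc (0:ℝ) t, ENNReal.ofReal (ψ s) := by
    refine lintegral_mono_ae ((ae_restrict_iff' measurableSet_Ioc).2
      (ae_of_all _ fun s hs => ?_))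
    calc μ {a | s < t - a} * ENNReal.ofReal (b * s ^ (b - 1))
        ≤ ENNReal.ofReal (A s) * ENNReal.ofReal (b * s ^ (b - 1)) :=
          mul_le_mul_left (bound1 s hs) _
      _ = ENNReal.ofReal (ψ s) := by
          rw [hψ]; dsimp only; rw [ENNReal.ofReal_mul (hA_nonneg s hs)]
  -- integrability of ψ
  have meas_ψ : Measurable ψ := by
    have m1 : Measurable fun s : ℝ => (t - s) ^ (ω - ε) :=
      (measurable_const.sub measurable_id).pow_const _
    have m2 : Measurable fun s : ℝ => (t - s) ^ ω :=
      (measurable_const.sub measurable_id).pow_const _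
    exact ((measurable_const.add (m1.const_mul a1)).add (m2.const_mul c)).mul
      ((measurable_id.pow_const _).const_mul b)
  have hg : IntegrableOn (fun s : ℝ => (a0 + a1 * t ^ (ω - ε) + c * t ^ ω) * (b * s ^ (b - 1)))
      (Ioc 0 t) volume :=
    (((intervalIntegral.intervalIntegrable_rpow' (by linarith : (-1:ℝ) < b - 1)).const_mul
      b).const_mul _).1
  have hint : Integrable ψ (volume.restrict (Ioc 0 t)) := by
    refine hg.mono' meas_ψ.aestronglyMeasurable
      ((ae_restrict_iff' measurableSet_Ioc).2 (ae_of_all _ fun s hs => ?_))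
    rw [Real.norm_eq_abs, abs_of_nonneg (hψ_nonneg s hs)]
    have h1 : (0:ℝ) ≤ t - s := by linarith [hs.2]
    have e1 : (t - s) ^ (ω - ε) ≤ t ^ (ω - ε) :=
      Real.rpow_le_rpow h1 (by linarith [hs.1]) (by linarith)
    have e2 : (t - s) ^ ω ≤ t ^ ω := Real.rpow_le_rpow h1 (by linarith [hs.1]) hω.le
    have hAle : A s ≤ a0 + a1 * t ^ (ω - ε) + c * t ^ ω := by
      rw [hA]; dsimp only; nlinarith
    have hsb : 0 ≤ b * s ^ (b - 1) := mul_nonneg hb.le (Real.rpow_nonneg hs.1.le _)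
    exact mul_le_mul_of_nonneg_right hAle hsb
  have step3 : (∫⁻ s in Ioc (0:ℝ) t, ENNReal.ofReal (ψ s))
      = ENNReal.ofReal (∫ s in Ioc (0:ℝ) t, ψ s) :=
    (ofReal_integral_eq_lintegral_ofReal hint
      ((ae_restrict_iff' measurableSet_Ioc).2 (ae_of_all _ hψ_nonneg))).symm
  -- compute the integral of ψ
  have key_int : ∀ α : ℝ, 0 ≤ α →
      IntervalIntegrable (fun s => s ^ (b - 1) * (t - s) ^ α) volume 0 t := by
    intro α hα
    rw [intervalIntegrable_iff_integrableOn_Ioc_of_le htpos.le]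
    have hg' : IntegrableOn (fun s : ℝ => t ^ α * s ^ (b - 1)) (Ioc 0 t) volume :=
      ((intervalIntegral.intervalIntegrable_rpow' (by linarith : (-1:ℝ) < b - 1)).const_mul
        _).1
    refine hg'.mono' (((measurable_id.pow_const _).mul
      ((measurable_const.sub measurable_id).pow_const _)).aestronglyMeasurable)
      ((ae_restrict_iff' measurableSet_Ioc).2 (ae_of_all _ fun s hs => ?_))
    have h1 : (0:ℝ) ≤ t - s := by linarith [hs.2]
    have hsb : (0:ℝ) ≤ s ^ (b - 1) := Real.rpow_nonneg hs.1.le _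
    rw [Real.norm_eq_abs, abs_of_nonneg (mul_nonneg hsb (Real.rpow_nonneg h1 _))]
    calc s ^ (b - 1) * (t - s) ^ α ≤ s ^ (b - 1) * t ^ α :=
          mul_le_mul_of_nonneg_left (Real.rpow_le_rpow h1 (by linarith [hs.1]) hα) hsb
      _ = t ^ α * s ^ (b - 1) := mul_comm _ _
  have i1 : IntervalIntegrable (fun s : ℝ => a0 * (b * s ^ (b - 1))) volume 0 t :=
    ((intervalIntegral.intervalIntegrable_rpow' (by linarith : (-1:ℝ) < b - 1)).const_mul
      b).const_mul a0
  have i2 : IntervalIntegrable (fun s : ℝ => a1 * b * (s ^ (b - 1) * (t - s) ^ (ω - ε)))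
      volume 0 t := (key_int _ (by linarith)).const_mul _
  have i3 : IntervalIntegrable (fun s : ℝ => c * b * (s ^ (b - 1) * (t - s) ^ ω))
      volume 0 t := (key_int _ hω.le).const_mul _
  have val : (∫ s in Ioc (0:ℝ) t, ψ s)
      = a0 * t ^ b + b * a1 * realBeta b (1 + ω - ε) * t ^ (ω - ε + b)
        + b * c * realBeta b (1 + ω) * t ^ (ω + b) := by
    rw [← intervalIntegral.integral_of_le htpos.le]
    have congr1 : (∫ s in (0:ℝ)..t, ψ s)
        = ∫ s in (0:ℝ)..t, (a0 * (b * s ^ (b - 1))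
            + a1 * b * (s ^ (b - 1) * (t - s) ^ (ω - ε))
            + c * b * (s ^ (b - 1) * (t - s) ^ ω)) := by
      refine intervalIntegral.integral_congr fun s _ => ?_
      rw [hψ, hA]; dsimp only; ring
    rw [congr1, intervalIntegral.integral_add (i1.add i2) i3,
      intervalIntegral.integral_add i1 i2,
      intervalIntegral.integral_const_mul a0,
      intervalIntegral.integral_const_mul (a1 * b),
      intervalIntegral.integral_const_mul (c * b),
      rpow_prim hb htpos.le,
      realBeta_scaled hb (by linarith : (0:ℝ) ≤ ω - ε) htpos,
      realBeta_scaled hb hω.le htpos,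
      show ω - ε + 1 = 1 + ω - ε by ring, show ω + 1 = 1 + ω by ring,
      show b + (ω - ε) = ω - ε + b by ring, show b + ω = ω + b by ring]
    ring
  -- final nonnegativity of the right-hand side
  have beta_pos : ∀ {x y : ℝ}, 0 < x → 0 < y → 0 < realBeta x y := fun hx hy =>
    div_pos (mul_pos (Real.Gamma_pos_of_pos hx) (Real.Gamma_pos_of_pos hy))
      (Real.Gamma_pos_of_pos (by linarith))
  have R_nonneg : 0 ≤ a0 * t ^ b + b * a1 * realBeta b (1 + ω - ε) * t ^ (ω - ε + b)
      + b * c * realBeta b (1 + ω) * t ^ (ω + b) := by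
    have h1 := beta_pos hb (show (0:ℝ) < 1 + ω - ε by linarith)
    have h2 := beta_pos hb (show (0:ℝ) < 1 + ω by linarith)
    exact add_nonneg (add_nonneg (mul_nonneg ha0.le (Real.rpow_nonneg ht b))
      (mul_nonneg (mul_nonneg (mul_nonneg hb.le ha1.le) h1.le) (Real.rpow_nonneg ht _)))
      (mul_nonneg (mul_nonneg (mul_nonneg hb.le hc.le) h2.le) (Real.rpow_nonneg ht _))
  -- assemble
  have f_nn' : 0 ≤ᵐ[μ] fun y => (t - y) ^ b :=
    (ae_restrict_iff' measurableSet_Icc).2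
      (ae_of_all _ fun y hy => Real.rpow_nonneg (sub_nonneg.2 hy.2) _)
  have meas_f : AEStronglyMeasurable (fun y => (t - y) ^ b) μ :=
    ((measurable_const.sub measurable_id).pow_const b).aestronglyMeasurable
  rw [show (∫ y in Icc (0:ℝ) t, (t - y) ^ b ∂V.measure) = ∫ y, (t - y) ^ b ∂μ from rfl,
    integral_eq_lintegral_of_nonneg_ae f_nn' meas_f]
  have chain : (∫⁻ y, ENNReal.ofReal ((t - y) ^ b) ∂μ)
      ≤ ENNReal.ofReal (a0 * t ^ b + b * a1 * realBeta b (1 + ω - ε) * t ^ (ω - ε + b)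
        + b * c * realBeta b (1 + ω) * t ^ (ω + b)) := by
    rw [← lhs_eq, layer, split, ← val, ← step3]
    exact step2
  calc (∫⁻ y, ENNReal.ofReal ((t - y) ^ b) ∂μ).toReal
      ≤ (ENNReal.ofReal (a0 * t ^ b + b * a1 * realBeta b (1 + ω - ε) * t ^ (ω - ε + b)
          + b * c * realBeta b (1 + ω) * t ^ (ω + b))).toReal :=
        ENNReal.toReal_mono ENNReal.ofReal_ne_top chain
    _ = _ := ENNReal.toReal_ofReal R_nonneg
end
end

section
/- Let $(\Omega,\mathcal{F},\mathbb{P})$ be a probability space and let $N:\Omega\times[0,\infty)\to[0,\infty)$ be such that $t\mapsto N(\omega,t)$ is nondecreasing for every $\omega$, each $N(\cdot,t)$ is measurable and square-integrable, and set $V(t):=\mathbb{E}\,N(t)$. Assume: (i) $b_0+b_1 t^{\omega-\varepsilon_1}\le V(t)-c\,t^{\omega}\le a_0+a_1 t^{\omega-\varepsilon_2}$ for all $t\ge 0$, where $c,\omega,a_0,a_1>0$, $0<\varepsilon_1,\varepsilon_2\le\omega$, $b_0,b_1\in\mathbb{R}$; (ii) there exist $C>0$ and $\gamma\in(0,\omega)$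 with $\mathrm{Var}\,N(t)\le C\,t^{2\gamma}$ for all $t\ge 1$. Then $\lim_{t\to\infty} N(t)/V(t)=1$ almost surely. -/
open MeasureTheory ProbabilityTheory Set Filter

noncomputable section

theorem strong_law_for_counting_function
    {Ω : Type*} [MeasurableSpace Ω] (P : Measure Ω) [IsProbabilityMeasure P]
    (N : Ω → ℝ → ℝ)
    (hnonneg : ∀ ω t, 0 ≤ t → 0 ≤ N ω t)
    (hmono : ∀ ω, MonotoneOn (N ω) (Set.Ici 0))
    (hmeas : ∀ t, 0 ≤ t → Measurable (fun ω => N ω t))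
    (hL2 : ∀ t, 0 ≤ t → MemLp (fun ω => N ω t) 2 P)
    (c w a0 a1 ε1 ε2 b0 b1 C γ : ℝ)
    (hc : 0 < c) (hw : 0 < w) (ha0 : 0 < a0) (ha1 : 0 < a1)
    (hε1 : 0 < ε1) (hε1' : ε1 ≤ w) (hε2 : 0 < ε2) (hε2' : ε2 ≤ w)
    (hVlow : ∀ t, 0 ≤ t →
      b0 + b1 * t ^ (w - ε1) ≤ (∫ ω, N ω t ∂P) - c * t ^ w)
    (hVup : ∀ t, 0 ≤ t →
      (∫ ω, N ω t ∂P) - c * t ^ w ≤ a0 + a1 * t ^ (w - ε2))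
    (hC : 0 < C) (hγ : 0 < γ) (hγw : γ < w)
    (hvar : ∀ t, 1 ≤ t → variance (fun ω => N ω t) P ≤ C * t ^ (2 * γ)) :
    ∀ᵐ ω ∂P, Tendsto (fun t => N ω t / (∫ ω', N ω' t ∂P)) atTop (nhds 1) := by
  set V : ℝ → ℝ := fun t => ∫ ω, N ω t ∂P with hVdef
  have hwγ : (0:ℝ) < w - γ := by linarith
  set β : ℝ := (w - γ)⁻¹ with hβdef
  have hβ : 0 < β := inv_pos.mpr hwγ
  set u : ℕ → ℝ := fun k => ((k : ℝ) + 1) ^ β with hudef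
  have hu1 : ∀ k, 1 ≤ u k := fun k =>
    Real.one_le_rpow (by push_cast; linarith [Nat.cast_nonneg (α := ℝ) k]) hβ.le
  have hu0 : ∀ k, 0 < u k := fun k => lt_of_lt_of_le one_pos (hu1 k)
  have hcw : ∀ t : ℝ, 0 < t → 0 < c * t ^ w := fun t ht => by positivity
  -- auxiliary deterministic limit
  have haux : ∀ A B δ : ℝ, 0 < δ →
      Tendsto (fun t : ℝ => (A + B * t ^ (w - δ)) / (c * t ^ w)) atTop (nhds 0) := by
    intro A B δ hδ
    have h1 : Tendsto (fun t : ℝ => (A / c) * t ^ (-w) + (B / c) * t ^ (-δ))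
        atTop (nhds 0) := by
      have hA := (tendsto_rpow_neg_atTop hw).const_mul (A / c)
      have hB := (tendsto_rpow_neg_atTop hδ).const_mul (B / c)
      simpa using hA.add hB
    refine h1.congr' ?_
    filter_upwards [eventually_gt_atTop 0] with t ht
    have htw : t ^ w ≠ 0 := (Real.rpow_pos_of_pos ht w).ne'
    rw [Real.rpow_neg ht.le, Real.rpow_neg ht.le]
    have e1 : (t ^ δ)⁻¹ = t ^ (w - δ) / t ^ w := by
      rw [← Real.rpow_sub ht]
      rw [show w - δ - w = -δ by ring, Real.rpow_neg ht.le]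
    rw [e1]
    field_simp
  -- deterministic ratio limit
  have hVr : Tendsto (fun t : ℝ => V t / (c * t ^ w)) atTop (nhds 1) := by
    have hl := (haux b0 b1 ε1 hε1).const_add 1
    have hup := (haux a0 a1 ε2 hε2).const_add 1
    rw [show (1:ℝ) = 1 + 0 by ring]
    refine tendsto_of_tendsto_of_tendsto_of_le_of_le' hl hup ?_ ?_
    · filter_upwards [eventually_gt_atTop 0] with t ht
      have hpos := hcw t ht
      have h := hVlow t ht.le
      have e : V t / (c * t ^ w) = 1 + (V t - c * t ^ w) / (c * t ^ w) := by
        field_simp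
        ring
      rw [e]
      have : (b0 + b1 * t ^ (w - ε1)) / (c * t ^ w)
          ≤ (V t - c * t ^ w) / (c * t ^ w) := by gcongr
      linarith
    · filter_upwards [eventually_gt_atTop 0] with t ht
      have hpos := hcw t ht
      have h := hVup t ht.le
      have e : V t / (c * t ^ w) = 1 + (V t - c * t ^ w) / (c * t ^ w) := by
        field_simp
        ring
      rw [e]
      have : (V t - c * t ^ w) / (c * t ^ w)
          ≤ (a0 + a1 * t ^ (w - ε2)) / (c * t ^ w) := by gcongr
      linarith
  -- Borel-Cantelli step
  have key : ∀ m : ℕ, ∀ᵐ ω ∂P, ∀ᶠ k in atTop,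
      |N ω (u k) - V (u k)| < (1 / ((m : ℝ) + 1)) * (c * u k ^ w) := by
    intro m
    set εm : ℝ := 1 / ((m : ℝ) + 1) with hεmdef
    have hεm : 0 < εm := by positivity
    set s : ℕ → Set Ω :=
      fun k => {ω | εm * (c * u k ^ w) ≤ |N ω (u k) - V (u k)|} with hsdef
    have hsum : ∑' k, P (s k) ≠ ⊤ := by
      have hb : ∀ k, P (s k) ≤
          ENNReal.ofReal ((C / (εm ^ 2 * c ^ 2)) * ((k : ℝ) + 1) ^ (-2 : ℝ)) := by
        intro k
        have hpos : 0 < εm * (c * u k ^ w) := by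
          have := hcw (u k) (hu0 k); positivity
        have hcheb := meas_ge_le_variance_div_sq (hL2 (u k) (hu0 k).le) hpos
        have heq : {ω | εm * (c * u k ^ w) ≤ |N ω (u k) - ∫ x, N x (u k) ∂P|}
            = s k := by
          rw [hsdef]
        rw [heq] at hcheb
        refine hcheb.trans (ENNReal.ofReal_le_ofReal ?_)
        have hv := hvar (u k) (hu1 k)
        have huk := hu0 k
        have h2 : (u k ^ w) ^ 2 = u k ^ (2 * w) := by
          rw [← Real.rpow_natCast (u k ^ w) 2, ← Real.rpow_mul huk.le]
          norm_num [mul_comm]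
        have hratio : u k ^ (2 * γ) / u k ^ (2 * w) = ((k : ℝ) + 1) ^ (-2 : ℝ) := by
          rw [← Real.rpow_sub huk]
          rw [hudef]
          simp only
          rw [← Real.rpow_mul (by positivity : (0:ℝ) ≤ (k : ℝ) + 1)]
          congr 1
          rw [hβdef]
          field_simp
          ring
        have hden : (εm * (c * u k ^ w)) ^ 2 = εm ^ 2 * c ^ 2 * u k ^ (2 * w) := by
          rw [show (εm * (c * u k ^ w)) ^ 2 = εm ^ 2 * c ^ 2 * (u k ^ w) ^ 2 by ring, h2]
        calc variance (fun ω => N ω (u k)) P / (εm * (c * u k ^ w)) ^ 2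
            ≤ (C * u k ^ (2 * γ)) / (εm * (c * u k ^ w)) ^ 2 := by gcongr
          _ = (C / (εm ^ 2 * c ^ 2)) * (u k ^ (2 * γ) / u k ^ (2 * w)) := by
              rw [hden]
              have h1 : u k ^ (2 * w) ≠ 0 := (Real.rpow_pos_of_pos huk _).ne'
              have h2' : u k ^ (2 * γ) ≠ 0 := (Real.rpow_pos_of_pos huk _).ne'
              field_simp
          _ = (C / (εm ^ 2 * c ^ 2)) * ((k : ℝ) + 1) ^ (-2 : ℝ) := by rw [hratio]
      have hsummable : Summable
          (fun k : ℕ => (C / (εm ^ 2 * c ^ 2)) * ((k : ℝ) + 1) ^ (-2 : ℝ)) := by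
        apply Summable.mul_left
        have h0 : Summable (fun n : ℕ => 1 / (n : ℝ) ^ (2 : ℝ)) :=
          Real.summable_one_div_nat_rpow.mpr one_lt_two
        have h1 := (summable_nat_add_iff 1).mpr h0
        refine h1.congr fun k => ?_
        push_cast
        rw [Real.rpow_neg (by positivity : (0:ℝ) ≤ (k : ℝ) + 1), one_div]
      have hnn : ∀ k : ℕ, 0 ≤ (C / (εm ^ 2 * c ^ 2)) * ((k : ℝ) + 1) ^ (-2 : ℝ) := by
        intro k
        have : (0:ℝ) ≤ ((k : ℝ) + 1) ^ (-2 : ℝ) := Real.rpow_nonneg (by positivity) _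
        positivity
      refine ne_top_of_le_ne_top ?_ (ENNReal.tsum_le_tsum hb)
      rw [← ENNReal.ofReal_tsum_of_nonneg hnn hsummable]
      exact ENNReal.ofReal_ne_top
    filter_upwards [ae_eventually_notMem hsum] with ω hω
    filter_upwards [hω] with k hk
    rw [hsdef] at hk
    simpa using not_le.mp hk
  have hae := (ae_all_iff).mpr key
  filter_upwards [hae] with ω hω
  -- sequence limit
  have hu_top : Tendsto u atTop atTop := by
    have h1 : Tendsto (fun k : ℕ => (k : ℝ) + 1) atTop atTop :=
      tendsto_atTop_add_const_right _ 1 tendsto_natCast_atTop_atTop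
    exact (tendsto_rpow_atTop hβ).comp h1
  have hL : Tendsto (fun k => N ω (u k) / (c * u k ^ w)) atTop (nhds 1) := by
    have hdiff : Tendsto (fun k => (N ω (u k) - V (u k)) / (c * u k ^ w))
        atTop (nhds 0) := by
      rw [NormedAddCommGroup.tendsto_nhds_zero]
      intro ε hε
      obtain ⟨m, hm⟩ := exists_nat_one_div_lt hε
      filter_upwards [hω m] with k hk
      have hpos := hcw (u k) (hu0 k)
      rw [Real.norm_eq_abs, abs_div, abs_of_pos hpos, div_lt_iff₀ hpos]
      exact lt_of_lt_of_le hk (mul_le_mul_of_nonneg_right hm.le hpos.le)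
    have hVk : Tendsto (fun k => V (u k) / (c * u k ^ w)) atTop (nhds 1) :=
      hVr.comp hu_top
    have := hdiff.add hVk
    rw [zero_add] at this
    refine this.congr fun k => ?_
    rw [← add_div, sub_add_cancel]
  -- ratio of consecutive mesh points
  have hρ : Tendsto (fun k : ℕ => u (k + 1) ^ w / u k ^ w) atTop (nhds 1) := by
    have h1 : ∀ k : ℕ, u (k + 1) ^ w / u k ^ w
        = (((k : ℝ) + 2) / ((k : ℝ) + 1)) ^ (β * w) := by
      intro k
      rw [hudef]
      simp only
      push_cast
      rw [Real.div_rpow (by positivity) (by positivity),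
        ← Real.rpow_mul (by positivity : (0:ℝ) ≤ (k : ℝ) + 1 + 1),
        ← Real.rpow_mul (by positivity : (0:ℝ) ≤ (k : ℝ) + 1)]
      norm_num
      ring_nf
    have h2 : Tendsto (fun k : ℕ => ((k : ℝ) + 2) / ((k : ℝ) + 1)) atTop (nhds 1) := by
      have e : (fun k : ℕ => ((k : ℝ) + 2) / ((k : ℝ) + 1))
          = fun k : ℕ => 1 + 1 / ((k : ℝ) + 1) := by
        funext k
        have : ((k : ℝ) + 1) ≠ 0 := by positivity
        field_simp
        ring
      rw [e]
      simpa using (tendsto_one_div_add_atTop_nhds_zero_nat (𝕜 := ℝ)).const_add 1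
    have h3 : Tendsto (fun k : ℕ => (((k : ℝ) + 2) / ((k : ℝ) + 1)) ^ (β * w))
        atTop (nhds ((1 : ℝ) ^ (β * w))) :=
      h2.rpow tendsto_const_nhds (Or.inl one_ne_zero)
    rw [Real.one_rpow] at h3
    exact h3.congr fun k => (h1 k).symm
  have hρ' : Tendsto (fun k : ℕ => u k ^ w / u (k + 1) ^ w) atTop (nhds 1) := by
    have := hρ.inv₀ one_ne_zero
    rw [inv_one] at this
    refine this.congr fun k => ?_
    rw [inv_div]
  have hS : Tendsto (fun k : ℕ => N ω (u (k + 1)) / (c * u k ^ w)) atTop (nhds 1) := by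
    have hcomp : Tendsto (fun k : ℕ => N ω (u (k + 1)) / (c * u (k + 1) ^ w))
        atTop (nhds 1) := hL.comp (tendsto_add_atTop_nat 1)
    have := hcomp.mul hρ
    rw [mul_one] at this
    refine this.congr fun k => ?_
    have h1 : u (k + 1) ^ w ≠ 0 := (Real.rpow_pos_of_pos (hu0 (k + 1)) w).ne'
    have h2 : u k ^ w ≠ 0 := (Real.rpow_pos_of_pos (hu0 k) w).ne'
    field_simp
  have hS' : Tendsto (fun k : ℕ => N ω (u k) / (c * u (k + 1) ^ w)) atTop (nhds 1) := by
    have := hL.mul hρ'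
    rw [mul_one] at this
    refine this.congr fun k => ?_
    have h1 : u (k + 1) ^ w ≠ 0 := (Real.rpow_pos_of_pos (hu0 (k + 1)) w).ne'
    have h2 : u k ^ w ≠ 0 := (Real.rpow_pos_of_pos (hu0 k) w).ne'
    field_simp
  -- bridging to continuous time
  have hK : Tendsto (fun t : ℝ => ⌊t ^ β⁻¹⌋₊) atTop atTop :=
    tendsto_nat_floor_atTop.comp (tendsto_rpow_atTop (by positivity))
  have hK1 : Tendsto (fun t : ℝ => ⌊t ^ β⁻¹⌋₊ - 1) atTop atTop :=
    (tendsto_sub_atTop_nat 1).comp hK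
  have hmain : Tendsto (fun t => N ω t / (c * t ^ w)) atTop (nhds 1) := by
    refine tendsto_of_tendsto_of_tendsto_of_le_of_le'
      (hS'.comp hK1) (hS.comp hK1) ?_ ?_
    · filter_upwards [eventually_ge_atTop 1] with t ht
      have ht0 : (0:ℝ) < t := lt_of_lt_of_le one_pos ht
      have hfl1 : 1 ≤ ⌊t ^ β⁻¹⌋₊ := by
        apply Nat.le_floor
        exact_mod_cast Real.one_le_rpow ht (by positivity)
      set k := ⌊t ^ β⁻¹⌋₊ with hkdef
      have hkk : (k - 1) + 1 = k := Nat.sub_add_cancel hfl1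
      have hcast : ((k - 1 : ℕ) : ℝ) + 1 = (k : ℝ) := by
        rw [Nat.cast_sub hfl1]; push_cast; ring
      have hlowpt : u (k - 1) ≤ t := by
        show (((k - 1 : ℕ) : ℝ) + 1) ^ β ≤ t
        rw [hcast]
        have h1 : (k : ℝ) ≤ t ^ β⁻¹ := Nat.floor_le (by positivity)
        calc (k : ℝ) ^ β ≤ (t ^ β⁻¹) ^ β :=
              Real.rpow_le_rpow (Nat.cast_nonneg k) h1 hβ.le
          _ = t := by
              rw [← Real.rpow_mul ht0.le, inv_mul_cancel₀ hβ.ne', Real.rpow_one]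
      have hhipt : t ≤ u k := by
        show t ≤ ((k : ℝ) + 1) ^ β
        have h2 : t ^ β⁻¹ ≤ (k : ℝ) + 1 := (Nat.lt_floor_add_one _).le
        calc t = (t ^ β⁻¹) ^ β := by
              rw [← Real.rpow_mul ht0.le, inv_mul_cancel₀ hβ.ne', Real.rpow_one]
          _ ≤ ((k : ℝ) + 1) ^ β :=
              Real.rpow_le_rpow (Real.rpow_nonneg ht0.le _) h2 hβ.le
      show N ω (u (k - 1)) / (c * u ((k - 1) + 1) ^ w) ≤ N ω t / (c * t ^ w)
      rw [hkk]
      refine div_le_div₀ (hnonneg ω t ht0.le) ?_ (hcw t ht0) ?_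
      · exact hmono ω (mem_Ici.mpr (hu0 (k - 1)).le) (mem_Ici.mpr ht0.le) hlowpt
      · exact mul_le_mul_of_nonneg_left
          (Real.rpow_le_rpow ht0.le hhipt hw.le) hc.le
    · filter_upwards [eventually_ge_atTop 1] with t ht
      have ht0 : (0:ℝ) < t := lt_of_lt_of_le one_pos ht
      have hfl1 : 1 ≤ ⌊t ^ β⁻¹⌋₊ := by
        apply Nat.le_floor
        exact_mod_cast Real.one_le_rpow ht (by positivity)
      set k := ⌊t ^ β⁻¹⌋₊ with hkdef
      have hkk : (k - 1) + 1 = k := Nat.sub_add_cancel hfl1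
      have hcast : ((k - 1 : ℕ) : ℝ) + 1 = (k : ℝ) := by
        rw [Nat.cast_sub hfl1]; push_cast; ring
      have hlowpt : u (k - 1) ≤ t := by
        show (((k - 1 : ℕ) : ℝ) + 1) ^ β ≤ t
        rw [hcast]
        have h1 : (k : ℝ) ≤ t ^ β⁻¹ := Nat.floor_le (by positivity)
        calc (k : ℝ) ^ β ≤ (t ^ β⁻¹) ^ β :=
              Real.rpow_le_rpow (Nat.cast_nonneg k) h1 hβ.le
          _ = t := by
              rw [← Real.rpow_mul ht0.le, inv_mul_cancel₀ hβ.ne', Real.rpow_one]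
      have hhipt : t ≤ u k := by
        show t ≤ ((k : ℝ) + 1) ^ β
        have h2 : t ^ β⁻¹ ≤ (k : ℝ) + 1 := (Nat.lt_floor_add_one _).le
        calc t = (t ^ β⁻¹) ^ β := by
              rw [← Real.rpow_mul ht0.le, inv_mul_cancel₀ hβ.ne', Real.rpow_one]
          _ ≤ ((k : ℝ) + 1) ^ β :=
              Real.rpow_le_rpow (Real.rpow_nonneg ht0.le _) h2 hβ.le
      show N ω t / (c * t ^ w) ≤ N ω (u ((k - 1) + 1)) / (c * u (k - 1) ^ w)
      rw [hkk]
      refine div_le_div₀ (hnonneg ω (u k) (hu0 k).le) ?_ (hcw (u (k - 1)) (hu0 _)) ?_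
      · exact hmono ω (mem_Ici.mpr ht0.le) (mem_Ici.mpr (hu0 k).le) hhipt
      · exact mul_le_mul_of_nonneg_left
          (Real.rpow_le_rpow (hu0 (k - 1)).le hlowpt hw.le) hc.le
  -- conclusion
  have hVpos : ∀ᶠ t : ℝ in atTop, 0 < V t := by
    filter_upwards [hVr.eventually (eventually_gt_nhds (by norm_num : (1:ℝ) / 2 < 1)),
      eventually_gt_atTop 0] with t h1 h2
    have hpos := hcw t h2
    have h3 := (lt_div_iff₀ hpos).mp h1
    nlinarith
  have hfin := hmain.div hVr one_ne_zero
  rw [div_one] at hfin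
  refine hfin.congr' ?_
  filter_upwards [eventually_gt_atTop 0, hVpos] with t ht hv
  have hct : c * t ^ w ≠ 0 := (hcw t ht).ne'
  simp only [Pi.div_apply]
  rw [div_div_div_cancel_right₀ hct]
end
end

section
/- Let $A,B:\mathbb{R}\to[0,\infty)$ be nondecreasing right-continuous functions with $A(t)=B(t)=0$ for $t<0$, and let $h:\mathbb{R}\to[0,\infty)$ be nondecreasing and right-continuous with $h(t)=0$ for $t<0$. Then for every $s\ge 0$: $\Big|\int_{[0,s]}h(s-x)\,\mathrm{d}A(x)-\int_{[0,s]}h(s-x)\,\mathrm{d}B(x)\Big| \le h(s)\cdot\sup_{y\in[0,s]}|A(y)-B(y)|$, where the integrals are against the Lebesgue–Stieltjes measures of $A$ and $B$ (which give the point $0$ masses $A(0)$ and $B(0)$ respectively). -/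
open MeasureTheory Set ENNReal

noncomputable section

open Filter Topology in
lemma stj_leftLim_zero (F : StieltjesFunction ℝ) (hF0 : ∀ t < 0, F t = 0) :
    Function.leftLim F 0 = 0 := by
  apply leftLim_eq_of_tendsto (h := nhdsLT_neBot (0:ℝ))
  apply Tendsto.congr' _ tendsto_const_nhds
  filter_upwards [self_mem_nhdsWithin] with t ht
  exact (hF0 t ht).symm

lemma stj_measure_Icc (F : StieltjesFunction ℝ) (hF0 : ∀ t < 0, F t = 0) (a : ℝ) :
    F.measure (Icc 0 a) = ENNReal.ofReal (F a) := by
  rw [StieltjesFunction.measure_Icc, stj_leftLim_zero F hF0, sub_zero]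

lemma conv_swap (F h : StieltjesFunction ℝ) (hF0 : ∀ t < 0, F t = 0)
    (hh0 : ∀ t < 0, h t = 0) (s : ℝ) (hs : 0 ≤ s) :
    ∫⁻ x in Icc (0:ℝ) s, ENNReal.ofReal (h (s - x)) ∂F.measure
      = ∫⁻ y in Icc (0:ℝ) s, ENNReal.ofReal (F (s - y)) ∂h.measure := by
  have hmeas : MeasurableSet {p : ℝ × ℝ | p.1 + p.2 ≤ s} :=
    (isClosed_le (by fun_prop) continuous_const).measurableSet
  have key : ∀ (x : ℝ), x ∈ Icc (0:ℝ) s →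
      ∀ (G : StieltjesFunction ℝ), (∀ t < 0, G t = 0) →
      ∫⁻ y in Icc (0:ℝ) s, {p : ℝ × ℝ | p.1 + p.2 ≤ s}.indicator 1 (x, y) ∂G.measure
        = ENNReal.ofReal (G (s - x)) := by
    intro x hx G hG0
    have : ∀ y : ℝ, {p : ℝ × ℝ | p.1 + p.2 ≤ s}.indicator (1 : ℝ × ℝ → ℝ≥0∞) (x, y)
        = ({y : ℝ | x + y ≤ s}).indicator (1 : ℝ → ℝ≥0∞) y := by
      intro y
      by_cases hy : x + y ≤ s <;> simp [indicator, hy]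
    simp only [this]
    rw [lintegral_indicator_one (measurableSet_le (by fun_prop) measurable_const)]
    · rw [Measure.restrict_apply (by exact measurableSet_le (by fun_prop) measurable_const)]
      have : {y : ℝ | x + y ≤ s} ∩ Icc 0 s = Icc 0 (s - x) := by
        ext y
        simp only [mem_inter_iff, mem_setOf_eq, mem_Icc]
        constructor
        · rintro ⟨h1, h2, h3⟩; exact ⟨h2, by linarith⟩
        · rintro ⟨h1, h2⟩; exact ⟨by linarith, h1, by linarith [hx.1]⟩
      rw [this, stj_measure_Icc G hG0]
  have hmeasf : Measurable ({p : ℝ × ℝ | p.1 + p.2 ≤ s}.indicator (1 : ℝ × ℝ → ℝ≥0∞)) :=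
    measurable_one.indicator hmeas
  calc ∫⁻ x in Icc (0:ℝ) s, ENNReal.ofReal (h (s - x)) ∂F.measure
      = ∫⁻ x in Icc (0:ℝ) s, ∫⁻ y in Icc (0:ℝ) s,
          {p : ℝ × ℝ | p.1 + p.2 ≤ s}.indicator (1 : ℝ × ℝ → ℝ≥0∞) (x, y)
          ∂h.measure ∂F.measure := by
        refine (setLIntegral_congr_fun_ae measurableSet_Icc (ae_of_all _ fun x hx => ?_)).symm
        exact key x hx h hh0
    _ = ∫⁻ y in Icc (0:ℝ) s, ∫⁻ x in Icc (0:ℝ) s,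
          {p : ℝ × ℝ | p.1 + p.2 ≤ s}.indicator (1 : ℝ × ℝ → ℝ≥0∞) (x, y)
          ∂F.measure ∂h.measure := by
        exact lintegral_lintegral_swap (by exact hmeasf.aemeasurable)
    _ = ∫⁻ y in Icc (0:ℝ) s, ENNReal.ofReal (F (s - y)) ∂h.measure := by
        refine setLIntegral_congr_fun_ae measurableSet_Icc (ae_of_all _ fun y hy => ?_)
        have hsymm : ∀ x : ℝ, {p : ℝ × ℝ | p.1 + p.2 ≤ s}.indicator (1 : ℝ × ℝ → ℝ≥0∞) (x, y)
            = {p : ℝ × ℝ | p.1 + p.2 ≤ s}.indicator (1 : ℝ × ℝ → ℝ≥0∞) (y, x) := by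
          intro x
          by_cases hxy : x + y ≤ s <;> simp [indicator, hxy, add_comm x y]
        simp only [hsymm]
        exact key y hy F hF0

theorem stieltjes_convolution_difference_bound
    (A B h : StieltjesFunction ℝ)
    (hA0 : ∀ t < 0, A t = 0) (hB0 : ∀ t < 0, B t = 0) (hh0 : ∀ t < 0, h t = 0)
    (hApos : ∀ t, 0 ≤ A t) (hBpos : ∀ t, 0 ≤ B t) (hhpos : ∀ t, 0 ≤ h t)
    (s : ℝ) (hs : 0 ≤ s) :
    |(∫ x in Set.Icc (0 : ℝ) s, h (s - x) ∂A.measure)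
        - ∫ x in Set.Icc (0 : ℝ) s, h (s - x) ∂B.measure|
      ≤ h s * ⨆ y : Set.Icc (0 : ℝ) s, |A y - B y| := by
  set M := ⨆ y : Set.Icc (0 : ℝ) s, |A y - B y| with hM
  have hbdd : BddAbove (range fun y : Set.Icc (0:ℝ) s => |A y - B y|) := by
    refine ⟨A s + B s, ?_⟩
    rintro _ ⟨⟨y, hy⟩, rfl⟩
    have h1 : A y ≤ A s := A.mono hy.2
    have h2 : B y ≤ B s := B.mono hy.2
    have := hApos y; have := hBpos y
    rw [abs_le]; constructor <;> simp only <;> nlinarith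
  have hMb : ∀ y ∈ Icc (0:ℝ) s, |A y - B y| ≤ M := fun y hy =>
    le_ciSup hbdd (⟨y, hy⟩ : Set.Icc (0:ℝ) s)
  have hmh : Measurable fun x : ℝ => h (s - x) :=
    h.mono.measurable.comp (measurable_const.sub measurable_id)
  have hmA : Measurable fun y : ℝ => A (s - y) :=
    A.mono.measurable.comp (measurable_const.sub measurable_id)
  have hmB : Measurable fun y : ℝ => B (s - y) :=
    B.mono.measurable.comp (measurable_const.sub measurable_id)
  have conv : ∀ (F : StieltjesFunction ℝ), (∀ t < 0, F t = 0) → (∀ t, 0 ≤ F t) →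
      Measurable (fun y : ℝ => F (s - y)) →
      ∫ x in Set.Icc (0:ℝ) s, h (s - x) ∂F.measure
        = ∫ y in Set.Icc (0:ℝ) s, F (s - y) ∂h.measure := by
    intro F hF0 hFpos hmF
    rw [integral_eq_lintegral_of_nonneg_ae (ae_of_all _ fun x => hhpos _)
        hmh.aestronglyMeasurable,
      integral_eq_lintegral_of_nonneg_ae (ae_of_all _ fun y => hFpos _)
        hmF.aestronglyMeasurable,
      conv_swap F h hF0 hh0 s hs]
  rw [conv A hA0 hApos hmA, conv B hB0 hBpos hmB]
  have hfin : IsFiniteMeasure (h.measure.restrict (Icc (0:ℝ) s)) := by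
    constructor
    rw [Measure.restrict_apply_univ, stj_measure_Icc h hh0]
    exact ENNReal.ofReal_lt_top
  have intA : Integrable (fun y : ℝ => A (s - y)) (h.measure.restrict (Icc (0:ℝ) s)) := by
    refine Integrable.mono' (integrable_const (A s)) hmA.aestronglyMeasurable ?_
    refine (ae_restrict_iff' measurableSet_Icc).2 (ae_of_all _ fun y hy => ?_)
    rw [Real.norm_eq_abs, abs_of_nonneg (hApos _)]
    exact A.mono (by linarith [hy.1])
  have intB : Integrable (fun y : ℝ => B (s - y)) (h.measure.restrict (Icc (0:ℝ) s)) := by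
    refine Integrable.mono' (integrable_const (B s)) hmB.aestronglyMeasurable ?_
    refine (ae_restrict_iff' measurableSet_Icc).2 (ae_of_all _ fun y hy => ?_)
    rw [Real.norm_eq_abs, abs_of_nonneg (hBpos _)]
    exact B.mono (by linarith [hy.1])
  rw [← integral_sub intA intB]
  have hbound : ∀ᵐ y ∂(h.measure.restrict (Icc (0:ℝ) s)), ‖A (s - y) - B (s - y)‖ ≤ M := by
    refine (ae_restrict_iff' measurableSet_Icc).2 (ae_of_all _ fun y hy => ?_)
    rw [Real.norm_eq_abs]
    exact hMb (s - y) ⟨by linarith [hy.2], by linarith [hy.1]⟩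
  have := norm_integral_le_of_norm_le_const hbound
  rw [Real.norm_eq_abs] at this
  calc |∫ y in Icc (0:ℝ) s, (A (s - y) - B (s - y)) ∂h.measure|
      ≤ M * ((h.measure.restrict (Icc (0:ℝ) s)) univ).toReal := this
    _ = h s * M := by
        rw [Measure.restrict_apply_univ, stj_measure_Icc h hh0,
          ENNReal.toReal_ofReal (hhpos s), mul_comm]
end
end
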